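/- arXiv:1105.2597 — 6 statements merged into one kernel-verified Lean document; each statement's English description precedes it below -/
import Mathlib

section
/- Let n ≥ 1 and let u be a tempered distribution on ℝⁿ that is supported in the single point set {0}. Then there exist N ∈ ℕ and real constants c_α, indexed by multi-indices α ∈ ℕⁿ with |α| ≤ N, such that u(φ) = Σ_{|α| ≤ N} c_α · (−1)^{|α|} (∂^α φ)(0) for every Schwartz function φ on ℝⁿ; that is, u = Σ_{|α| ≤ N} c_α δ^{(α)} is a finite linear combination of derivatives of the Dirac delta at the origin. -/
open MeasureTheory SchwartzMap

noncomputable section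

/-- `ℝⁿ` as a Euclidean space. -/
abbrev Euc (n : ℕ) : Type := EuclideanSpace ℝ (Fin n)

/-- A tempered distribution on a real normed space `V`: a continuous linear functional on
the Schwartz space `𝓢(V, ℝ)`. -/
abbrev TDist (V : Type) [NormedAddCommGroup V] [NormedSpace ℝ V] : Type :=
  SchwartzMap V ℝ →L[ℝ] ℝ

/-- `u` is supported in the closed set `K`: `u φ = 0` whenever the (closed) support of `φ` is
disjoint from `K`. -/
def SuppIn {V : Type} [NormedAddCommGroup V] [NormedSpace ℝ V]
    (u : TDist V) (K : Set V) : Prop :=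
  ∀ φ : SchwartzMap V ℝ, Disjoint (tsupport φ) K → u φ = 0

/-- The iterated partial derivative `∂^α` on Schwartz functions on `ℝⁿ`,
for a multi-index `α : Fin n → ℕ`. -/
def multiPDeriv (n : ℕ) (α : Fin n → ℕ) :
    SchwartzMap (Euc n) ℝ →L[ℝ] SchwartzMap (Euc n) ℝ :=
  (List.ofFn fun i : Fin n =>
    (LineDeriv.lineDerivOpCLM ℝ (SchwartzMap (Euc n) ℝ) (EuclideanSpace.single i (1 : ℝ))) ^ (α i)).prod

section Aux
open SchwartzMap Function

variable {n : ℕ}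

/-- abbreviation for the standard basis vector -/
private abbrev euc1 (n : ℕ) (j : Fin n) : Euc n := EuclideanSpace.single j (1 : ℝ)

private abbrev pdE (n : ℕ) (j : Fin n) : SchwartzMap (Euc n) ℝ →L[ℝ] SchwartzMap (Euc n) ℝ :=
  LineDeriv.lineDerivOpCLM ℝ (SchwartzMap (Euc n) ℝ) (euc1 n j)

lemma pderiv_pderiv_apply (a b : Euc n) (φ : 𝓢(Euc n, ℝ)) (x : Euc n) :
    LineDeriv.lineDerivOpCLM ℝ (SchwartzMap (Euc n) ℝ) a (LineDeriv.lineDerivOpCLM ℝ (SchwartzMap (Euc n) ℝ) b φ) x = fderiv ℝ (fderiv ℝ ⇑φ) x a b := by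
  have h1 : ⇑(LineDeriv.lineDerivOpCLM ℝ (SchwartzMap (Euc n) ℝ) b φ) = fun y => fderiv ℝ ⇑φ y b :=
    funext fun y => SchwartzMap.lineDerivOp_apply_eq_fderiv b φ y
  rw [LineDeriv.lineDerivOpCLM_apply a (LineDeriv.lineDerivOpCLM ℝ (SchwartzMap (Euc n) ℝ) b φ),
    SchwartzMap.lineDerivOp_apply_eq_fderiv, h1]
  have hd : DifferentiableAt ℝ (fderiv ℝ ⇑φ) x := by
    have : ContDiff ℝ 1 (fderiv ℝ ⇑φ) := (φ.smooth ⊤).fderiv_right (by norm_cast)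
    exact this.differentiable one_ne_zero |>.differentiableAt
  have hcomp : HasFDerivAt (fun y => fderiv ℝ (⇑φ) y b)
      ((ContinuousLinearMap.apply ℝ ℝ b).comp (fderiv ℝ (fderiv ℝ ⇑φ) x)) x :=
    (ContinuousLinearMap.apply ℝ ℝ b).hasFDerivAt.comp x hd.hasFDerivAt
  rw [hcomp.fderiv]
  rfl

lemma pd_comm_apply (a b : Euc n) (φ : 𝓢(Euc n, ℝ)) (x : Euc n) :
    LineDeriv.lineDerivOpCLM ℝ (SchwartzMap (Euc n) ℝ) a (LineDeriv.lineDerivOpCLM ℝ (SchwartzMap (Euc n) ℝ) b φ) x = LineDeriv.lineDerivOpCLM ℝ (SchwartzMap (Euc n) ℝ) b (LineDeriv.lineDerivOpCLM ℝ (SchwartzMap (Euc n) ℝ) a φ) x := by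
  rw [pderiv_pderiv_apply, pderiv_pderiv_apply]
  exact (((φ.smooth ⊤).contDiffAt).isSymmSndFDerivAt (by simp only [minSmoothness_of_isRCLikeNormedField]; exact WithTop.coe_le_coe.mpr le_top)).eq a b

lemma pd_commute (a b : Euc n) :
    Commute (LineDeriv.lineDerivOpCLM ℝ (SchwartzMap (Euc n) ℝ) a) (LineDeriv.lineDerivOpCLM ℝ (SchwartzMap (Euc n) ℝ) b) := by
  apply ContinuousLinearMap.ext; intro φ; apply SchwartzMap.ext; intro x
  simpa only [ContinuousLinearMap.mul_apply] using pd_comm_apply a b φ x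

end Aux

section Aux2
open SchwartzMap Function

variable {n : ℕ}

lemma list_ofFn_prod_update {M : Type*} [Monoid M] :
    ∀ {k : ℕ} (f : Fin k → M) (j : Fin k) (a : M), (∀ i, Commute a (f i)) →
      (List.ofFn (Function.update f j (a * f j))).prod = a * (List.ofFn f).prod := by
  intro k
  induction k with
  | zero => exact fun f j => j.elim0
  | succ m ih =>
    intro f j a hc
    refine Fin.cases ?_ ?_ j
    · rw [List.ofFn_succ, List.ofFn_succ, List.prod_cons, List.prod_cons, Function.update_self]
      have h : (fun i : Fin m => Function.update f 0 (a * f 0) i.succ) = fun i => f i.succ := by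
        funext i; exact Function.update_of_ne (Fin.succ_ne_zero i) _ _
      rw [h, mul_assoc]
    · intro i
      rw [List.ofFn_succ, List.ofFn_succ, List.prod_cons, List.prod_cons]
      have h0 : Function.update f i.succ (a * f i.succ) 0 = f 0 :=
        Function.update_of_ne (Fin.succ_ne_zero i).symm _ _
      have ht : (fun p : Fin m => Function.update f i.succ (a * f i.succ) p.succ)
          = Function.update (fun p : Fin m => f p.succ) i (a * (fun p : Fin m => f p.succ) i) := by
        funext p
        by_cases hp : p = i
        · subst hp; simp
        · rw [Function.update_of_ne (fun h => hp (Fin.succ_injective _ h)) _ _,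
            Function.update_of_ne hp _ _]
      rw [h0, ht, ih _ i a (fun p => hc p.succ), ← mul_assoc, ← (hc 0).eq, mul_assoc]

lemma multiPDeriv_zero : multiPDeriv n (fun _ => 0) = 1 := by
  unfold multiPDeriv
  refine List.prod_eq_one ?_
  intro x hx
  rw [List.mem_ofFn] at hx
  obtain ⟨i, rfl⟩ := hx
  exact pow_zero _

lemma multiPDeriv_update (α : Fin n → ℕ) (j : Fin n) :
    multiPDeriv n (Function.update α j (α j + 1))
      = LineDeriv.lineDerivOpCLM ℝ (SchwartzMap (Euc n) ℝ) (EuclideanSpace.single j (1:ℝ)) * multiPDeriv n α := by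
  unfold multiPDeriv
  have h : (fun i => (LineDeriv.lineDerivOpCLM ℝ (SchwartzMap (Euc n) ℝ) (EuclideanSpace.single i (1:ℝ))) ^
        (Function.update α j (α j + 1) i)
        : Fin n → (𝓢(Euc n, ℝ) →L[ℝ] 𝓢(Euc n, ℝ)))
      = Function.update
          (fun i => (LineDeriv.lineDerivOpCLM ℝ (SchwartzMap (Euc n) ℝ) (EuclideanSpace.single i (1:ℝ))) ^ (α i)) j
          ((LineDeriv.lineDerivOpCLM ℝ (SchwartzMap (Euc n) ℝ) (EuclideanSpace.single j (1:ℝ))) *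
           (LineDeriv.lineDerivOpCLM ℝ (SchwartzMap (Euc n) ℝ) (EuclideanSpace.single j (1:ℝ))) ^ (α j)) := by
    funext i
    by_cases hij : i = j
    · subst hij; simp [pow_succ']
    · rw [Function.update_of_ne hij _ _, Function.update_of_ne hij _ _]
  rw [h, list_ofFn_prod_update _ j _ (fun i => (pd_commute _ _).pow_right _)]

/-- count vector of a tuple -/
def cnt : ∀ {k : ℕ}, (Fin k → Fin n) → (Fin n → ℕ)
  | 0, _ => fun _ => 0
  | (_+1), v => Function.update (cnt (Fin.tail v)) (v 0) (cnt (Fin.tail v) (v 0) + 1)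

lemma sum_cnt : ∀ {k : ℕ} (v : Fin k → Fin n), ∑ i, cnt v i = k := by
  intro k
  induction k with
  | zero => intro v; simp [cnt]
  | succ m ih =>
    intro v
    show ∑ i, Function.update (cnt (Fin.tail v)) (v 0) (cnt (Fin.tail v) (v 0) + 1) i = m + 1
    rw [Finset.sum_update_of_mem (Finset.mem_univ _)]
    have := Finset.add_sum_erase Finset.univ (cnt (Fin.tail v)) (Finset.mem_univ (v 0))
    rw [← Finset.sdiff_singleton_eq_erase, ih (Fin.tail v)] at this
    omega

lemma iteratedPDeriv_eq_multiPDeriv : ∀ {k : ℕ} (v : Fin k → Fin n) (φ : 𝓢(Euc n, ℝ)),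
    LineDeriv.iteratedLineDerivOp (fun j => EuclideanSpace.single (v j) (1:ℝ)) φ = multiPDeriv n (cnt v) φ := by
  intro k
  induction k with
  | zero =>
    intro v φ
    rw [LineDeriv.iteratedLineDerivOp_fin_zero]
    show φ = multiPDeriv n (fun _ => 0) φ
    rw [multiPDeriv_zero]; rfl
  | succ m ih =>
    intro v φ
    rw [LineDeriv.iteratedLineDerivOp_succ_left]
    have htail : Fin.tail (fun j : Fin (m+1) => EuclideanSpace.single (v j) (1:ℝ))
        = fun j : Fin m => EuclideanSpace.single (Fin.tail v j) (1:ℝ) := rfl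
    rw [htail, ih (Fin.tail v)]
    show LineDeriv.lineDerivOpCLM ℝ (SchwartzMap (Euc n) ℝ) (EuclideanSpace.single (v 0) (1:ℝ)) (multiPDeriv n (cnt (Fin.tail v)) φ)
        = multiPDeriv n (cnt v) φ
    have : cnt v = Function.update (cnt (Fin.tail v)) (v 0) (cnt (Fin.tail v) (v 0) + 1) := rfl
    rw [this, multiPDeriv_update]
    rfl

lemma iteratedFDeriv_zero_of_multiPDeriv (φ : 𝓢(Euc n, ℝ)) (k : ℕ)
    (h : ∀ v : Fin k → Fin n, multiPDeriv n (cnt v) φ 0 = 0) :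
    iteratedFDeriv ℝ k (⇑φ) 0 = 0 := by
  have H : ∀ v : Fin k → Fin n,
      iteratedFDeriv ℝ k (⇑φ) 0 (fun j => EuclideanSpace.single (v j) (1:ℝ)) = 0 := by
    intro v
    rw [← SchwartzMap.iteratedLineDerivOp_eq_iteratedFDeriv, iteratedPDeriv_eq_multiPDeriv]
    exact h v
  have heq : (iteratedFDeriv ℝ k (⇑φ) 0).toMultilinearMap
      = (0 : ContinuousMultilinearMap ℝ (fun _ : Fin k => Euc n) ℝ).toMultilinearMap := by
    refine Module.Basis.ext_multilinear (fun _ => (EuclideanSpace.basisFun (Fin n) ℝ).toBasis) ?_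
    intro v
    simpa [OrthonormalBasis.coe_toBasis, EuclideanSpace.basisFun_apply] using H v
  ext m
  exact DFunLike.congr_fun heq m

end Aux2

section Aux3
open SchwartzMap Metric Set

lemma natCast_le_coeTop (m : ℕ) : (m : WithTop ℕ∞) ≤ ((⊤ : ℕ∞) : WithTop ℕ∞) := by
  exact_mod_cast le_top

lemma natCast_lt_coeTop (m : ℕ) : (m : WithTop ℕ∞) < ((⊤ : ℕ∞) : WithTop ℕ∞) := by
  exact_mod_cast WithTop.coe_lt_top m

variable {n : ℕ}

/-- A compactly supported smooth function is a Schwartz function. -/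
def toSchwartz (f : Euc n → ℝ) (hsm : ContDiff ℝ ((⊤ : ℕ∞)) f) (hsupp : HasCompactSupport f) :
    𝓢(Euc n, ℝ) where
  toFun := f
  smooth' := hsm
  decay' := by
    intro k m
    have hcont : Continuous fun x => ‖x‖ ^ k • iteratedFDeriv ℝ m f x :=
      (continuous_norm.pow k).smul (hsm.continuous_iteratedFDeriv (natCast_le_coeTop m))
    have hcs : HasCompactSupport fun x => ‖x‖ ^ k • iteratedFDeriv ℝ m f x := by
      refine HasCompactSupport.mono (hsupp.iteratedFDeriv (𝕜 := ℝ) m) ?_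
      intro x hx
      simp only [Function.mem_support] at hx ⊢
      intro h0
      exact hx (by rw [h0, smul_zero])
    obtain ⟨C, hC⟩ := hcont.bounded_above_of_compact_support hcs
    refine ⟨C, fun x => ?_⟩
    have := hC x
    rwa [norm_smul, norm_pow, norm_norm] at this

theorem toSchwartz_apply (f : Euc n → ℝ) (hsm : ContDiff ℝ ((⊤ : ℕ∞)) f) (hsupp : HasCompactSupport f)
    (x : Euc n) : toSchwartz f hsm hsupp x = f x := rfl

/-- Taylor-type bound: if all jets up to order `N` vanish at `0`, the `j`-th derivative is
`O(‖x‖^(N+1-j))` on the ball of radius 2. -/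
theorem taylor_jet_bound (f : Euc n → ℝ) (hf : ContDiff ℝ ((⊤ : ℕ∞)) f) (N : ℕ)
    (h0 : ∀ j ≤ N, iteratedFDeriv ℝ j f 0 = 0) :
    ∃ K : ℝ, 0 ≤ K ∧ ∀ j ≤ N, ∀ x : Euc n, ‖x‖ ≤ 2 →
      ‖iteratedFDeriv ℝ j f x‖ ≤ K * ‖x‖ ^ (N + 1 - j) := by
  have claim : ∀ d : ℕ, ∃ K : ℝ, 0 ≤ K ∧ (d ≤ N + 1 → ∀ x : Euc n, ‖x‖ ≤ 2 →
      ‖iteratedFDeriv ℝ (N + 1 - d) f x‖ ≤ K * ‖x‖ ^ d) := by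
    intro d
    induction d with
    | zero =>
      obtain ⟨C, hC⟩ := (isCompact_closedBall (0 : Euc n) 2).exists_bound_of_continuousOn
        (((hf.continuous_iteratedFDeriv (m := N + 1) (natCast_le_coeTop _))).continuousOn
          (s := closedBall 0 2))
      refine ⟨max C 0, le_max_right _ _, fun _ x hx => ?_⟩
      have h2 := hC x (by simpa [mem_closedBall, dist_eq_norm] using hx)
      calc ‖iteratedFDeriv ℝ (N + 1 - 0) f x‖ ≤ C := by simpa using h2
        _ ≤ max C 0 * ‖x‖ ^ 0 := by simp [le_max_left]
    | succ d ih =>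
      obtain ⟨K, hK0, hK⟩ := ih
      refine ⟨K, hK0, fun hd x hx => ?_⟩
      have hdN : d ≤ N + 1 := le_of_lt hd
      set j := N + 1 - (d + 1) with hj
      have hj1 : j + 1 = N + 1 - d := by omega
      have hjN : j ≤ N := by omega
      have hdiff : ∀ y ∈ closedBall (0 : Euc n) ‖x‖,
          DifferentiableAt ℝ (iteratedFDeriv ℝ j f) y := fun y _ =>
        (hf.differentiable_iteratedFDeriv (natCast_lt_coeTop j)).differentiableAt
      have hbound : ∀ y ∈ closedBall (0 : Euc n) ‖x‖,
          ‖fderiv ℝ (iteratedFDeriv ℝ j f) y‖ ≤ K * ‖x‖ ^ d := by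
        intro y hy
        rw [norm_fderiv_iteratedFDeriv, hj1]
        have hyx : ‖y‖ ≤ ‖x‖ := by simpa [mem_closedBall, dist_eq_norm] using hy
        calc ‖iteratedFDeriv ℝ (N + 1 - d) f y‖ ≤ K * ‖y‖ ^ d := hK hdN y (hyx.trans hx)
          _ ≤ K * ‖x‖ ^ d := by
            exact mul_le_mul_of_nonneg_left (pow_le_pow_left₀ (norm_nonneg _) hyx d) hK0
      have hx0 : (0 : Euc n) ∈ closedBall (0 : Euc n) ‖x‖ := by simp
      have hxx : x ∈ closedBall (0 : Euc n) ‖x‖ := by simp [mem_closedBall, dist_eq_norm]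
      have := (convex_closedBall (0 : Euc n) ‖x‖).norm_image_sub_le_of_norm_fderiv_le
        hdiff hbound hx0 hxx
      rw [h0 j hjN] at this
      simpa [pow_succ, mul_assoc] using this
  choose K hK0 hK using claim
  refine ⟨∑ d ∈ Finset.range (N + 2), K d, Finset.sum_nonneg (fun d _ => hK0 d), ?_⟩
  intro j hj x hx
  have hd : N + 1 - (N + 1 - j) = j := by omega
  calc ‖iteratedFDeriv ℝ j f x‖ = ‖iteratedFDeriv ℝ (N + 1 - (N + 1 - j)) f x‖ := by rw [hd]
    _ ≤ K (N + 1 - j) * ‖x‖ ^ (N + 1 - j) := hK (N + 1 - j) (by omega) x hx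
    _ ≤ (∑ d ∈ Finset.range (N + 2), K d) * ‖x‖ ^ (N + 1 - j) := by
        refine mul_le_mul_of_nonneg_right ?_ (by positivity)
        exact Finset.single_le_sum (fun d _ => hK0 d) (Finset.mem_range.mpr (by omega))

end Aux3

section Aux4
open SchwartzMap Metric Set

variable {n : ℕ}

set_option maxHeartbeats 1600000 in
/-- The key analytic step: a tempered distribution supported at the origin kills every
Schwartz function whose jets up to the relevant order vanish at the origin. -/
theorem key_vanish (u : TDist (Euc n)) (hu : SuppIn u ({0} : Set (Euc n)))
    (s : Finset (ℕ × ℕ)) (C : ℝ) (hC0 : 0 ≤ C)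
    (hb : ∀ ψ : 𝓢(Euc n, ℝ), ‖u ψ‖ ≤ C * (s.sup (schwartzSeminormFamily ℝ (Euc n) ℝ)) ψ)
    (N : ℕ) (hN : ∀ q ∈ s, q.2 ≤ N)
    (φ : 𝓢(Euc n, ℝ)) (hφ : ∀ k ≤ N, iteratedFDeriv ℝ k (⇑φ) 0 = 0) : u φ = 0 := by
  classical
  set χ : ContDiffBump (0 : Euc n) := ⟨1, 2, one_pos, one_lt_two⟩ with hχ
  -- bounds on derivatives of the bump
  have hBex : ∀ i : ℕ, ∃ B : ℝ, 0 ≤ B ∧ ∀ y : Euc n, ‖iteratedFDeriv ℝ i (⇑χ) y‖ ≤ B := by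
    intro i
    obtain ⟨B, hB⟩ := ((χ.contDiff (n := ⊤)).continuous_iteratedFDeriv
      (natCast_le_coeTop i)).bounded_above_of_compact_support (χ.hasCompactSupport.iteratedFDeriv i)
    exact ⟨max B 0, le_max_right _ _, fun y => le_trans (by simpa using hB y) (le_max_left _ _)⟩
  choose B hB0 hB using hBex
  -- Taylor bounds for φ
  obtain ⟨K, hK0, hK⟩ := taylor_jet_bound (⇑φ) (φ.smooth ⊤) N hφ
  -- global constant
  set D : ℝ := ∑ q ∈ s, (2:ℝ) ^ q.1 *
      ∑ i ∈ Finset.range (q.2 + 1), (q.2.choose i : ℝ) * (B i * (K * 2 ^ (N + 1 - q.2 + i)))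
    with hD
  have hDq0 : ∀ q : ℕ × ℕ, 0 ≤ (2:ℝ) ^ q.1 *
      ∑ i ∈ Finset.range (q.2 + 1), (q.2.choose i : ℝ) * (B i * (K * 2 ^ (N + 1 - q.2 + i))) := by
    intro q
    refine mul_nonneg (by positivity) (Finset.sum_nonneg fun i _ => ?_)
    exact mul_nonneg (by positivity) (mul_nonneg (hB0 i) (mul_nonneg hK0 (by positivity)))
  have hD0 : 0 ≤ D := Finset.sum_nonneg fun q _ => hDq0 q
  -- main estimate
  have main : ∀ ε : ℝ, 0 < ε → ε ≤ 1 → ‖u φ‖ ≤ C * D * ε := by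
    intro ε hε hε1
    set Sc : Euc n →L[ℝ] Euc n := ε⁻¹ • ContinuousLinearMap.id ℝ (Euc n) with hSc
    have hScx : ∀ x : Euc n, Sc x = ε⁻¹ • x := fun x => rfl
    set χε : Euc n → ℝ := fun x => χ (Sc x) with hχε
    have hχsm : ContDiff ℝ ((⊤ : ℕ∞)) χε := (χ.contDiff (n := ⊤)).comp Sc.contDiff
    have hχε_one : ∀ x : Euc n, ‖x‖ ≤ ε → χε x = 1 := by
      intro x hx
      refine χ.one_of_mem_closedBall ?_
      simp only [hScx, mem_closedBall, dist_zero_right, norm_smul, norm_inv,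
        Real.norm_eq_abs, abs_of_pos hε]
      calc ε⁻¹ * ‖x‖ ≤ ε⁻¹ * ε := by
            exact mul_le_mul_of_nonneg_left hx (by positivity)
        _ = 1 := inv_mul_cancel₀ (ne_of_gt hε)
      
    have hχε_zero : ∀ x : Euc n, 2 * ε < ‖x‖ → χε x = 0 := by
      intro x hx
      by_contra h0
      have : Sc x ∈ Function.support ⇑χ := h0
      rw [χ.support_eq] at this
      simp only [hScx, mem_ball, dist_zero_right, norm_smul, norm_inv,
        Real.norm_eq_abs, abs_of_pos hε] at this
      have : ‖x‖ < 2 * ε := by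
        have := (inv_mul_lt_iff₀ hε).mp this
        linarith
      linarith
    have hχsupp : HasCompactSupport χε := by
      refine HasCompactSupport.intro (isCompact_closedBall (0 : Euc n) (2 * ε)) ?_
      intro x hx
      refine hχε_zero x ?_
      simpa [mem_closedBall, dist_zero_right, not_le] using hx
    have hg_sm : ContDiff ℝ ((⊤ : ℕ∞)) (fun x => χε x * φ x) := hχsm.mul (φ.smooth ⊤)
    have hg_supp : HasCompactSupport (fun x => χε x * φ x) := hχsupp.mul_right
    set ψ : 𝓢(Euc n, ℝ) := toSchwartz (fun x => χε x * φ x) hg_sm hg_supp with hψ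
    have hψ_coe : ⇑ψ = fun x => χε x * φ x := rfl
    -- u φ = u ψ
    have huφψ : u φ = u ψ := by
      have hclosed : IsClosed {x : Euc n | ε ≤ ‖x‖} := isClosed_le continuous_const continuous_norm
      have hsub : tsupport ⇑(φ - ψ) ⊆ {x : Euc n | ε ≤ ‖x‖} := by
        refine closure_minimal ?_ hclosed
        intro x hx
        simp only [Function.mem_support] at hx
        simp only [Set.mem_setOf_eq]
        by_contra hxε
        push_neg at hxε
        exfalso
        apply hx
        have : (φ - ψ) x = φ x - χε x * φ x := by
          rw [SchwartzMap.sub_apply]; rfl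
        rw [this, hχε_one x (le_of_lt hxε), one_mul, sub_self]
      have hdisj : Disjoint (tsupport ⇑(φ - ψ)) ({0} : Set (Euc n)) := by
        refine Set.disjoint_singleton_right.mpr ?_
        intro h0
        have := hsub h0
        simp only [Set.mem_setOf_eq, norm_zero] at this
        linarith
      have h0 := hu (φ - ψ) hdisj
      rw [map_sub] at h0
      linarith [h0]
    -- derivative bounds for χε
    have hχd : ∀ (i : ℕ) (x : Euc n), ‖iteratedFDeriv ℝ i χε x‖ ≤ B i * ε⁻¹ ^ i := by
      intro i x
      have hcomp : iteratedFDeriv ℝ i χε x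
          = (iteratedFDeriv ℝ i (⇑χ) (Sc x)).compContinuousLinearMap fun _ => Sc :=
        Sc.iteratedFDeriv_comp_right (χ.contDiff (n := ⊤)) x (natCast_le_coeTop i)
      rw [hcomp]
      have hSc_norm : ‖Sc‖ ≤ ε⁻¹ := by
        rw [hSc]
        calc ‖ε⁻¹ • ContinuousLinearMap.id ℝ (Euc n)‖
            ≤ ‖ε⁻¹‖ * ‖ContinuousLinearMap.id ℝ (Euc n)‖ := ContinuousLinearMap.opNorm_smul_le _ _
          _ ≤ ε⁻¹ * 1 := by
              refine mul_le_mul ?_ ContinuousLinearMap.norm_id_le (norm_nonneg _) (by positivity)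
              rw [Real.norm_eq_abs, abs_of_pos (by positivity)]
          _ = ε⁻¹ := mul_one _
      calc ‖(iteratedFDeriv ℝ i (⇑χ) (Sc x)).compContinuousLinearMap fun _ => Sc‖
          ≤ ‖iteratedFDeriv ℝ i (⇑χ) (Sc x)‖ * ∏ _j : Fin i, ‖Sc‖ :=
            ContinuousMultilinearMap.norm_compContinuousLinearMap_le _ _
        _ ≤ B i * ε⁻¹ ^ i := by
            rw [Finset.prod_const, Finset.card_univ, Fintype.card_fin]
            exact mul_le_mul (hB i _) (pow_le_pow_left₀ (norm_nonneg _) hSc_norm i)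
              (by positivity) (hB0 i)
    -- seminorm bound
    have hsem : ∀ q ∈ s, (schwartzSeminormFamily ℝ (Euc n) ℝ q) ψ ≤ D * ε := by
      intro q hq
      have hkN : q.2 ≤ N := hN q hq
      set m := q.1
      set k := q.2
      have hDq : (schwartzSeminormFamily ℝ (Euc n) ℝ q) ψ ≤ ((2:ℝ) ^ m *
          ∑ i ∈ Finset.range (k + 1), (k.choose i : ℝ) * (B i * (K * 2 ^ (N + 1 - k + i)))) * ε := by
        have hq_eq : q = (m, k) := rfl
        rw [hq_eq, schwartzSeminormFamily_apply]
        refine SchwartzMap.seminorm_le_bound ℝ m k ψ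
          (mul_nonneg (hDq0 (m, k)) (le_of_lt hε)) ?_
        intro x
        by_cases hcase : ‖x‖ ≤ 2 * ε
        · -- the interesting case
          have hx2 : ‖x‖ ≤ 2 := le_trans hcase (by linarith)
          have hmul := norm_iteratedFDeriv_mul_le (𝕜 := ℝ) hχsm (φ.smooth ⊤) x
            (n := k) (natCast_le_coeTop k)
          have hterm : ∀ i ∈ Finset.range (k + 1),
              (k.choose i : ℝ) * ‖iteratedFDeriv ℝ i χε x‖ * ‖iteratedFDeriv ℝ (k - i) (⇑φ) x‖
              ≤ (k.choose i : ℝ) * (B i * (K * 2 ^ (N + 1 - k + i))) * ε := by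
            intro i hi
            have hik : i ≤ k := by
              simpa using Nat.lt_succ_iff.mp (Finset.mem_range.mp hi)
            have hkiN : k - i ≤ N := le_trans (Nat.sub_le _ _) hkN
            have hexp : N + 1 - (k - i) = N + 1 - k + i := by omega
            have h1 : ‖iteratedFDeriv ℝ i χε x‖ ≤ B i * ε⁻¹ ^ i := hχd i x
            have h2 : ‖iteratedFDeriv ℝ (k - i) (⇑φ) x‖ ≤ K * (2 * ε) ^ (N + 1 - k + i) := by
              calc ‖iteratedFDeriv ℝ (k - i) (⇑φ) x‖ ≤ K * ‖x‖ ^ (N + 1 - (k - i)) :=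
                    hK (k - i) hkiN x hx2
                _ ≤ K * (2 * ε) ^ (N + 1 - k + i) := by
                    rw [hexp]
                    refine mul_le_mul_of_nonneg_left ?_ hK0
                    exact pow_le_pow_left₀ (norm_nonneg _) hcase _
            have hprod : (B i * ε⁻¹ ^ i) * (K * (2 * ε) ^ (N + 1 - k + i))
                ≤ B i * (K * 2 ^ (N + 1 - k + i)) * ε := by
              have hεpow : ε⁻¹ ^ i * ε ^ (N + 1 - k + i) = ε ^ (N + 1 - k) := by
                rw [pow_add, ← mul_assoc, mul_comm (ε⁻¹ ^ i), mul_assoc,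
                  inv_pow, inv_mul_cancel₀ (pow_ne_zero i (ne_of_gt hε)), mul_one]
              have hεlt : ε ^ (N + 1 - k) ≤ ε := by
                have h1k : 1 ≤ N + 1 - k := by omega
                calc ε ^ (N + 1 - k) ≤ ε ^ 1 := pow_le_pow_of_le_one (le_of_lt hε) hε1 h1k
                  _ = ε := pow_one ε
              calc (B i * ε⁻¹ ^ i) * (K * (2 * ε) ^ (N + 1 - k + i))
                  = B i * (K * 2 ^ (N + 1 - k + i)) * (ε⁻¹ ^ i * ε ^ (N + 1 - k + i)) := by
                    rw [mul_pow]; ring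
                _ = B i * (K * 2 ^ (N + 1 - k + i)) * ε ^ (N + 1 - k) := by rw [hεpow]
                _ ≤ B i * (K * 2 ^ (N + 1 - k + i)) * ε := by
                    refine mul_le_mul_of_nonneg_left hεlt ?_
                    exact mul_nonneg (hB0 i) (mul_nonneg hK0 (by positivity))
            calc (k.choose i : ℝ) * ‖iteratedFDeriv ℝ i χε x‖ * ‖iteratedFDeriv ℝ (k - i) (⇑φ) x‖
                ≤ (k.choose i : ℝ) * ((B i * ε⁻¹ ^ i) * (K * (2 * ε) ^ (N + 1 - k + i))) := by
                  rw [mul_assoc]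
                  refine mul_le_mul_of_nonneg_left ?_ (by positivity)
                  exact mul_le_mul h1 h2 (norm_nonneg _) (mul_nonneg (hB0 i) (by positivity))
              _ ≤ (k.choose i : ℝ) * (B i * (K * 2 ^ (N + 1 - k + i))) * ε := by
                  rw [mul_assoc ((k.choose i : ℝ))]
                  refine mul_le_mul_of_nonneg_left hprod (by positivity)
          have hDk : ‖iteratedFDeriv ℝ k (⇑ψ) x‖
              ≤ (∑ i ∈ Finset.range (k + 1), (k.choose i : ℝ) * (B i * (K * 2 ^ (N + 1 - k + i)))) * ε := by
            rw [Finset.sum_mul]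
            calc ‖iteratedFDeriv ℝ k (⇑ψ) x‖
                ≤ ∑ i ∈ Finset.range (k + 1),
                  (k.choose i : ℝ) * ‖iteratedFDeriv ℝ i χε x‖ * ‖iteratedFDeriv ℝ (k - i) (⇑φ) x‖ := by
                  rw [hψ_coe]; exact hmul
              _ ≤ ∑ i ∈ Finset.range (k + 1), (k.choose i : ℝ) * (B i * (K * 2 ^ (N + 1 - k + i))) * ε :=
                  Finset.sum_le_sum hterm
          calc ‖x‖ ^ m * ‖iteratedFDeriv ℝ k (⇑ψ) x‖
              ≤ 2 ^ m * ((∑ i ∈ Finset.range (k + 1), (k.choose i : ℝ) * (B i * (K * 2 ^ (N + 1 - k + i)))) * ε) := by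
                refine mul_le_mul (pow_le_pow_left₀ (norm_nonneg _) hx2 m) hDk (norm_nonneg _)
                  (by positivity)
            _ = (2 ^ m * ∑ i ∈ Finset.range (k + 1), (k.choose i : ℝ) * (B i * (K * 2 ^ (N + 1 - k + i)))) * ε := by
                ring
        · -- outside the support
          push_neg at hcase
          have hnot : x ∉ tsupport ⇑ψ := by
            intro hmem
            have hsub2 : tsupport ⇑ψ ⊆ closedBall (0 : Euc n) (2 * ε) := by
              refine closure_minimal ?_ (isClosed_closedBall)
              intro y hy
              simp only [Function.mem_support, hψ_coe] at hy
              by_contra hy2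
              simp only [mem_closedBall, dist_zero_right, not_le] at hy2
              exact hy (by rw [hχε_zero y hy2, zero_mul])
            have := hsub2 hmem
            simp only [mem_closedBall, dist_zero_right] at this
            linarith
          have hzero : iteratedFDeriv ℝ k (⇑ψ) x = 0 := by
            refine image_eq_zero_of_notMem_tsupport ?_
            intro hmem
            exact hnot (tsupport_iteratedFDeriv_subset k hmem)
          rw [hzero]
          simp only [norm_zero, mul_zero]
          exact mul_nonneg (hDq0 (m, k)) (le_of_lt hε)
      calc (schwartzSeminormFamily ℝ (Euc n) ℝ q) ψ
          ≤ ((2:ℝ) ^ m * ∑ i ∈ Finset.range (k + 1), (k.choose i : ℝ) * (B i * (K * 2 ^ (N + 1 - k + i)))) * ε := hDq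
        _ ≤ D * ε := by
            refine mul_le_mul_of_nonneg_right ?_ (le_of_lt hε)
            exact Finset.single_le_sum (fun q _ => hDq0 q) hq
    have hsup : (s.sup (schwartzSeminormFamily ℝ (Euc n) ℝ)) ψ ≤ D * ε :=
      Seminorm.finset_sup_apply_le (mul_nonneg hD0 (le_of_lt hε)) hsem
    calc ‖u φ‖ = ‖u ψ‖ := by rw [huφψ]
      _ ≤ C * (s.sup (schwartzSeminormFamily ℝ (Euc n) ℝ)) ψ := hb ψ
      _ ≤ C * (D * ε) := mul_le_mul_of_nonneg_left hsup hC0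
      _ = C * D * ε := by ring
  -- let ε → 0
  by_contra hne
  have hpos : 0 < ‖u φ‖ := norm_pos_iff.mpr hne
  set A := C * D with hA
  have hA0 : 0 ≤ A := mul_nonneg hC0 hD0
  set ε0 := min 1 (‖u φ‖ / (2 * (A + 1))) with hε0
  have hε0pos : 0 < ε0 := lt_min one_pos (div_pos hpos (by linarith))
  have hε01 : ε0 ≤ 1 := min_le_left _ _
  have h1 := main ε0 hε0pos hε01
  have h2 : A * ε0 ≤ (A + 1) * (‖u φ‖ / (2 * (A + 1))) := by
    refine mul_le_mul (by linarith) (min_le_right _ _) (le_of_lt hε0pos) (by linarith)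
  have h3 : (A + 1) * (‖u φ‖ / (2 * (A + 1))) = ‖u φ‖ / 2 := by
    field_simp
  rw [h3] at h2
  linarith
end Aux4

section Main
open SchwartzMap

/-- **Distributions supported at a point.** Any tempered distribution `u` on `ℝⁿ` (`n ≥ 1`)
supported in `{0}` is a finite linear combination of derivatives of the Dirac delta at `0`:
there are `N` and constants `c_α` (`|α| ≤ N`) with
`u φ = ∑_{|α| ≤ N} c_α (-1)^{|α|} (∂^α φ)(0)` for all Schwartz `φ`. -/
theorem dist_supported_at_origin (n : ℕ) (hn : 1 ≤ n) (u : TDist (Euc n))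
    (hu : SuppIn u ({0} : Set (Euc n))) :
    ∃ (N : ℕ) (c : (Fin n → ℕ) → ℝ), ∀ φ : SchwartzMap (Euc n) ℝ,
      u φ = ∑ α ∈ Finset.univ.filter
          (fun α : Fin n → Fin (N + 1) => (∑ i, (α i : ℕ)) ≤ N),
        c (fun i => (α i : ℕ)) * (-1 : ℝ) ^ (∑ i, (α i : ℕ)) *
          (multiPDeriv n (fun i => (α i : ℕ)) φ) 0 := by
  classical
  -- continuity bound via seminorms
  set q : Seminorm ℝ (𝓢(Euc n, ℝ)) := (normSeminorm ℝ ℝ).comp (u : 𝓢(Euc n, ℝ) →ₗ[ℝ] ℝ) with hqdef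
  have hq_cont : Continuous ⇑q := by
    have : ⇑q = fun φ => ‖u φ‖ := rfl
    rw [this]
    exact u.continuous.norm
  obtain ⟨s, C, hCne, hle⟩ :=
    Seminorm.bound_of_continuous (schwartz_withSeminorms ℝ (Euc n) ℝ) q hq_cont
  have hb : ∀ ψ : 𝓢(Euc n, ℝ), ‖u ψ‖ ≤ (C : ℝ) *
      (s.sup (schwartzSeminormFamily ℝ (Euc n) ℝ)) ψ := by
    intro ψ
    have := hle ψ
    simpa [hqdef, Seminorm.comp_apply, NNReal.smul_def, smul_eq_mul] using this
  set N := s.sup (fun p : ℕ × ℕ => p.2) with hNdef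
  have hN : ∀ p ∈ s, p.2 ≤ N := fun p hp => Finset.le_sup hp
  -- the evaluation functionals
  set L : {α : Fin n → Fin (N + 1) // (∑ i, (α i : ℕ)) ≤ N} → (𝓢(Euc n, ℝ) →ₗ[ℝ] ℝ) :=
    fun a => (((BoundedContinuousFunction.evalCLM ℝ (0 : Euc n)).comp
        (toBoundedContinuousFunctionCLM ℝ (Euc n) ℝ)).comp
      (multiPDeriv n (fun i => (a.1 i : ℕ)))).toLinearMap with hLdef
  have hLapp : ∀ a φ, L a φ = multiPDeriv n (fun i => (a.1 i : ℕ)) φ 0 := fun a φ => rfl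
  -- kernel inclusion
  have hker : (⨅ a, LinearMap.ker (L a)) ≤ LinearMap.ker (u : 𝓢(Euc n, ℝ) →ₗ[ℝ] ℝ) := by
    intro φ hφ
    rw [LinearMap.mem_ker]
    refine key_vanish u hu s (C : ℝ) C.coe_nonneg hb N hN φ ?_
    intro k hk
    refine iteratedFDeriv_zero_of_multiPDeriv φ k ?_
    intro v
    have hsum := sum_cnt v
    have hcomp : ∀ i, cnt v i ≤ k := by
      intro i
      calc cnt v i ≤ ∑ j, cnt v j :=
            Finset.single_le_sum (fun j _ => Nat.zero_le _) (Finset.mem_univ i)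
        _ = k := hsum
    set a : {α : Fin n → Fin (N + 1) // (∑ i, (α i : ℕ)) ≤ N} :=
      ⟨fun i => ⟨cnt v i, Nat.lt_succ_of_le (le_trans (hcomp i) hk)⟩, by
        simpa using le_trans (le_of_eq hsum) hk⟩ with hadef
    have hmem : φ ∈ LinearMap.ker (L a) := (Submodule.mem_iInf _).mp hφ a
    rw [LinearMap.mem_ker] at hmem
    have hcoe : (fun i => ((a.1 i : ℕ))) = cnt v := rfl
    rw [hLapp, hcoe] at hmem
    exact hmem
  have hspan := mem_span_of_iInf_ker_le_ker (𝕜 := ℝ) hker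
  obtain ⟨c, hc⟩ := (Submodule.mem_span_range_iff_exists_fun ℝ).mp hspan
  -- define the coefficients
  set cc : (Fin n → ℕ) → ℝ := fun β =>
    (Function.extend (fun a : {α : Fin n → Fin (N + 1) // (∑ i, (α i : ℕ)) ≤ N} =>
        (fun i => (a.1 i : ℕ))) c 0) β * (-1 : ℝ) ^ (∑ i, β i) with hccdef
  have hinj : Function.Injective
      (fun a : {α : Fin n → Fin (N + 1) // (∑ i, (α i : ℕ)) ≤ N} =>
        (fun i => ((a.1 i : ℕ)) : Fin n → ℕ)) := by
    intro a b hab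
    ext i
    exact congrFun hab i
  refine ⟨N, cc, fun φ => ?_⟩
  have h1 : u φ = ∑ a : {α : Fin n → Fin (N + 1) // (∑ i, (α i : ℕ)) ≤ N},
      c a * L a φ := by
    have h2 := congrArg (fun T : 𝓢(Euc n, ℝ) →ₗ[ℝ] ℝ => T φ) hc
    simp only [LinearMap.coe_sum, Finset.sum_apply, LinearMap.smul_apply,
      smul_eq_mul] at h2
    exact h2.symm
  rw [h1]
  rw [Finset.sum_subtype (p := fun α : Fin n → Fin (N + 1) => (∑ i, (α i : ℕ)) ≤ N) (Finset.univ.filter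
      (fun α : Fin n → Fin (N + 1) => (∑ i, (α i : ℕ)) ≤ N))
      (by intro x; simp)
      (fun α : Fin n → Fin (N + 1) => cc (fun i => (α i : ℕ)) * (-1 : ℝ) ^ (∑ i, (α i : ℕ)) *
        (multiPDeriv n (fun i => (α i : ℕ)) φ) 0)]
  refine Finset.sum_congr rfl ?_
  intro a _
  rw [hLapp]
  have hext : (Function.extend (fun a : {α : Fin n → Fin (N + 1) // (∑ i, (α i : ℕ)) ≤ N} =>
      (fun i => (a.1 i : ℕ))) c 0) (fun i => ((a.1 i : ℕ))) = c a :=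
    hinj.extend_apply c 0 a
  have hsign : ((-1 : ℝ)) ^ (∑ i, ((a.1 i : ℕ))) * (-1 : ℝ) ^ (∑ i, ((a.1 i : ℕ))) = 1 := by
    rw [← pow_add]
    exact Even.neg_one_pow ⟨∑ i, ((a.1 i : ℕ)), rfl⟩
  rw [hccdef]
  simp only
  rw [hext]
  calc c a * multiPDeriv n (fun i => ((a.1 i : ℕ))) φ 0
      = c a * (((-1 : ℝ)) ^ (∑ i, ((a.1 i : ℕ))) * (-1 : ℝ) ^ (∑ i, ((a.1 i : ℕ)))) *
        multiPDeriv n (fun i => ((a.1 i : ℕ))) φ 0 := by rw [hsign, mul_one]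
    _ = c a * (-1 : ℝ) ^ (∑ i, ((a.1 i : ℕ))) * (-1 : ℝ) ^ (∑ i, ((a.1 i : ℕ))) *
        multiPDeriv n (fun i => ((a.1 i : ℕ))) φ 0 := by ring

end Main
end
end

section
/- Every tempered distribution u on ℝ has a tempered primitive: there exists a tempered distribution v on ℝ such that v(φ′) = −u(φ) for every Schwartz function φ on ℝ, i.e. the distributional derivative of v equals u. -/
open MeasureTheory SchwartzMap

noncomputable section

namespace TemperedPrimitiveAux

open Filter

/-- The integral of `(1 + |t|)⁻²` over `ℝ`. -/
def Ik : ℝ := ∫ t : ℝ, (1 + ‖t‖) ^ (-(2:ℝ))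

lemma Ik_int : Integrable (fun t : ℝ => (1 + ‖t‖) ^ (-(2:ℝ))) := by
  apply integrable_one_add_norm
  norm_num [Module.finrank_self]

lemma Ik_nonneg : 0 ≤ Ik := integral_nonneg fun t => by positivity

lemma tendsto_top (φ : SchwartzMap ℝ ℝ) : Tendsto φ atTop (nhds 0) :=
  (zero_at_infty φ).mono_left (by rw [cocompact_eq_atBot_atTop]; exact le_sup_right)

lemma tendsto_bot (φ : SchwartzMap ℝ ℝ) : Tendsto φ atBot (nhds 0) :=
  (zero_at_infty φ).mono_left (by rw [cocompact_eq_atBot_atTop]; exact le_sup_left)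

lemma estim (k : ℕ) (φ ψ : SchwartzMap ℝ ℝ) (M : ℝ)
    (hψ : ∀ t : ℝ, (1 + ‖t‖) ^ (k + 2) * ‖ψ t‖ ≤ M) (a : ℝ) (s : Set ℝ)
    (hs : MeasurableSet s) (hmem : ∀ t ∈ s, ‖a‖ ≤ ‖t‖)
    (hφa : ‖φ a‖ ≤ ∫ t in s, ‖ψ t‖) : ‖a‖ ^ k * ‖φ a‖ ≤ M * Ik := by
  have hM0 : 0 ≤ M := le_trans (by positivity) (hψ 0)
  have h1 : ‖a‖ ^ k * ‖φ a‖ ≤ ∫ t in s, ‖a‖ ^ k * ‖ψ t‖ := by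
    rw [integral_const_mul]
    exact mul_le_mul_of_nonneg_left hφa (by positivity)
  have hint1 : IntegrableOn (fun t => ‖a‖ ^ k * ‖ψ t‖) s :=
    ((ψ.integrable (μ := volume)).norm.const_mul _).integrableOn
  have hint2 : Integrable (fun t : ℝ => M * (1 + ‖t‖) ^ (-(2:ℝ))) := Ik_int.const_mul M
  have hpt : ∀ t ∈ s, ‖a‖ ^ k * ‖ψ t‖ ≤ M * (1 + ‖t‖) ^ (-(2:ℝ)) := by
    intro t ht
    have h2 : (0:ℝ) < 1 + ‖t‖ := by positivity
    have hrw : (1 + ‖t‖) ^ (-(2:ℝ)) = ((1 + ‖t‖) ^ (2:ℕ))⁻¹ := by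
      rw [Real.rpow_neg h2.le]
      norm_num
    rw [hrw, ← div_eq_mul_inv, le_div_iff₀ (pow_pos h2 2)]
    have hat : ‖a‖ ≤ 1 + ‖t‖ := le_trans (hmem t ht) (by linarith [norm_nonneg t])
    calc ‖a‖ ^ k * ‖ψ t‖ * (1 + ‖t‖) ^ 2
        ≤ (1 + ‖t‖) ^ k * ‖ψ t‖ * (1 + ‖t‖) ^ 2 := by gcongr
      _ = (1 + ‖t‖) ^ (k + 2) * ‖ψ t‖ := by ring
      _ ≤ M := hψ t
  have h2 : ∫ t in s, ‖a‖ ^ k * ‖ψ t‖ ≤ ∫ t in s, M * (1 + ‖t‖) ^ (-(2:ℝ)) :=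
    setIntegral_mono_on hint1 hint2.integrableOn hs hpt
  have h3 : ∫ t in s, M * (1 + ‖t‖) ^ (-(2:ℝ)) ≤ ∫ t : ℝ, M * (1 + ‖t‖) ^ (-(2:ℝ)) :=
    setIntegral_le_integral hint2 (Filter.Eventually.of_forall fun t => by positivity)
  have h4 : ∫ t : ℝ, M * (1 + ‖t‖) ^ (-(2:ℝ)) = M * Ik := integral_const_mul _ _
  linarith

lemma pointwise (k : ℕ) (φ : SchwartzMap ℝ ℝ) (M : ℝ)
    (hψ : ∀ t : ℝ, (1 + ‖t‖) ^ (k + 2) * ‖(derivCLM ℝ ℝ φ) t‖ ≤ M) (a : ℝ) :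
    ‖a‖ ^ k * ‖φ a‖ ≤ M * Ik := by
  set ψ := derivCLM ℝ ℝ φ with hψdef
  have hd : ∀ x : ℝ, HasDerivAt ⇑φ (ψ x) x := by
    intro x
    have h := φ.differentiableAt (x := x) |>.hasDerivAt
    rwa [show ψ x = deriv φ x from derivCLM_apply ℝ φ x]
  rcases le_or_gt 0 a with ha | ha
  · have hFTC : ∫ t in Set.Ioi a, ψ t = 0 - φ a :=
      integral_Ioi_of_hasDerivAt_of_tendsto' (fun x _ => hd x)
        ((ψ.integrable (μ := volume)).integrableOn) (tendsto_top φ)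
    have hφa : ‖φ a‖ ≤ ∫ t in Set.Ioi a, ‖ψ t‖ := by
      have h5 : φ a = -∫ t in Set.Ioi a, ψ t := by rw [hFTC]; ring
      rw [h5, norm_neg]
      exact norm_integral_le_integral_norm _
    refine estim k φ ψ M hψ a (Set.Ioi a) measurableSet_Ioi (fun t ht => ?_) hφa
    have hta : a < t := ht
    rw [Real.norm_eq_abs, Real.norm_eq_abs, abs_of_nonneg ha, abs_of_nonneg (ha.trans hta.le)]
    exact hta.le
  · have hFTC : ∫ t in Set.Iic a, ψ t = φ a - 0 :=
      integral_Iic_of_hasDerivAt_of_tendsto' (fun x _ => hd x)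
        ((ψ.integrable (μ := volume)).integrableOn) (tendsto_bot φ)
    have hφa : ‖φ a‖ ≤ ∫ t in Set.Iic a, ‖ψ t‖ := by
      have h5 : φ a = ∫ t in Set.Iic a, ψ t := by rw [hFTC]; ring
      rw [h5]
      exact norm_integral_le_integral_norm _
    refine estim k φ ψ M hψ a (Set.Iic a) measurableSet_Iic (fun t ht => ?_) hφa
    have hta : t ≤ a := ht
    rw [Real.norm_eq_abs, Real.norm_eq_abs, abs_of_neg ha, abs_of_neg (hta.trans_lt ha)]
    linarith

lemma zerocase (k : ℕ) (φ : SchwartzMap ℝ ℝ) :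
    SchwartzMap.seminorm ℝ k 0 φ ≤ (2 ^ (k + 2) * Ik) *
      ((Finset.Iic (k + 2, 0)).sup (schwartzSeminormFamily ℝ ℝ ℝ)) (derivCLM ℝ ℝ φ) := by
  set ψ := derivCLM ℝ ℝ φ with hψdef
  set S : ℝ := ((Finset.Iic (k + 2, 0)).sup (schwartzSeminormFamily ℝ ℝ ℝ)) ψ with hS
  have hS0 : 0 ≤ S := apply_nonneg _ _
  have hψ : ∀ t : ℝ, (1 + ‖t‖) ^ (k + 2) * ‖ψ t‖ ≤ 2 ^ (k + 2) * S := by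
    intro t
    have h := one_add_le_sup_seminorm_apply (𝕜 := ℝ) (m := (k + 2, 0)) (k := k + 2) (n := 0)
      le_rfl le_rfl ψ t
    simp only [norm_iteratedFDeriv_zero] at h
    exact h
  refine seminorm_le_bound ℝ k 0 φ (by have := Ik_nonneg; positivity) fun x => ?_
  rw [norm_iteratedFDeriv_zero]
  calc ‖x‖ ^ k * ‖φ x‖ ≤ (2 ^ (k + 2) * S) * Ik := pointwise k φ _ hψ x
    _ = (2 ^ (k + 2) * Ik) * S := by ring

lemma shift (k n : ℕ) (φ : SchwartzMap ℝ ℝ) :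
    SchwartzMap.seminorm ℝ k (n + 1) φ ≤ SchwartzMap.seminorm ℝ k n (derivCLM ℝ ℝ φ) := by
  refine seminorm_le_bound ℝ k (n+1) φ (apply_nonneg _ _) fun x => ?_
  have h2 : ⇑(derivCLM ℝ ℝ φ) = deriv ⇑φ := by funext y; simp [derivCLM_apply]
  have h1 : ‖iteratedFDeriv ℝ (n+1) (⇑φ) x‖ = ‖iteratedFDeriv ℝ n (⇑(derivCLM ℝ ℝ φ)) x‖ := by
    rw [norm_iteratedFDeriv_eq_norm_iteratedDeriv, norm_iteratedFDeriv_eq_norm_iteratedDeriv,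
      iteratedDeriv_succ', h2]
  rw [h1]
  exact le_seminorm ℝ k n (derivCLM ℝ ℝ φ) x

lemma sup_bound (s : Finset (ℕ × ℕ)) :
    ∃ (F : Finset (ℕ × ℕ)) (D : ℝ), 0 ≤ D ∧ ∀ φ : SchwartzMap ℝ ℝ,
      (s.sup (schwartzSeminormFamily ℝ ℝ ℝ)) φ ≤
        D * ((F.sup (schwartzSeminormFamily ℝ ℝ ℝ)) (derivCLM ℝ ℝ φ)) := by
  classical
  set P := schwartzSeminormFamily ℝ ℝ ℝ with hP
  set K := s.sup (fun p : ℕ × ℕ => p.1) with hK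
  set N := s.sup (fun p : ℕ × ℕ => p.2) with hN
  have h2Ik : (0:ℝ) ≤ 2 ^ (K + 2) * Ik := mul_nonneg (by positivity) Ik_nonneg
  refine ⟨Finset.Iic (K + 2, N), 2 ^ (K + 2) * Ik + 1, by linarith, fun φ => ?_⟩
  set ψ := derivCLM ℝ ℝ φ with hψ
  set T : ℝ := ((Finset.Iic (K + 2, N)).sup P) ψ with hT
  have hT0 : 0 ≤ T := apply_nonneg _ _
  have hD1 : (1:ℝ) ≤ 2 ^ (K + 2) * Ik + 1 := by linarith
  refine Seminorm.finset_sup_apply_le (by positivity) fun i hi => ?_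
  obtain ⟨k, n⟩ := i
  have hkK : k ≤ K := Finset.le_sup (f := fun p : ℕ × ℕ => p.1) hi
  have hnN : n ≤ N := Finset.le_sup (f := fun p : ℕ × ℕ => p.2) hi
  match n, hnN with
  | 0, hnN =>
    have h1 : P (k, 0) φ ≤ (2 ^ (k + 2) * Ik) * ((Finset.Iic (k + 2, 0)).sup P) ψ := by
      rw [hP, schwartzSeminormFamily_apply]
      exact zerocase k φ
    have hsub : Finset.Iic ((k + 2 : ℕ), (0 : ℕ)) ⊆ Finset.Iic (K + 2, N) :=
      Finset.Iic_subset_Iic.mpr (Prod.mk_le_mk.mpr ⟨by omega, by omega⟩)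
    have h2 : ((Finset.Iic ((k + 2 : ℕ), (0:ℕ))).sup P) ψ ≤ T :=
      Seminorm.le_def.mp (Finset.sup_mono hsub) ψ
    have h3 : (2:ℝ) ^ (k + 2) * Ik ≤ 2 ^ (K + 2) * Ik + 1 := by
      have : (2:ℝ) ^ (k + 2) ≤ 2 ^ (K + 2) :=
        pow_le_pow_right₀ one_le_two (by omega)
      nlinarith [Ik_nonneg]
    calc P (k, 0) φ ≤ (2 ^ (k + 2) * Ik) * ((Finset.Iic ((k+2:ℕ), (0:ℕ))).sup P) ψ := h1
      _ ≤ (2 ^ (K + 2) * Ik + 1) * T := by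
          apply mul_le_mul h3 h2 (apply_nonneg _ _) (by linarith)
  | (m + 1), hnN =>
    have h1 : P (k, m + 1) φ ≤ SchwartzMap.seminorm ℝ k m ψ := by
      rw [hP, schwartzSeminormFamily_apply]
      exact shift k m φ
    have hmem : ((k : ℕ), (m : ℕ)) ∈ Finset.Iic (K + 2, N) :=
      Finset.mem_Iic.mpr (Prod.mk_le_mk.mpr ⟨by omega, by omega⟩)
    have h2 : SchwartzMap.seminorm ℝ k m ψ ≤ T := by
      have h := Seminorm.le_def.mp (Finset.le_sup (f := P) hmem) ψ
      rwa [hP, schwartzSeminormFamily_apply] at h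
    calc P (k, m + 1) φ ≤ SchwartzMap.seminorm ℝ k m ψ := h1
      _ ≤ T := h2
      _ ≤ (2 ^ (K + 2) * Ik + 1) * T := le_mul_of_one_le_left hT0 hD1

lemma deriv_inj : Function.Injective
    ((derivCLM ℝ ℝ : SchwartzMap ℝ ℝ →L[ℝ] SchwartzMap ℝ ℝ).toLinearMap) := by
  have key : ∀ φ : SchwartzMap ℝ ℝ, derivCLM ℝ ℝ φ = 0 → φ = 0 := by
    intro φ h
    have hd : ∀ x, deriv φ x = 0 := by
      intro x
      have := congrArg (fun ψ : SchwartzMap ℝ ℝ => ψ x) h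
      simpa [derivCLM_apply] using this
    have hc : ∀ x : ℝ, φ x = φ 0 := fun x => is_const_of_deriv_eq_zero φ.differentiable hd x 0
    have h0 : φ 0 = 0 := by
      have h1 : Filter.Tendsto φ Filter.atTop (nhds (φ 0)) := by
        rw [show ⇑φ = fun _ : ℝ => φ 0 from funext hc]; exact tendsto_const_nhds
      exact tendsto_nhds_unique h1 (tendsto_top φ)
    ext x; rw [hc x, h0]; rfl
  intro a b hab
  have h : derivCLM ℝ ℝ (a - b) = 0 := by
    simp only [map_sub]
    rw [sub_eq_zero]; exact hab
  have := key _ h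
  rwa [sub_eq_zero] at this

end TemperedPrimitiveAux

open TemperedPrimitiveAux in
/-- Every tempered distribution `u` on `ℝ` has a tempered primitive: a tempered
distribution `v` with `v(φ') = -u(φ)` for every Schwartz `φ`, i.e. `v' = u`
distributionally. -/
theorem tempered_primitive_exists (u : TDist ℝ) :
    ∃ v : TDist ℝ, ∀ φ : SchwartzMap ℝ ℝ, v (SchwartzMap.derivCLM ℝ ℝ φ) = -(u φ) := by
  classical
  set P := schwartzSeminormFamily ℝ ℝ ℝ with hP
  set q : Seminorm ℝ (SchwartzMap ℝ ℝ) :=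
    (normSeminorm ℝ ℝ).comp (u : SchwartzMap ℝ ℝ →ₗ[ℝ] ℝ) with hq
  have hqc : Continuous q := by
    have h : ⇑q = fun φ => ‖u φ‖ := rfl
    rw [h]; exact u.continuous.norm
  obtain ⟨s, C, hC0, hC⟩ := Seminorm.bound_of_continuous (schwartz_withSeminorms ℝ ℝ ℝ) q hqc
  obtain ⟨F, D, hD0, hF⟩ := sup_bound s
  set DL := (derivCLM ℝ ℝ : SchwartzMap ℝ ℝ →L[ℝ] SchwartzMap ℝ ℝ).toLinearMap with hDL
  have hinj : Function.Injective DL := deriv_inj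
  set e := LinearEquiv.ofInjective DL hinj with he
  have hCD0 : (0:ℝ) ≤ (C : ℝ) * D := mul_nonneg C.2 hD0
  set Nfun : SchwartzMap ℝ ℝ → ℝ := fun χ => ((C : ℝ) * D) * (F.sup P) χ with hNfun
  have hub : ∀ φ : SchwartzMap ℝ ℝ, ‖u φ‖ ≤ (C : ℝ) * (s.sup P) φ := by
    intro φ
    have h := Seminorm.le_def.mp hC φ
    simpa [hq, NNReal.smul_def] using h
  have hkey : ∀ φ : SchwartzMap ℝ ℝ, ‖u φ‖ ≤ Nfun (DL φ) := by
    intro φ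
    refine (hub φ).trans ?_
    have h2 : (C : ℝ) * (s.sup P) φ ≤ (C : ℝ) * (D * (F.sup P) (derivCLM ℝ ℝ φ)) :=
      mul_le_mul_of_nonneg_left (hF φ) C.2
    calc (C : ℝ) * (s.sup P) φ ≤ (C : ℝ) * (D * (F.sup P) (derivCLM ℝ ℝ φ)) := h2
      _ = Nfun (DL φ) := by rw [hNfun]; ring_nf; rfl
  set f : SchwartzMap ℝ ℝ →ₗ.[ℝ] ℝ :=
    ⟨LinearMap.range DL, (-(u : SchwartzMap ℝ ℝ →ₗ[ℝ] ℝ)).comp e.symm.toLinearMap⟩ with hf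
  have hval : ∀ (φ : SchwartzMap ℝ ℝ) (h : DL φ ∈ LinearMap.range DL),
      f ⟨DL φ, h⟩ = -(u φ) := by
    intro φ h
    have hsymm : e.symm ⟨DL φ, h⟩ = φ := by
      apply e.injective
      rw [e.apply_symm_apply]
      exact Subtype.ext (LinearEquiv.ofInjective_apply DL φ).symm
    show (-(u : SchwartzMap ℝ ℝ →ₗ[ℝ] ℝ)).comp e.symm.toLinearMap ⟨DL φ, h⟩ = -(u φ)
    rw [LinearMap.comp_apply]
    simp [hsymm]
  have hfle : ∀ x : f.domain, f x ≤ Nfun x := by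
    rintro ⟨x, hx⟩
    obtain ⟨φ, rfl⟩ := hx
    refine (le_of_eq (hval φ ⟨φ, rfl⟩)).trans ?_
    calc -(u φ) ≤ |u φ| := neg_le_abs _
      _ = ‖u φ‖ := (Real.norm_eq_abs _).symm
      _ ≤ Nfun (DL φ) := hkey φ
  have N_hom : ∀ c : ℝ, 0 < c → ∀ x, Nfun (c • x) = c * Nfun x := by
    intro c hc x
    rw [hNfun]
    simp only [map_smul_eq_mul, Real.norm_eq_abs, abs_of_pos hc]
    ring
  have N_add : ∀ x y, Nfun (x + y) ≤ Nfun x + Nfun y := by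
    intro x y
    rw [hNfun]
    simp only
    have := map_add_le_add (F.sup P) x y
    nlinarith [hCD0]
  obtain ⟨g, hg_eq, hg_le⟩ := exists_extension_of_le_sublinear f Nfun N_hom N_add hfle
  have habs : ∀ x, ‖g x‖ ≤ ((C : ℝ) * D) * (F.sup P) x := by
    intro x
    rw [Real.norm_eq_abs, abs_le]
    constructor
    · have h1 := hg_le (-x)
      rw [map_neg] at h1
      have h2 : Nfun (-x) = Nfun x := by rw [hNfun]; simp
      have h3 : Nfun x = (C : ℝ) * D * (F.sup P) x := rfl
      linarith
    · exact hg_le x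
  set CD : NNReal := ⟨(C : ℝ) * D, hCD0⟩ with hCD
  have cont : Continuous g := by
    apply Seminorm.cont_withSeminorms_normedSpace ℝ (schwartz_withSeminorms ℝ ℝ ℝ) g
    refine ⟨F, CD, Seminorm.le_def.mpr fun x => ?_⟩
    have h := habs x
    exact h
  refine ⟨{ toLinearMap := g, cont := cont }, fun φ => ?_⟩
  have h1 : ({ toLinearMap := g, cont := cont } : TDist ℝ) (derivCLM ℝ ℝ φ) = g (DL φ) := rfl
  rw [h1, hg_eq ⟨DL φ, ⟨φ, rfl⟩⟩]
  exact hval φ ⟨φ, rfl⟩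
end
end

section
/- Let a ∈ ℝ and let u be a tempered distribution on ℝ supported in the half-line [a, ∞). Then u has a tempered primitive with the same support constraint: there exists a tempered distribution v on ℝ, supported in [a, ∞), such that v(φ′) = −u(φ) for every Schwartz function φ on ℝ. -/
open MeasureTheory SchwartzMap

noncomputable section

namespace TPrimAux

open Filter Set Real

/-- A smooth compactly supported function as a Schwartz map. -/
def ofCompactSupport (f : ℝ → ℝ) (hf : ContDiff ℝ ((⊤ : ℕ∞) : WithTop ℕ∞) f)
    (hsupp : HasCompactSupport f) : SchwartzMap ℝ ℝ where
  toFun := f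
  smooth' := hf
  decay' := by
    intro k n
    have h1 : HasCompactSupport fun x : ℝ => ‖x‖ ^ k * ‖iteratedFDeriv ℝ n f x‖ := by
      apply HasCompactSupport.intro (hsupp.iteratedFDeriv (𝕜 := ℝ) n)
      intro x hx
      have : iteratedFDeriv ℝ n f x = 0 := image_eq_zero_of_notMem_tsupport hx
      simp [this]
    have h2 : Continuous fun x : ℝ => ‖x‖ ^ k * ‖iteratedFDeriv ℝ n f x‖ :=
      (continuous_norm.pow k).mul
        ((hf.continuous_iteratedFDeriv (by exact_mod_cast le_top)).norm)
    obtain ⟨C, hC⟩ := h1.exists_bound_of_continuous h2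
    refine ⟨C, fun x => ?_⟩
    calc ‖x‖ ^ k * ‖iteratedFDeriv ℝ n f x‖
        ≤ ‖‖x‖ ^ k * ‖iteratedFDeriv ℝ n f x‖‖ := le_abs_self _
      _ ≤ C := hC x

/-- The bump function centered at `a - 2` with outer radius 1. -/
def bumpA (a : ℝ) : ContDiffBump (a - 2) := ⟨1/2, 1, by norm_num, by norm_num⟩

/-- A Schwartz function with integral one supported in `(-∞, a-1)`. -/
def chi (a : ℝ) : SchwartzMap ℝ ℝ :=
  ofCompactSupport ((bumpA a).normed volume)
    ((bumpA a).contDiff_normed (n := ⊤)) ((bumpA a).hasCompactSupport_normed)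

lemma chi_int (a : ℝ) : ∫ x, chi a x = 1 := (bumpA a).integral_normed

lemma chi_eq_zero {a x : ℝ} (hx : a - 1 ≤ x) : chi a x = 0 := by
  have : x ∉ Function.support ((bumpA a).normed volume) := by
    rw [(bumpA a).support_normed_eq]
    intro h
    rw [Metric.mem_ball, Real.dist_eq] at h
    have : (bumpA a).rOut = 1 := rfl
    rw [this] at h
    have := abs_lt.mp h
    simp at this
    linarith [this.1, this.2]
  exact Function.notMem_support.mp this


/-! ### The primitive of a Schwartz function -/

lemma hasDerivAt_primitive (g : SchwartzMap ℝ ℝ) (x : ℝ) :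
    HasDerivAt (fun y => ∫ t in Set.Iic y, g t) (g x) x := by
  have hint : ∀ y : ℝ, IntegrableOn (⇑g) (Set.Iic y) := fun y => g.integrable.integrableOn
  have key : (fun y => ∫ t in Set.Iic y, g t)
      = fun y => (∫ t in Set.Iic (0:ℝ), g t) + ∫ t in (0:ℝ)..y, g t := by
    funext y
    rw [← intervalIntegral.integral_Iic_sub_Iic (hint 0) (hint y)]
    ring
  rw [key]
  exact (intervalIntegral.integral_hasDerivAt_right (g.integrable.intervalIntegrable)
    (g.continuous.stronglyMeasurableAtFilter _ _) g.continuous.continuousAt).const_add _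

lemma deriv_primitive (g : SchwartzMap ℝ ℝ) :
    deriv (fun y => ∫ t in Set.Iic y, g t) = ⇑g :=
  funext fun x => (hasDerivAt_primitive g x).deriv

lemma contDiff_primitive (g : SchwartzMap ℝ ℝ) :
    ContDiff ℝ ((⊤ : ℕ∞) : WithTop ℕ∞) (fun y => ∫ t in Set.Iic y, g t) := by
  rw [contDiff_infty_iff_deriv]
  exact ⟨fun x => (hasDerivAt_primitive g x).differentiableAt,
    by rw [deriv_primitive]; exact g.smooth ⊤⟩

lemma primitive_eq_neg_Ioi (g : SchwartzMap ℝ ℝ) (hg : ∫ t, g t = 0) (x : ℝ) :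
    ∫ t in Set.Iic x, g t = - ∫ t in Set.Ioi x, g t := by
  have := intervalIntegral.integral_Iic_add_Ioi (b := x) (f := ⇑g) (μ := volume)
    g.integrable.integrableOn g.integrable.integrableOn
  rw [hg] at this
  linarith

/-- pointwise decay bound from the sup seminorms -/
lemma pointwise_bound (g : SchwartzMap ℝ ℝ) (k : ℕ) (t : ℝ) :
    (1 + |t|) ^ (k + 2) * |g t| ≤
      2 ^ (k + 2) * (Finset.Iic (k + 2, 0)).sup (schwartzSeminormFamily ℝ ℝ ℝ) g := by
  have := one_add_le_sup_seminorm_apply (𝕜 := ℝ) (m := (k + 2, 0)) (k := k + 2) (n := 0)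
    le_rfl le_rfl g t
  simp only [norm_iteratedFDeriv_zero, Real.norm_eq_abs] at this
  exact this

/-- One-sided tail estimate. -/
lemma side_bound (g : SchwartzMap ℝ ℝ) (k : ℕ) (x : ℝ) (s : Set ℝ)
    (hs : MeasurableSet s) (hst : ∀ t ∈ s, |x| ≤ |t|) :
    ‖∫ t in s, g t‖ ≤ Real.pi * (2 ^ (k + 2) *
      (Finset.Iic (k + 2, 0)).sup (schwartzSeminormFamily ℝ ℝ ℝ) g) / (1 + |x|) ^ k := by
  set S : ℝ := (Finset.Iic (k + 2, 0)).sup (schwartzSeminormFamily ℝ ℝ ℝ) g with hS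
  have hS0 : 0 ≤ S := apply_nonneg _ _
  set M : ℝ := 2 ^ (k + 2) * S with hM
  have hM0 : 0 ≤ M := by positivity
  have hxpos : (0:ℝ) < (1 + |x|) ^ k := by positivity
  have hpt : ∀ t ∈ s, ‖g t‖ ≤ M / (1 + |x|) ^ k * (1 + t ^ 2)⁻¹ := by
    intro t ht
    have h1 : (1 + |x|) ^ k * (1 + t ^ 2) ≤ (1 + |t|) ^ (k + 2) := by
      have e1 : (1 + |x|) ^ k ≤ (1 + |t|) ^ k :=
        pow_le_pow_left₀ (by positivity) (by linarith [hst t ht]) k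
      have e2 : 1 + t ^ 2 ≤ (1 + |t|) ^ 2 := by
        have : (1 + |t|) ^ 2 = 1 + 2 * |t| + t ^ 2 := by
          rw [add_sq]; rw [sq_abs]; ring
        rw [this]
        have := abs_nonneg t
        linarith
      calc (1 + |x|) ^ k * (1 + t ^ 2) ≤ (1 + |t|) ^ k * (1 + |t|) ^ 2 := by
            apply mul_le_mul e1 e2 (by positivity) (by positivity)
        _ = (1 + |t|) ^ (k + 2) := by rw [← pow_add]
    have h2 : |g t| * ((1 + |x|) ^ k * (1 + t ^ 2)) ≤ M := by
      calc |g t| * ((1 + |x|) ^ k * (1 + t ^ 2)) ≤ |g t| * (1 + |t|) ^ (k + 2) := by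
            apply mul_le_mul_of_nonneg_left h1 (abs_nonneg _)
        _ = (1 + |t|) ^ (k + 2) * |g t| := by ring
        _ ≤ M := pointwise_bound g k t
    have hden : (0:ℝ) < (1 + |x|) ^ k * (1 + t ^ 2) := by positivity
    rw [Real.norm_eq_abs]
    have heq : M / (1 + |x|) ^ k * (1 + t ^ 2)⁻¹ = M / ((1 + |x|) ^ k * (1 + t ^ 2)) := by
      field_simp
    rw [heq, le_div_iff₀ hden]
    linarith [h2]
  calc ‖∫ t in s, g t‖ ≤ ∫ t in s, ‖g t‖ := norm_integral_le_integral_norm _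
    _ ≤ ∫ t in s, M / (1 + |x|) ^ k * (1 + t ^ 2)⁻¹ := by
        apply setIntegral_mono_on g.integrable.norm.integrableOn
          ((integrable_inv_one_add_sq.const_mul _).integrableOn) hs hpt
    _ = M / (1 + |x|) ^ k * ∫ t in s, (1 + t ^ 2)⁻¹ := by rw [integral_const_mul]
    _ ≤ M / (1 + |x|) ^ k * ∫ t : ℝ, (1 + t ^ 2)⁻¹ := by
        apply mul_le_mul_of_nonneg_left _ (by positivity)
        apply setIntegral_le_integral integrable_inv_one_add_sq
        filter_upwards with t using by positivity
    _ = Real.pi * M / (1 + |x|) ^ k := by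
        rw [integral_univ_inv_one_add_sq]; ring

/-- tail bound for the primitive -/
lemma tail_bound (g : SchwartzMap ℝ ℝ) (hg : ∫ t, g t = 0) (k : ℕ) (x : ℝ) :
    ‖x‖ ^ k * ‖∫ t in Set.Iic x, g t‖ ≤ Real.pi * (2 ^ (k + 2) *
      (Finset.Iic (k + 2, 0)).sup (schwartzSeminormFamily ℝ ℝ ℝ) g) := by
  set S : ℝ := (Finset.Iic (k + 2, 0)).sup (schwartzSeminormFamily ℝ ℝ ℝ) g with hS
  have hS0 : 0 ≤ S := apply_nonneg _ _
  have key : ‖∫ t in Set.Iic x, g t‖ ≤ Real.pi * (2 ^ (k + 2) * S) / (1 + |x|) ^ k := by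
    rcases le_total x 0 with hx | hx
    · apply side_bound g k x _ measurableSet_Iic
      intro t ht
      simp only [Set.mem_Iic] at ht
      rw [abs_of_nonpos hx, abs_of_nonpos (ht.trans hx)]
      linarith
    · rw [primitive_eq_neg_Ioi g hg x, norm_neg]
      apply side_bound g k x _ measurableSet_Ioi
      intro t ht
      simp only [Set.mem_Ioi] at ht
      rw [abs_of_nonneg hx, abs_of_nonneg (hx.trans ht.le)]
      linarith
  have hxk : ‖x‖ ^ k ≤ (1 + |x|) ^ k :=
    pow_le_pow_left₀ (norm_nonneg x) (by rw [Real.norm_eq_abs]; linarith [abs_nonneg x]) k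
  have hpos : (0:ℝ) < (1 + |x|) ^ k := by positivity
  calc ‖x‖ ^ k * ‖∫ t in Set.Iic x, g t‖
      ≤ (1 + |x|) ^ k * (Real.pi * (2 ^ (k + 2) * S) / (1 + |x|) ^ k) := by
        apply mul_le_mul hxk key (norm_nonneg _) (by positivity)
    _ = Real.pi * (2 ^ (k + 2) * S) := by field_simp


/-! ### Bounding the integral by seminorms -/

def intPow : ℕ := (volume : Measure ℝ).integrablePower

def intConst : ℝ := 2 ^ intPow * (∫ x : ℝ, (1 + ‖x‖) ^ (-(intPow : ℝ))) * 2

lemma intConst_nonneg : 0 ≤ intConst := by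
  have hI : 0 ≤ ∫ x : ℝ, (1 + ‖x‖) ^ (-(intPow : ℝ)) :=
    integral_nonneg fun x => Real.rpow_nonneg (by positivity) _
  unfold intConst
  positivity

lemma abs_integral_le (f : SchwartzMap ℝ ℝ) :
    |∫ x, f x| ≤ intConst * (Finset.Iic (intPow, 0)).sup (schwartzSeminormFamily ℝ ℝ ℝ) f := by
  have hI : 0 ≤ ∫ x : ℝ, (1 + ‖x‖) ^ (-(intPow : ℝ)) :=
    integral_nonneg fun x => Real.rpow_nonneg (by positivity) _
  have hsup0 : SchwartzMap.seminorm ℝ 0 0 f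
      ≤ (Finset.Iic (intPow, 0)).sup (schwartzSeminormFamily ℝ ℝ ℝ) f := by
    have : schwartzSeminormFamily ℝ ℝ ℝ (0, 0) ≤
        (Finset.Iic (intPow, 0)).sup (schwartzSeminormFamily ℝ ℝ ℝ) :=
      Finset.le_sup (by simp)
    exact this f
  have hsupP : SchwartzMap.seminorm ℝ intPow 0 f
      ≤ (Finset.Iic (intPow, 0)).sup (schwartzSeminormFamily ℝ ℝ ℝ) f := by
    have : schwartzSeminormFamily ℝ ℝ ℝ (intPow, 0) ≤
        (Finset.Iic (intPow, 0)).sup (schwartzSeminormFamily ℝ ℝ ℝ) :=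
      Finset.le_sup (by simp)
    exact this f
  calc |∫ x, f x| ≤ ∫ x, ‖f x‖ := by
        rw [← Real.norm_eq_abs]; exact norm_integral_le_integral_norm _
    _ = ∫ x, ‖x‖ ^ 0 * ‖iteratedFDeriv ℝ 0 (⇑f) x‖ := by simp
    _ ≤ (2 ^ intPow * ∫ x : ℝ, (1 + ‖x‖) ^ (-(intPow : ℝ))) *
        (SchwartzMap.seminorm ℝ 0 0 f + SchwartzMap.seminorm ℝ (0 + intPow) 0 f) :=
        integral_pow_mul_iteratedFDeriv_le ℝ volume f 0 0
    _ ≤ (2 ^ intPow * ∫ x : ℝ, (1 + ‖x‖) ^ (-(intPow : ℝ))) *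
        (2 * (Finset.Iic (intPow, 0)).sup (schwartzSeminormFamily ℝ ℝ ℝ) f) := by
        have h0 : (0:ℝ) ≤ 2 ^ intPow * ∫ x : ℝ, (1 + ‖x‖) ^ (-(intPow : ℝ)) := by
          have hI : 0 ≤ ∫ x : ℝ, (1 + ‖x‖) ^ (-(intPow : ℝ)) :=
            integral_nonneg fun x => Real.rpow_nonneg (by positivity) _
          positivity
        apply mul_le_mul_of_nonneg_left _ h0
        rw [zero_add]
        linarith
    _ = intConst * (Finset.Iic (intPow, 0)).sup (schwartzSeminormFamily ℝ ℝ ℝ) f := by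
        unfold intConst; ring

/-! ### The primitive operator -/

/-- Modified Schwartz function with integral zero. -/
def P (a : ℝ) (f : SchwartzMap ℝ ℝ) : SchwartzMap ℝ ℝ := f - (∫ x, f x) • chi a

lemma P_apply (a : ℝ) (f : SchwartzMap ℝ ℝ) (t : ℝ) :
    P a f t = f t - (∫ x, f x) * chi a t := by
  simp [P, SchwartzMap.sub_apply, SchwartzMap.smul_apply, smul_eq_mul]

lemma P_int_zero (a : ℝ) (f : SchwartzMap ℝ ℝ) : ∫ t, P a f t = 0 := by
  have hcoe : ⇑(P a f) = fun t => f t - (∫ x, f x) * chi a t := funext (P_apply a f)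
  rw [hcoe, integral_sub f.integrable ((chi a).integrable.const_mul _),
    integral_const_mul, chi_int]
  ring

lemma A_eq (a : ℝ) (f : SchwartzMap ℝ ℝ) :
    (fun x => ∫ t in Set.Iic x, (f t - (∫ s, f s) * chi a t))
      = fun x => ∫ t in Set.Iic x, P a f t := by
  funext x
  simp only [P_apply]

lemma seminorm_P_le (a : ℝ) (f : SchwartzMap ℝ ℝ) (Q : Seminorm ℝ (SchwartzMap ℝ ℝ)) :
    Q (P a f) ≤ Q f + |∫ x, f x| * Q (chi a) := by
  calc Q (P a f) ≤ Q f + Q ((∫ x, f x) • chi a) := map_sub_le_add Q f _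
    _ = Q f + |∫ x, f x| * Q (chi a) := by
        rw [map_smul_eq_mul]; rfl

lemma sup_mono_apply {s t : Finset (ℕ × ℕ)} (h : s ⊆ t) (f : SchwartzMap ℝ ℝ) :
    (s.sup (schwartzSeminormFamily ℝ ℝ ℝ)) f ≤ (t.sup (schwartzSeminormFamily ℝ ℝ ℝ)) f :=
  Seminorm.le_def.mp (Finset.sup_mono h) f

lemma le_sup_apply {m : ℕ × ℕ} {s : Finset (ℕ × ℕ)} (h : m ∈ s) (f : SchwartzMap ℝ ℝ) :
    (schwartzSeminormFamily ℝ ℝ ℝ m) f ≤ (s.sup (schwartzSeminormFamily ℝ ℝ ℝ)) f :=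
  Seminorm.le_def.mp (Finset.le_sup h) f

/-- The primitive operator as a continuous linear map on Schwartz space. -/
def primCLM (a : ℝ) : SchwartzMap ℝ ℝ →L[ℝ] SchwartzMap ℝ ℝ :=
  mkCLM (fun f x => ∫ t in Set.Iic x, (f t - (∫ s, f s) * chi a t))
    (fun f g x => by
      simp only [SchwartzMap.add_apply]
      rw [integral_add f.integrable g.integrable]
      have h2 : ∀ t : ℝ, f t + g t - ((∫ s, f s) + ∫ s, g s) * chi a t
          = (f t - (∫ s, f s) * chi a t) + (g t - (∫ s, g s) * chi a t) :=
        fun t => by ring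
      simp only [h2]
      exact integral_add
        ((f.integrable.sub ((chi a).integrable.const_mul _)).integrableOn)
        ((g.integrable.sub ((chi a).integrable.const_mul _)).integrableOn))
    (fun c f x => by
      simp only [SchwartzMap.smul_apply, smul_eq_mul, integral_const_mul]
      have h2 : ∀ t : ℝ, c * f t - c * (∫ s, f s) * chi a t
          = c * (f t - (∫ s, f s) * chi a t) := fun t => by ring
      simp only [h2]
      rw [integral_const_mul]
      simp [smul_eq_mul])
    (fun f => by
      have h := contDiff_primitive (P a f)
      rw [← A_eq a f] at h
      exact h)
    (by
      rintro ⟨k, n⟩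
      match n with
      | 0 =>
        have hC : (0:ℝ) ≤ Real.pi * 2 ^ (k + 2) *
            (1 + intConst * (Finset.Iic (k + 2, 0)).sup (schwartzSeminormFamily ℝ ℝ ℝ) (chi a)) :=
          mul_nonneg (mul_nonneg Real.pi_pos.le (by positivity))
            (add_nonneg zero_le_one (mul_nonneg intConst_nonneg (apply_nonneg _ _)))
        refine ⟨Finset.Iic (k + 2 + intPow, 0),
          Real.pi * 2 ^ (k + 2) *
            (1 + intConst * (Finset.Iic (k + 2, 0)).sup (schwartzSeminormFamily ℝ ℝ ℝ) (chi a)),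
          hC, fun f x => ?_⟩
        show ‖x‖ ^ k * ‖iteratedFDeriv ℝ 0
            (fun y => ∫ t in Set.Iic y, (f t - (∫ s, f s) * chi a t)) x‖ ≤ _
        rw [A_eq a f, norm_iteratedFDeriv_zero]
        set SUP := (Finset.Iic (k + 2 + intPow, 0)).sup (schwartzSeminormFamily ℝ ℝ ℝ) f with hSUP
        set Q := (Finset.Iic (k + 2, 0)).sup (schwartzSeminormFamily ℝ ℝ ℝ) with hQdef
        set Qχ := Q (chi a) with hQχ
        have hQχ0 : 0 ≤ Qχ := apply_nonneg _ _
        have hSUP0 : 0 ≤ SUP := apply_nonneg _ _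
        have h1 := tail_bound (P a f) (P_int_zero a f) k x
        have hQf : Q f ≤ SUP :=
          sup_mono_apply (Finset.Iic_subset_Iic.mpr (Prod.mk_le_mk.mpr ⟨by omega, le_rfl⟩)) f
        have hIf : |∫ s, f s| ≤ intConst * SUP := by
          refine (abs_integral_le f).trans (mul_le_mul_of_nonneg_left ?_ intConst_nonneg)
          exact sup_mono_apply (Finset.Iic_subset_Iic.mpr (Prod.mk_le_mk.mpr ⟨by omega, le_rfl⟩)) f
        calc ‖x‖ ^ k * ‖∫ t in Set.Iic x, P a f t‖
            ≤ Real.pi * (2 ^ (k + 2) * Q (P a f)) := h1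
          _ ≤ Real.pi * (2 ^ (k + 2) * (SUP + intConst * SUP * Qχ)) := by
              apply mul_le_mul_of_nonneg_left _ Real.pi_pos.le
              apply mul_le_mul_of_nonneg_left _ (by positivity)
              calc Q (P a f) ≤ Q f + |∫ s, f s| * Qχ := seminorm_P_le a f Q
                _ ≤ SUP + intConst * SUP * Qχ :=
                    add_le_add hQf (mul_le_mul_of_nonneg_right hIf hQχ0)
          _ = Real.pi * 2 ^ (k + 2) * (1 + intConst * Qχ) * SUP := by ring
      | Nat.succ m =>
        have hC : (0:ℝ) ≤ 1 + intConst * SchwartzMap.seminorm ℝ k m (chi a) :=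
          add_nonneg zero_le_one (mul_nonneg intConst_nonneg (apply_nonneg _ _))
        refine ⟨Finset.Iic (k + 2 + intPow, m + 1),
          1 + intConst * SchwartzMap.seminorm ℝ k m (chi a),
          hC, fun f x => ?_⟩
        show ‖x‖ ^ k * ‖iteratedFDeriv ℝ (m + 1)
            (fun y => ∫ t in Set.Iic y, (f t - (∫ s, f s) * chi a t)) x‖ ≤ _
        rw [A_eq a f, norm_iteratedFDeriv_eq_norm_iteratedDeriv, iteratedDeriv_succ',
          deriv_primitive (P a f), ← norm_iteratedFDeriv_eq_norm_iteratedDeriv]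
        set SUP := (Finset.Iic (k + 2 + intPow, m + 1)).sup (schwartzSeminormFamily ℝ ℝ ℝ) f
          with hSUP
        have hSUP0 : 0 ≤ SUP := apply_nonneg _ _
        set sχ := SchwartzMap.seminorm ℝ k m (chi a) with hsχ
        have hsχ0 : 0 ≤ sχ := apply_nonneg _ _
        have hf1 : SchwartzMap.seminorm ℝ k m f ≤ SUP :=
          le_sup_apply (Finset.mem_Iic.mpr (Prod.mk_le_mk.mpr ⟨by omega, by omega⟩)) f
        have hIf : |∫ s, f s| ≤ intConst * SUP := by
          refine (abs_integral_le f).trans (mul_le_mul_of_nonneg_left ?_ intConst_nonneg)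
          exact sup_mono_apply
            (Finset.Iic_subset_Iic.mpr (Prod.mk_le_mk.mpr ⟨by omega, by omega⟩)) f
        calc ‖x‖ ^ k * ‖iteratedFDeriv ℝ m (⇑(P a f)) x‖
            ≤ SchwartzMap.seminorm ℝ k m (P a f) := SchwartzMap.le_seminorm ℝ k m (P a f) x
          _ ≤ SchwartzMap.seminorm ℝ k m f + |∫ s, f s| * sχ :=
              seminorm_P_le a f (SchwartzMap.seminorm ℝ k m)
          _ ≤ SUP + intConst * SUP * sχ :=
              add_le_add hf1 (mul_le_mul_of_nonneg_right hIf hsχ0)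
          _ = (1 + intConst * sχ) * SUP := by ring)


lemma primCLM_apply (a : ℝ) (f : SchwartzMap ℝ ℝ) (x : ℝ) :
    primCLM a f x = ∫ t in Set.Iic x, (f t - (∫ s, f s) * chi a t) := rfl

/-! ### FTC facts for Schwartz functions -/

lemma tendsto_atBot_schwartz (φ : SchwartzMap ℝ ℝ) : Filter.Tendsto ⇑φ Filter.atBot (nhds 0) :=
  (zero_at_infty φ.toZeroAtInfty).mono_left _root_.atBot_le_cocompact

lemma tendsto_atTop_schwartz (φ : SchwartzMap ℝ ℝ) : Filter.Tendsto ⇑φ Filter.atTop (nhds 0) :=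
  (zero_at_infty φ.toZeroAtInfty).mono_left _root_.atTop_le_cocompact

lemma deriv_coe (φ : SchwartzMap ℝ ℝ) : ⇑(derivCLM ℝ ℝ φ) = deriv ⇑φ :=
  funext fun t => derivCLM_apply ℝ φ t

lemma integrable_deriv (φ : SchwartzMap ℝ ℝ) : Integrable (deriv ⇑φ) := by
  rw [← deriv_coe]; exact (derivCLM ℝ ℝ φ).integrable

lemma integral_Iic_deriv (φ : SchwartzMap ℝ ℝ) (x : ℝ) :
    ∫ t in Set.Iic x, deriv φ t = φ x := by
  have h := integral_Iic_of_hasDerivAt_of_tendsto' (a := x) (f := ⇑φ) (f' := deriv ⇑φ)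
    (fun t _ => (φ.smooth ⊤).differentiable (by simp) t |>.hasDerivAt)
    (integrable_deriv φ).integrableOn (tendsto_atBot_schwartz φ)
  simpa using h

lemma integral_Ioi_deriv (φ : SchwartzMap ℝ ℝ) (x : ℝ) :
    ∫ t in Set.Ioi x, deriv φ t = -φ x := by
  have h := integral_Ioi_of_hasDerivAt_of_tendsto' (a := x) (f := ⇑φ) (f' := deriv ⇑φ)
    (fun t _ => (φ.smooth ⊤).differentiable (by simp) t |>.hasDerivAt)
    (integrable_deriv φ).integrableOn (tendsto_atTop_schwartz φ)
  simpa using h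

lemma integral_deriv_zero (φ : SchwartzMap ℝ ℝ) : ∫ t, deriv ⇑φ t = 0 := by
  have h := intervalIntegral.integral_Iic_add_Ioi (b := (0:ℝ)) (f := deriv ⇑φ) (μ := volume)
    (integrable_deriv φ).integrableOn (integrable_deriv φ).integrableOn
  rw [integral_Iic_deriv, integral_Ioi_deriv] at h
  linarith

lemma primCLM_deriv (a : ℝ) (φ : SchwartzMap ℝ ℝ) :
    primCLM a (derivCLM ℝ ℝ φ) = φ := by
  ext x
  rw [primCLM_apply]
  have hcoe := deriv_coe φ
  calc ∫ t in Set.Iic x, ((derivCLM ℝ ℝ φ) t - (∫ s, (derivCLM ℝ ℝ φ) s) * chi a t)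
      = ∫ t in Set.Iic x, deriv ⇑φ t := by
        rw [hcoe, integral_deriv_zero]
        simp
    _ = φ x := integral_Iic_deriv φ x

lemma primCLM_eq_zero (a : ℝ) (f : SchwartzMap ℝ ℝ)
    (hf : Disjoint (tsupport f) (Set.Ici a)) {x : ℝ} (hx : a ≤ x) :
    primCLM a f x = 0 := by
  rw [primCLM_apply]
  have h0 : (∫ t in Set.Iic x, (f t - (∫ s, f s) * chi a t))
      = ∫ t in Set.Iic x, P a f t := by simp only [P_apply]
  rw [h0, primitive_eq_neg_Ioi (P a f) (P_int_zero a f) x, neg_eq_zero]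
  apply setIntegral_eq_zero_of_forall_eq_zero
  intro t ht
  have htx : x < t := Set.mem_Ioi.mp ht
  have hft : f t = 0 := by
    apply image_eq_zero_of_notMem_tsupport
    intro hmem
    exact Set.disjoint_left.mp hf hmem (Set.mem_Ici.mpr (by linarith))
  have hχt : chi a t = 0 := chi_eq_zero (by linarith)
  rw [P_apply, hft, hχt]
  ring

/-! ### Translation -/

/-- Translation of a Schwartz function. -/
def translate (g : SchwartzMap ℝ ℝ) (ε : ℝ) : SchwartzMap ℝ ℝ where
  toFun x := g (x + ε)
  smooth' := (g.smooth ⊤).comp (contDiff_id.add contDiff_const)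
  decay' := by
    intro k n
    refine ⟨(1 + |ε|) ^ k *
      (2 ^ k * (Finset.Iic (k, n)).sup (schwartzSeminormFamily ℝ ℝ ℝ) g), fun x => ?_⟩
    have hIt : iteratedDeriv n (fun y => g (y + ε)) x = iteratedDeriv n (⇑g) (x + ε) :=
      congrFun (iteratedDeriv_comp_add_const n (⇑g) ε) x
    rw [norm_iteratedFDeriv_eq_norm_iteratedDeriv, hIt,
      ← norm_iteratedFDeriv_eq_norm_iteratedDeriv]
    have h1 : ‖x‖ ≤ (1 + |ε|) * (1 + ‖x + ε‖) := by
      have h2 : ‖x‖ ≤ ‖x + ε‖ + |ε| := by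
        have := abs_sub_abs_le_abs_sub (x + ε) ε
        rw [Real.norm_eq_abs, Real.norm_eq_abs]
        have h3 : |x| - |ε| ≤ |x + ε| := by
          have := abs_sub_abs_le_abs_sub x (-ε)
          simp only [abs_neg, sub_neg_eq_add] at this
          linarith
        linarith
      nlinarith [abs_nonneg ε, norm_nonneg (x + ε)]
    calc ‖x‖ ^ k * ‖iteratedFDeriv ℝ n (⇑g) (x + ε)‖
        ≤ ((1 + |ε|) * (1 + ‖x + ε‖)) ^ k * ‖iteratedFDeriv ℝ n (⇑g) (x + ε)‖ :=
          mul_le_mul_of_nonneg_right (pow_le_pow_left₀ (norm_nonneg x) h1 k) (norm_nonneg _)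
      _ = (1 + |ε|) ^ k * ((1 + ‖x + ε‖) ^ k * ‖iteratedFDeriv ℝ n (⇑g) (x + ε)‖) := by
          rw [mul_pow]; ring
      _ ≤ (1 + |ε|) ^ k *
          (2 ^ k * (Finset.Iic (k, n)).sup (schwartzSeminormFamily ℝ ℝ ℝ) g) :=
          mul_le_mul_of_nonneg_left
            (one_add_le_sup_seminorm_apply (m := (k, n)) le_rfl le_rfl g (x + ε))
            (by positivity)

lemma translate_apply (g : SchwartzMap ℝ ℝ) (ε x : ℝ) : translate g ε x = g (x + ε) := rfl

lemma seminorm_sub_translate (g : SchwartzMap ℝ ℝ) (k n : ℕ) {ε : ℝ}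
    (hε0 : 0 < ε) (hε1 : ε ≤ 1) :
    SchwartzMap.seminorm ℝ k n (g - translate g ε)
      ≤ ε * (4 ^ k * (2 ^ k * (Finset.Iic (k, n + 1)).sup (schwartzSeminormFamily ℝ ℝ ℝ) g)) := by
  set S : ℝ := (Finset.Iic (k, n + 1)).sup (schwartzSeminormFamily ℝ ℝ ℝ) g with hSdef
  have hS0 : 0 ≤ S := apply_nonneg _ _
  apply SchwartzMap.seminorm_le_bound ℝ k n _ (by positivity)
  intro x
  have hgsmooth : ∀ m : ℕ, ContDiff ℝ (m : WithTop ℕ∞) ⇑g :=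
    fun m => (g.smooth ⊤).of_le (by exact_mod_cast le_top)
  have htsmooth : ContDiff ℝ (n : WithTop ℕ∞) ⇑(translate g ε) :=
    ((translate g ε).smooth ⊤).of_le (by exact_mod_cast le_top)
  have hcoe : ⇑(g - translate g ε) = ⇑g - ⇑(translate g ε) := rfl
  rw [hcoe, norm_iteratedFDeriv_eq_norm_iteratedDeriv]
  have hsub : iteratedDeriv n (⇑g - ⇑(translate g ε)) x
      = iteratedDeriv n ⇑g x - iteratedDeriv n ⇑(translate g ε) x := by
    rw [← iteratedDerivWithin_univ, ← iteratedDerivWithin_univ (f := ⇑g),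
      ← iteratedDerivWithin_univ (f := ⇑(translate g ε))]
    exact iteratedDerivWithin_sub (Set.mem_univ x) uniqueDiffOn_univ
      (hgsmooth n).contDiffWithinAt htsmooth.contDiffWithinAt
  have htcoe : ⇑(translate g ε) = fun y => g (y + ε) := rfl
  have hIt : iteratedDeriv n ⇑(translate g ε) x = iteratedDeriv n ⇑g (x + ε) := by
    rw [htcoe]
    exact congrFun (iteratedDeriv_comp_add_const n (⇑g) ε) x
  rw [hsub, hIt]
  -- mean value theorem on [x, x+ε]
  have hdiff : Differentiable ℝ (iteratedDeriv n ⇑g) :=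
    (g.smooth ⊤).differentiable_iteratedDeriv n
      (lt_of_lt_of_le (Nat.cast_lt.mpr n.lt_succ_self) (by exact_mod_cast le_top))
  set B : ℝ := 2 ^ k * (2 ^ k * S) / (1 + ‖x‖) ^ k with hBdef
  have hden : (0:ℝ) < (1 + ‖x‖) ^ k := by positivity
  have hbd : ∀ t ∈ Set.Icc x (x + ε), ‖deriv (iteratedDeriv n ⇑g) t‖ ≤ B := by
    intro t ht
    rw [← iteratedDeriv_succ]
    have h1 : (1 + ‖t‖) ^ k * ‖iteratedDeriv (n + 1) (⇑g) t‖ ≤ 2 ^ k * S := by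
      rw [← norm_iteratedFDeriv_eq_norm_iteratedDeriv]
      exact one_add_le_sup_seminorm_apply (m := (k, n + 1)) le_rfl le_rfl g t
    have h2 : (1 + ‖x‖) ≤ 2 * (1 + ‖t‖) := by
      obtain ⟨h3, h4⟩ := ht
      rw [Real.norm_eq_abs, Real.norm_eq_abs]
      have h5 : |x| ≤ |t| + ε := by
        have h6 : |x - t| ≤ ε := abs_le.mpr ⟨by linarith, by linarith⟩
        have h7 := abs_sub_abs_le_abs_sub x t
        linarith
      linarith [abs_nonneg t]
    have h7 : (1 + ‖x‖) ^ k ≤ 2 ^ k * (1 + ‖t‖) ^ k := by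
      calc (1 + ‖x‖) ^ k ≤ (2 * (1 + ‖t‖)) ^ k := pow_le_pow_left₀ (by positivity) h2 k
        _ = 2 ^ k * (1 + ‖t‖) ^ k := mul_pow _ _ _
    rw [hBdef, le_div_iff₀ hden]
    have h8 : (0:ℝ) ≤ ‖iteratedDeriv (n + 1) (⇑g) t‖ := norm_nonneg _
    calc ‖iteratedDeriv (n + 1) (⇑g) t‖ * (1 + ‖x‖) ^ k
        ≤ ‖iteratedDeriv (n + 1) (⇑g) t‖ * (2 ^ k * (1 + ‖t‖) ^ k) :=
          mul_le_mul_of_nonneg_left h7 h8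
      _ = 2 ^ k * ((1 + ‖t‖) ^ k * ‖iteratedDeriv (n + 1) (⇑g) t‖) := by ring
      _ ≤ 2 ^ k * (2 ^ k * S) := mul_le_mul_of_nonneg_left h1 (by positivity)
  have hmvt : ‖iteratedDeriv n ⇑g (x + ε) - iteratedDeriv n ⇑g x‖ ≤ B * ε := by
    have := Convex.norm_image_sub_le_of_norm_deriv_le
      (fun t _ => hdiff t) hbd (convex_Icc x (x + ε))
      (Set.left_mem_Icc.mpr (by linarith)) (Set.right_mem_Icc.mpr (by linarith))
    calc ‖iteratedDeriv n ⇑g (x + ε) - iteratedDeriv n ⇑g x‖ ≤ B * ‖x + ε - x‖ := this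
      _ = B * ε := by rw [show x + ε - x = ε by ring, Real.norm_eq_abs, abs_of_pos hε0]
  have hB0 : 0 ≤ B := by positivity
  calc ‖x‖ ^ k * ‖iteratedDeriv n ⇑g x - iteratedDeriv n ⇑g (x + ε)‖
      = ‖x‖ ^ k * ‖iteratedDeriv n ⇑g (x + ε) - iteratedDeriv n ⇑g x‖ := by rw [norm_sub_rev]
    _ ≤ ‖x‖ ^ k * (B * ε) := mul_le_mul_of_nonneg_left hmvt (by positivity)
    _ = ε * (2 ^ k * (2 ^ k * S)) * (‖x‖ ^ k / (1 + ‖x‖) ^ k) := by rw [hBdef]; ring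
    _ ≤ ε * (2 ^ k * (2 ^ k * S)) * 1 := by
        apply mul_le_mul_of_nonneg_left _ (by positivity)
        rw [div_le_one hden]
        exact pow_le_pow_left₀ (norm_nonneg x) (by linarith [norm_nonneg x]) k
    _ ≤ ε * (4 ^ k * (2 ^ k * S)) := by
        rw [mul_one]
        have h4k : (4:ℝ) ^ k = 2 ^ k * 2 ^ k := by rw [← mul_pow]; norm_num
        have h2k : (1:ℝ) ≤ 2 ^ k := one_le_pow₀ (by norm_num)
        rw [h4k]
        have hP : (0:ℝ) ≤ 2 ^ k := pow_nonneg (by norm_num) k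
        nlinarith [mul_nonneg (mul_nonneg hε0.le hP) (mul_nonneg hP hS0),
          mul_nonneg hP hS0, mul_nonneg hε0.le (mul_nonneg hP (mul_nonneg hP hS0))]


/-! ### Distributions weakly supported in `[a, ∞)` kill functions vanishing on `[a, ∞)` -/

lemma vanish (a : ℝ) (u : TDist ℝ) (hu : SuppIn u (Set.Ici a))
    (g : SchwartzMap ℝ ℝ) (hg : ∀ x, a ≤ x → g x = 0) : u g = 0 := by
  classical
  -- the seminorm `f ↦ ‖u f‖` is continuous, hence bounded by finitely many Schwartz seminorms
  set q : Seminorm ℝ (SchwartzMap ℝ ℝ) := (normSeminorm ℝ ℝ).comp (u : SchwartzMap ℝ ℝ →ₗ[ℝ] ℝ)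
    with hqdef
  have hq_apply : ∀ f, q f = ‖u f‖ := fun f => rfl
  have hq : Continuous q := by
    have : (⇑q : SchwartzMap ℝ ℝ → ℝ) = fun f => ‖u f‖ := rfl
    rw [show Continuous ⇑q ↔ Continuous fun f => ‖u f‖ from this ▸ Iff.rfl]
    exact u.cont.norm
  obtain ⟨s, C, hC, hub⟩ := Seminorm.bound_of_continuous (schwartz_withSeminorms ℝ ℝ ℝ) q hq
  set M : ℝ := ∑ kn ∈ s, 4 ^ kn.1 *
    (2 ^ kn.1 * (Finset.Iic (kn.1, kn.2 + 1)).sup (schwartzSeminormFamily ℝ ℝ ℝ) g) with hMdef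
  have hM0 : 0 ≤ M := Finset.sum_nonneg fun kn _ => by
    have := apply_nonneg ((Finset.Iic (kn.1, kn.2 + 1)).sup (schwartzSeminormFamily ℝ ℝ ℝ)) g
    positivity
  have key : ∀ ε : ℝ, 0 < ε → ε ≤ 1 → ‖u g‖ ≤ C * (ε * M) := by
    intro ε h0 h1
    have hzero : u (translate g ε) = 0 := by
      apply hu
      apply Set.disjoint_left.mpr
      intro x hx hxa
      have hsupp : tsupport (translate g ε) ⊆ Set.Iic (a - ε) := by
        apply closure_minimal _ isClosed_Iic
        intro y hy
        rw [Set.mem_Iic]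
        by_contra hy'
        push_neg at hy'
        exact Function.mem_support.mp hy (by
          rw [translate_apply]
          exact hg (y + ε) (by linarith))
      have := hsupp hx
      rw [Set.mem_Iic] at this
      rw [Set.mem_Ici] at hxa
      linarith
    have heq : u g = u (g - translate g ε) := by rw [map_sub, hzero, sub_zero]
    rw [heq]
    have h2 : ‖u (g - translate g ε)‖
        ≤ C * (s.sup (schwartzSeminormFamily ℝ ℝ ℝ)) (g - translate g ε) := by
      have h3 := Seminorm.le_def.mp hub (g - translate g ε)
      rw [hq_apply] at h3
      simpa [NNReal.smul_def] using h3
    have h3 : (s.sup (schwartzSeminormFamily ℝ ℝ ℝ)) (g - translate g ε) ≤ ε * M := by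
      apply Seminorm.finset_sup_apply_le (by positivity)
      intro kn hkn
      have h4 := seminorm_sub_translate g kn.1 kn.2 h0 h1
      have h5 : (4:ℝ) ^ kn.1 *
          (2 ^ kn.1 * (Finset.Iic (kn.1, kn.2 + 1)).sup (schwartzSeminormFamily ℝ ℝ ℝ) g)
          ≤ M := by
        apply Finset.single_le_sum (f := fun kn : ℕ × ℕ => (4:ℝ) ^ kn.1 *
          (2 ^ kn.1 * (Finset.Iic (kn.1, kn.2 + 1)).sup (schwartzSeminormFamily ℝ ℝ ℝ) g))
          _ hkn
        intro i _
        have := apply_nonneg ((Finset.Iic (i.1, i.2 + 1)).sup (schwartzSeminormFamily ℝ ℝ ℝ)) g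
        positivity
      calc (schwartzSeminormFamily ℝ ℝ ℝ kn) (g - translate g ε)
          = SchwartzMap.seminorm ℝ kn.1 kn.2 (g - translate g ε) := rfl
        _ ≤ ε * (4 ^ kn.1 *
            (2 ^ kn.1 * (Finset.Iic (kn.1, kn.2 + 1)).sup (schwartzSeminormFamily ℝ ℝ ℝ) g)) :=
            h4
        _ ≤ ε * M := mul_le_mul_of_nonneg_left h5 h0.le
    calc ‖u (g - translate g ε)‖
        ≤ C * (s.sup (schwartzSeminormFamily ℝ ℝ ℝ)) (g - translate g ε) := h2
      _ ≤ C * (ε * M) := mul_le_mul_of_nonneg_left h3 C.coe_nonneg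
  -- conclude
  by_contra hne
  have habs : 0 < ‖u g‖ := norm_pos_iff.mpr hne
  have hCM : (0:ℝ) ≤ (C : ℝ) * M := mul_nonneg C.coe_nonneg hM0
  set ε : ℝ := min 1 (‖u g‖ / (2 * ((C : ℝ) * M + 1))) with hεdef
  have hε0 : 0 < ε := lt_min one_pos (by positivity)
  have hε1 : ε ≤ 1 := min_le_left _ _
  have h := key ε hε0 hε1
  have hεle : ε ≤ ‖u g‖ / (2 * ((C : ℝ) * M + 1)) := min_le_right _ _
  have hstep : (C : ℝ) * (ε * M) ≤ ((C : ℝ) * M + 1) * (‖u g‖ / (2 * ((C : ℝ) * M + 1))) := by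
    calc (C : ℝ) * (ε * M) = ((C : ℝ) * M) * ε := by ring
      _ ≤ ((C : ℝ) * M + 1) * ε := by nlinarith
      _ ≤ ((C : ℝ) * M + 1) * (‖u g‖ / (2 * ((C : ℝ) * M + 1))) :=
          mul_le_mul_of_nonneg_left hεle (by linarith)
  have hhalf : ((C : ℝ) * M + 1) * (‖u g‖ / (2 * ((C : ℝ) * M + 1))) = ‖u g‖ / 2 := by
    field_simp
  linarith [h, hstep, hhalf ▸ hstep]

end TPrimAux

open TPrimAux in
/-- A tempered distribution on `ℝ` supported in `[a, ∞)` has a tempered primitive also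
supported in `[a, ∞)`. -/
theorem tempered_primitive_exists_supported (a : ℝ) (u : TDist ℝ)
    (hu : SuppIn u (Set.Ici a)) :
    ∃ v : TDist ℝ, SuppIn v (Set.Ici a) ∧
      ∀ φ : SchwartzMap ℝ ℝ, v (SchwartzMap.derivCLM ℝ ℝ φ) = -(u φ) := by
  refine ⟨-(u.comp (primCLM a)), ?_, ?_⟩
  · intro φ hφ
    have : u (primCLM a φ) = 0 := by
      apply vanish a u hu
      intro x hx
      exact primCLM_eq_zero a φ hφ hx
    simp [ContinuousLinearMap.neg_apply, ContinuousLinearMap.comp_apply, this]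
  · intro φ
    have : primCLM a (derivCLM ℝ ℝ φ) = φ := primCLM_deriv a φ
    simp [ContinuousLinearMap.neg_apply, ContinuousLinearMap.comp_apply, this]
end
end

section
/- Let n ≥ 1, let a ∈ ℝ with a ≠ 0, and let u be a tempered distribution on ℝⁿ supported in {0} that is homogeneous with scaling exponent a, i.e. u( x ↦ φ(t·x) ) = t^a · u(φ) for every t > 0 and every Schwartz function φ. Then u is a sum of first derivatives of distributions supported at the origin: there exist tempered distributions v₁, …, vₙ on ℝⁿ, each supported in {0}, such that u = Σ_{i=1}^{n} ∂ᵢvᵢ. -/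
open MeasureTheory SchwartzMap

noncomputable section

/-- The distributional directional derivative along `e`: `(∂ₑ u)(φ) = -u(∂ₑ φ)`. -/
def dirDeriv {V : Type} [NormedAddCommGroup V] [NormedSpace ℝ V] (e : V) (u : TDist V) :
    TDist V :=
  -(u.comp (LineDeriv.lineDerivOpCLM ℝ (SchwartzMap V ℝ) e))

/-- The distributional partial derivative `∂ᵢ u` on `ℝⁿ`. -/
def pDeriv (n : ℕ) (i : Fin n) (u : TDist (Euc n)) : TDist (Euc n) :=
  dirDeriv (EuclideanSpace.single i (1 : ℝ)) u

/-- Dilation by `t > 0` on Schwartz space: `(dilateCLM t ht φ) x = φ (t • x)`. -/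
def dilateCLM {V : Type} [NormedAddCommGroup V] [NormedSpace ℝ V] (t : ℝ) (ht : 0 < t) :
    SchwartzMap V ℝ →L[ℝ] SchwartzMap V ℝ :=
  SchwartzMap.compCLM (g := fun x : V => t • x) ℝ
    ((t • ContinuousLinearMap.id ℝ V).hasTemperateGrowth)
    ⟨1, 1 / t, fun x => by
      have h : ‖t • x‖ = t * ‖x‖ := by
        rw [norm_smul, Real.norm_eq_abs, abs_of_pos ht]
      rw [pow_one, h, one_div_mul_eq_div, le_div_iff₀ ht]
      nlinarith [norm_nonneg x]⟩

/-! ### Auxiliary constructions for the main theorem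

We construct the "averaged dilation" operator
`G ψ x = ∫ s in (1/2)..1, ψ (s • x)` as a continuous linear map on Schwartz space,
together with multiplication by a coordinate.  These allow us to write
`φ - φ((1/2)·)` as `∑ i xᵢ · G (∂ᵢ φ)`, which combined with homogeneity yields the result. -/

set_option maxHeartbeats 2000000
set_option synthInstance.maxHeartbeats 1000000

namespace HomogeneousAux

variable {n : ℕ}

/-- Pointwise value of the averaging operator. -/
def Gf (ψ : Euc n → ℝ) (x : Euc n) : ℝ := ∫ s in (1/2:ℝ)..1, ψ (s • x)

/-- Candidate Taylor coefficients of `Gf ψ`. -/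
def Fm (ψ : SchwartzMap (Euc n) ℝ) (x : Euc n) (m : ℕ) :
    ContinuousMultilinearMap ℝ (fun _ : Fin m => Euc n) ℝ :=
  ∫ s in (1/2:ℝ)..1, s ^ m • iteratedFDeriv ℝ m (⇑ψ) (s • x)

lemma contIFD (ψ : SchwartzMap (Euc n) ℝ) (m : ℕ) :
    Continuous (iteratedFDeriv ℝ m (⇑ψ)) :=
  (ψ.smooth ⊤).continuous_iteratedFDeriv (mod_cast le_top)

lemma cont_in_s (ψ : SchwartzMap (Euc n) ℝ) (m : ℕ) (x : Euc n) :
    Continuous fun s : ℝ => s ^ m • iteratedFDeriv ℝ m (⇑ψ) (s • x) :=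
  (continuous_pow m).smul ((contIFD ψ m).comp (continuous_id.smul continuous_const))

lemma hasFDerivAt_iFD (ψ : SchwartzMap (Euc n) ℝ) (m : ℕ) (y : Euc n) :
    HasFDerivAt (iteratedFDeriv ℝ m (⇑ψ))
      ((iteratedFDeriv ℝ (m + 1) (⇑ψ) y).curryLeft) y := by
  have hdiff : DifferentiableAt ℝ (iteratedFDeriv ℝ m (⇑ψ)) y :=
    ((ψ.smooth ⊤).differentiable_iteratedFDeriv (mod_cast ENat.coe_lt_top m)) y
  have h := hdiff.hasFDerivAt
  have he : fderiv ℝ (iteratedFDeriv ℝ m (⇑ψ)) y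
      = (iteratedFDeriv ℝ (m + 1) (⇑ψ) y).curryLeft := by
    ext v w
    rw [ContinuousMultilinearMap.curryLeft_apply, iteratedFDeriv_succ_apply_left]
    simp
  rwa [he] at h

lemma cmm_intervalIntegral_apply {k : ℕ}
    {φ : ℝ → ContinuousMultilinearMap ℝ (fun _ : Fin k => Euc n) ℝ} {a b : ℝ}
    (hφ : IntervalIntegrable φ volume a b) (w : Fin k → Euc n) :
    (∫ s in a..b, φ s) w = ∫ s in a..b, φ s w := by
  simp_rw [intervalIntegral.intervalIntegral_eq_integral_uIoc,
    ← ContinuousMultilinearMap.integral_apply hφ.def' w, ContinuousMultilinearMap.smul_apply]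

lemma hasFDerivAt_Fm (ψ : SchwartzMap (Euc n) ℝ) (m : ℕ) (x₀ : Euc n) :
    HasFDerivAt (fun x => Fm ψ x m) ((Fm ψ x₀ (m + 1)).curryLeft) x₀ := by
  set F : Euc n → ℝ → ContinuousMultilinearMap ℝ (fun _ : Fin m => Euc n) ℝ :=
    fun x s => s ^ m • iteratedFDeriv ℝ m (⇑ψ) (s • x) with hF
  set F' : Euc n → ℝ → Euc n →L[ℝ] ContinuousMultilinearMap ℝ (fun _ : Fin m => Euc n) ℝ :=
    fun x s => s ^ (m + 1) • (iteratedFDeriv ℝ (m + 1) (⇑ψ) (s • x)).curryLeft with hF'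
  have hcurry_cont : Continuous fun T : ContinuousMultilinearMap ℝ (fun _ : Fin (m+1) => Euc n) ℝ
      => T.curryLeft := (continuousMultilinearCurryLeftEquiv ℝ (fun _ : Fin (m+1) => Euc n) ℝ).continuous
  have hF'cont : ∀ x, Continuous fun s => F' x s := fun x =>
    (continuous_pow (m+1)).smul
      ((hcurry_cont.comp (contIFD ψ (m+1))).comp (continuous_id.smul continuous_const))
  haveI : TopologicalSpace.PseudoMetrizableSpace
      (Euc n →L[ℝ] ContinuousMultilinearMap ℝ (fun _ : Fin m => Euc n) ℝ) :=
    @PseudoEMetricSpace.pseudoMetrizableSpace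
      (Euc n →L[ℝ] ContinuousMultilinearMap ℝ (fun _ : Fin m => Euc n) ℝ) _
  have key := intervalIntegral.hasFDerivAt_integral_of_dominated_of_fderiv_le
      (𝕜 := ℝ) (μ := volume) (F := F) (F' := F') (x₀ := x₀) (a := 1/2) (b := 1)
      (bound := fun _ => SchwartzMap.seminorm ℝ 0 (m+1) ψ) (s := Metric.ball x₀ 1) (Metric.ball_mem_nhds x₀ one_pos)
      (Filter.Eventually.of_forall fun x => (cont_in_s ψ m x).aestronglyMeasurable)
      ((cont_in_s ψ m x₀).intervalIntegrable _ _)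
      ((hF'cont x₀).aestronglyMeasurable)
      ?_ (intervalIntegrable_const) ?_
  · -- identify the derivative
    have : (∫ s in (1/2:ℝ)..1, F' x₀ s) = (Fm ψ x₀ (m + 1)).curryLeft := by
      ext y w
      have hc2 : Continuous fun s => F' x₀ s y :=
        (ContinuousLinearMap.apply ℝ _ y).continuous.comp (hF'cont x₀)
      rw [ContinuousLinearMap.intervalIntegral_apply ((hF'cont x₀).intervalIntegrable _ _) y,
        cmm_intervalIntegral_apply (hc2.intervalIntegrable _ _) w,
        ContinuousMultilinearMap.curryLeft_apply, Fm,
        cmm_intervalIntegral_apply ((cont_in_s ψ (m+1) x₀).intervalIntegrable _ _) (Fin.cons y w)]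
      apply intervalIntegral.integral_congr
      intro s _
      simp only [hF', ContinuousLinearMap.smul_apply, ContinuousMultilinearMap.smul_apply,
        ContinuousMultilinearMap.curryLeft_apply]
    rwa [this] at key
  · -- bound
    refine Filter.Eventually.of_forall fun s hs x _ => ?_
    rw [Set.uIoc_of_le (by norm_num)] at hs
    have hs1 : |s| ≤ 1 := by rw [abs_of_pos (by linarith [hs.1])]; exact hs.2
    simp only [hF']
    refine (ContinuousLinearMap.opNorm_smul_le (𝕜' := ℝ) _ _).trans ?_
    rw [ContinuousMultilinearMap.curryLeft_norm]
    have h1 : ‖s ^ (m+1)‖ ≤ 1 := by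
      rw [Real.norm_eq_abs, abs_pow]; exact pow_le_one₀ (abs_nonneg s) hs1
    exact (mul_le_mul h1 (ψ.norm_iteratedFDeriv_le_seminorm ℝ _ _) (norm_nonneg _)
      one_pos.le).trans_eq (one_mul _)
  · -- differentiability
    refine Filter.Eventually.of_forall fun s hs x _ => ?_
    have h1 : HasFDerivAt (fun x : Euc n => s • x) (s • ContinuousLinearMap.id ℝ (Euc n)) x :=
      (hasFDerivAt_id x).const_smul s
    have h2 := (hasFDerivAt_iFD ψ m (s • x)).comp x h1
    have h3 := h2.const_smul (s ^ m)
    convert h3 using 1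
    · rfl
    ext y w
    simp only [hF', ContinuousLinearMap.smul_apply, ContinuousLinearMap.comp_apply,
      ContinuousLinearMap.coe_smul', Pi.smul_apply,
      ContinuousLinearMap.coe_id', id_eq, ContinuousMultilinearMap.smul_apply,
      (iteratedFDeriv ℝ (m+1) (⇑ψ) (s • x)).curryLeft.map_smul]
    rw [pow_succ, mul_smul]

lemma hasFTaylor_Gf (ψ : SchwartzMap (Euc n) ℝ) :
    HasFTaylorSeriesUpTo ((⊤ : ℕ∞) : WithTop ℕ∞) (Gf (⇑ψ)) (fun x m => Fm ψ x m) := by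
  refine ⟨fun x => ?_, fun m _ x => hasFDerivAt_Fm ψ m x,
    fun m _ => continuous_iff_continuousAt.2 fun x => (hasFDerivAt_Fm ψ m x).continuousAt⟩
  rw [ContinuousMultilinearMap.curry0_apply, Fm,
    cmm_intervalIntegral_apply ((cont_in_s ψ 0 x).intervalIntegrable _ _) 0]
  refine intervalIntegral.integral_congr fun s _ => ?_
  simp [iteratedFDeriv_zero_apply]

lemma contDiff_Gf (ψ : SchwartzMap (Euc n) ℝ) : ContDiff ℝ (⊤ : ℕ∞) (Gf (⇑ψ)) :=
  (hasFTaylor_Gf ψ).contDiff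

lemma iteratedFDeriv_Gf (ψ : SchwartzMap (Euc n) ℝ) (m : ℕ) (x : Euc n) :
    iteratedFDeriv ℝ m (Gf (⇑ψ)) x = Fm ψ x m := by
  have h := ((hasFTaylor_Gf ψ).hasFTaylorSeriesUpToOn Set.univ).eq_iteratedFDerivWithin_of_uniqueDiffOn
    (m := m) (mod_cast le_top) uniqueDiffOn_univ (Set.mem_univ x)
  rw [iteratedFDerivWithin_univ] at h
  exact h.symm

lemma Gf_seminorm_bound (k m : ℕ) (f : SchwartzMap (Euc n) ℝ) (x : Euc n) :
    ‖x‖ ^ k * ‖iteratedFDeriv ℝ m (Gf ⇑f) x‖ ≤ 2 ^ k * SchwartzMap.seminorm ℝ k m f := by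
  rw [iteratedFDeriv_Gf]
  have h1 : ‖Fm f x m‖ ≤ ∫ s in (1/2:ℝ)..1, ‖s ^ m • iteratedFDeriv ℝ m (⇑f) (s • x)‖ :=
    intervalIntegral.norm_integral_le_integral_norm (by norm_num)
  have h2 : ‖x‖ ^ k * ‖Fm f x m‖
      ≤ ∫ s in (1/2:ℝ)..1, ‖x‖ ^ k * ‖s ^ m • iteratedFDeriv ℝ m (⇑f) (s • x)‖ := by
    calc ‖x‖ ^ k * ‖Fm f x m‖
        ≤ ‖x‖ ^ k * ∫ s in (1/2:ℝ)..1, ‖s ^ m • iteratedFDeriv ℝ m (⇑f) (s • x)‖ :=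
          mul_le_mul_of_nonneg_left h1 (by positivity)
      _ = ∫ s in (1/2:ℝ)..1, ‖x‖ ^ k * ‖s ^ m • iteratedFDeriv ℝ m (⇑f) (s • x)‖ :=
          (intervalIntegral.integral_const_mul _ _).symm
  refine h2.trans ?_
  have hsem : (0:ℝ) ≤ SchwartzMap.seminorm ℝ k m f := apply_nonneg _ _
  have h3 : ∀ s ∈ Set.Icc (1/2:ℝ) 1,
      ‖x‖ ^ k * ‖s ^ m • iteratedFDeriv ℝ m (⇑f) (s • x)‖
        ≤ 2 ^ k * SchwartzMap.seminorm ℝ k m f := by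
    intro s hs
    have hs0 : (0:ℝ) < s := lt_of_lt_of_le (by norm_num) hs.1
    have hsm : ‖s ^ m • iteratedFDeriv ℝ m (⇑f) (s • x)‖
        ≤ ‖iteratedFDeriv ℝ m (⇑f) (s • x)‖ := by
      refine (ContinuousMultilinearMap.opNorm_smul_le _ _).trans ?_
      have hle : ‖s ^ m‖ ≤ 1 := by
        rw [Real.norm_eq_abs, abs_pow]
        exact pow_le_one₀ (abs_nonneg s) (abs_le.mpr ⟨by linarith [hs.1], hs.2⟩)
      exact (mul_le_mul_of_nonneg_right hle (norm_nonneg _)).trans_eq (one_mul _)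
    have hxk : ‖x‖ ^ k ≤ 2 ^ k * ‖s • x‖ ^ k := by
      have hx2 : ‖x‖ ≤ 2 * ‖s • x‖ := by
        rw [norm_smul, Real.norm_eq_abs, abs_of_pos hs0]
        nlinarith [norm_nonneg x, hs.1]
      calc ‖x‖ ^ k ≤ (2 * ‖s • x‖) ^ k := pow_le_pow_left₀ (norm_nonneg x) hx2 k
        _ = 2 ^ k * ‖s • x‖ ^ k := mul_pow 2 _ k
    calc ‖x‖ ^ k * ‖s ^ m • iteratedFDeriv ℝ m (⇑f) (s • x)‖
        ≤ (2 ^ k * ‖s • x‖ ^ k) * ‖iteratedFDeriv ℝ m (⇑f) (s • x)‖ :=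
          mul_le_mul hxk hsm (norm_nonneg _) (by positivity)
      _ = 2 ^ k * (‖s • x‖ ^ k * ‖iteratedFDeriv ℝ m (⇑f) (s • x)‖) := by ring
      _ ≤ 2 ^ k * SchwartzMap.seminorm ℝ k m f :=
          mul_le_mul_of_nonneg_left (f.le_seminorm ℝ k m (s • x)) (by positivity)
  have h4 : (∫ s in (1/2:ℝ)..1, ‖x‖ ^ k * ‖s ^ m • iteratedFDeriv ℝ m (⇑f) (s • x)‖)
      ≤ ∫ _s in (1/2:ℝ)..1, (2 ^ k * SchwartzMap.seminorm ℝ k m f : ℝ) := by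
    refine intervalIntegral.integral_mono_on (by norm_num)
      ((continuous_const.mul (cont_in_s f m x).norm).intervalIntegrable _ _)
      intervalIntegrable_const h3
  refine h4.trans ?_
  rw [intervalIntegral.integral_const, smul_eq_mul]
  nlinarith [hsem, pow_nonneg (zero_le_two (α := ℝ)) k]

/-- The averaging operator `ψ ↦ (x ↦ ∫ s in (1/2)..1, ψ (s • x))` as a continuous linear
map on Schwartz space. -/
def GCLM : SchwartzMap (Euc n) ℝ →L[ℝ] SchwartzMap (Euc n) ℝ :=
  SchwartzMap.mkCLM (fun f x => ∫ s in (1/2:ℝ)..1, f (s • x))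
    (fun f g x => by
      have hf : IntervalIntegrable (fun s : ℝ => f (s • x)) volume (1/2) 1 :=
        (f.continuous.comp (continuous_id.smul continuous_const)).intervalIntegrable _ _
      have hg : IntervalIntegrable (fun s : ℝ => g (s • x)) volume (1/2) 1 :=
        (g.continuous.comp (continuous_id.smul continuous_const)).intervalIntegrable _ _
      simp only [SchwartzMap.add_apply]
      exact intervalIntegral.integral_add hf hg)
    (fun a f x => by
      simp [intervalIntegral.integral_smul])
    (fun f => contDiff_Gf f)
    (fun nn => ⟨{(nn.1, nn.2)}, 2 ^ nn.1, by positivity, fun f x => by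
      have h := Gf_seminorm_bound nn.1 nn.2 f x
      simp only [Finset.sup_singleton, schwartzSeminormFamily_apply]
      exact h⟩)

@[simp] lemma GCLM_apply (f : SchwartzMap (Euc n) ℝ) (x : Euc n) :
    GCLM f x = ∫ s in (1/2:ℝ)..1, f (s • x) := rfl

/-- Multiplication by the `i`-th coordinate as a continuous linear map on Schwartz space. -/
def mulCoordCLM (i : Fin n) : SchwartzMap (Euc n) ℝ →L[ℝ] SchwartzMap (Euc n) ℝ :=
  SchwartzMap.bilinLeftCLM (ContinuousLinearMap.mul ℝ ℝ)
    (EuclideanSpace.proj (𝕜 := ℝ) i).hasTemperateGrowth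

@[simp] lemma mulCoordCLM_apply (i : Fin n) (f : SchwartzMap (Euc n) ℝ) (x : Euc n) :
    mulCoordCLM i f x = f x * x i := rfl

lemma supp_lemma (ψ : SchwartzMap (Euc n) ℝ) (i : Fin n)
    (hψ : Disjoint (tsupport ⇑ψ) ({0} : Set (Euc n))) :
    Disjoint (tsupport ⇑(mulCoordCLM i (GCLM ψ))) ({0} : Set (Euc n)) := by
  rw [Set.disjoint_singleton_right] at hψ ⊢
  rw [notMem_tsupport_iff_eventuallyEq] at hψ ⊢
  obtain ⟨ε, hε, h0⟩ := Metric.eventually_nhds_iff.mp hψ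
  refine Metric.eventually_nhds_iff.mpr ⟨ε, hε, fun y hy => ?_⟩
  have h1 : GCLM ψ y = 0 := by
    rw [GCLM_apply]
    have heq : Set.EqOn (fun s : ℝ => ψ (s • y)) (fun _ => (0:ℝ)) (Set.uIcc (1/2:ℝ) 1) := by
      intro s hs
      rw [Set.uIcc_of_le (by norm_num : (1/2:ℝ) ≤ 1)] at hs
      have hd : dist (s • y) 0 < ε := by
        rw [dist_zero_right, norm_smul, Real.norm_eq_abs]
        have hs1 : |s| ≤ 1 := abs_le.mpr ⟨by linarith [hs.1], hs.2⟩
        rw [dist_zero_right] at hy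
        calc |s| * ‖y‖ ≤ 1 * ‖y‖ := mul_le_mul_of_nonneg_right hs1 (norm_nonneg y)
          _ = ‖y‖ := one_mul _
          _ < ε := hy
      simpa using h0 hd
    rw [intervalIntegral.integral_congr heq]
    simp
  show mulCoordCLM i (GCLM ψ) y = (0 : Euc n → ℝ) y
  rw [mulCoordCLM_apply, h1, zero_mul, Pi.zero_apply]

lemma euc_sum (x : Euc n) :
    (∑ i : Fin n, x i • EuclideanSpace.single i (1:ℝ)) = x := by
  have h := (EuclideanSpace.basisFun (Fin n) ℝ).sum_repr x
  simp only [EuclideanSpace.basisFun_repr, EuclideanSpace.basisFun_apply] at h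
  exact h

lemma sum_eq (ht : (0:ℝ) < 1/2) (φ : SchwartzMap (Euc n) ℝ) :
    (∑ i : Fin n,
        mulCoordCLM i (GCLM (LineDeriv.lineDerivOpCLM ℝ (SchwartzMap (Euc n) ℝ) (EuclideanSpace.single i (1:ℝ)) φ)))
      = φ - dilateCLM (1/2) ht φ := by
  refine SchwartzMap.ext fun x => ?_
  have hcoe : ⇑(∑ i : Fin n,
        mulCoordCLM i (GCLM (LineDeriv.lineDerivOpCLM ℝ (SchwartzMap (Euc n) ℝ) (EuclideanSpace.single i (1:ℝ)) φ)))
      = ∑ i : Fin n,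
        ⇑(mulCoordCLM i (GCLM (LineDeriv.lineDerivOpCLM ℝ (SchwartzMap (Euc n) ℝ) (EuclideanSpace.single i (1:ℝ)) φ))) :=
    map_sum (FunLike.coeAddMonoidHom (SchwartzMap (Euc n) ℝ) (Euc n) ℝ) _ _
  rw [hcoe, Finset.sum_apply]
  have hsub : (φ - dilateCLM (1/2) ht φ) x = φ x - φ ((1/2:ℝ) • x) := rfl
  rw [hsub]
  simp only [mulCoordCLM_apply, GCLM_apply, LineDeriv.lineDerivOpCLM_apply,
    SchwartzMap.lineDerivOp_apply_eq_fderiv]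
  have hci : ∀ v : Euc n, Continuous fun s : ℝ => fderiv ℝ φ (s • x) v := fun v =>
    (ContinuousLinearMap.apply ℝ ℝ v).continuous.comp
      ((φ.smooth'.continuous_fderiv (by simp)).comp
        (continuous_id.smul continuous_const))
  have hstep1 : ∀ i : Fin n,
      (∫ s in (1/2:ℝ)..1, fderiv ℝ φ (s • x) (EuclideanSpace.single i (1:ℝ))) * x i
        = ∫ s in (1/2:ℝ)..1, fderiv ℝ φ (s • x) (EuclideanSpace.single i (1:ℝ)) * x i :=
    fun i => (intervalIntegral.integral_mul_const _ _).symm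
  rw [Finset.sum_congr rfl fun i _ => hstep1 i, ← intervalIntegral.integral_finset_sum
      (f := fun i s => fderiv ℝ φ (s • x) (EuclideanSpace.single i (1:ℝ)) * x i)
      (fun i _ => ((hci _).mul continuous_const).intervalIntegrable _ _)]
  have hptw : ∀ s : ℝ,
      (∑ i : Fin n, fderiv ℝ φ (s • x) (EuclideanSpace.single i (1:ℝ)) * x i)
        = fderiv ℝ φ (s • x) x := by
    intro s
    have hmap : ∀ i : Fin n, fderiv ℝ φ (s • x) (EuclideanSpace.single i (1:ℝ)) * x i
        = fderiv ℝ φ (s • x) (x i • EuclideanSpace.single i (1:ℝ)) := fun i => by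
      rw [(fderiv ℝ (⇑φ) (s • x)).map_smul, smul_eq_mul, mul_comm]
    rw [Finset.sum_congr rfl fun i _ => hmap i, ← map_sum, euc_sum]
  rw [intervalIntegral.integral_congr fun s _ => hptw s]
  have hFTC := intervalIntegral.integral_eq_sub_of_hasDerivAt
    (f := fun s : ℝ => φ (s • x)) (f' := fun s : ℝ => fderiv ℝ φ (s • x) x)
    (a := 1/2) (b := 1) ?_ ((hci x).intervalIntegrable _ _)
  · rw [hFTC]
    simp only [one_smul]
  · intro s _
    have h1 : HasDerivAt (fun t : ℝ => t • x) x s := by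
      simpa using (hasDerivAt_id s).smul_const x
    exact (φ.differentiableAt.hasFDerivAt).comp_hasDerivAt s h1

end HomogeneousAux

/-- A tempered distribution on `ℝⁿ` (`n ≥ 1`) supported in `{0}` which is homogeneous with
nonzero scaling exponent `a` (i.e. `u(φ(t·)) = t^a u(φ)` for `t > 0`) is a sum of first
derivatives of tempered distributions supported in `{0}`. -/
theorem homogeneous_dist_at_origin_is_exact (n : ℕ) (hn : 1 ≤ n) (a : ℝ) (ha : a ≠ 0)
    (u : TDist (Euc n)) (hu : SuppIn u ({0} : Set (Euc n)))
    (hhom : ∀ (t : ℝ) (ht : 0 < t) (φ : SchwartzMap (Euc n) ℝ),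
      u (dilateCLM t ht φ) = t ^ a * u φ) :
    ∃ v : Fin n → TDist (Euc n),
      (∀ i : Fin n, SuppIn (v i) ({0} : Set (Euc n))) ∧
      u = ∑ i : Fin n, pDeriv n i (v i) := by
  classical
  have ht : (0:ℝ) < 1/2 := by norm_num
  set r : ℝ := (1/2 : ℝ) ^ a with hrdef
  have hr1 : r ≠ 1 := by
    rw [hrdef, Real.rpow_def_of_pos (by norm_num : (0:ℝ) < 1/2)]
    intro hcon
    have h0 : Real.log (1/2) * a = 0 := Real.exp_injective (by rw [hcon, Real.exp_zero])
    have hlog : Real.log (1/2) ≠ 0 :=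
      Real.log_ne_zero_of_pos_of_ne_one (by norm_num) (by norm_num)
    rcases mul_eq_zero.mp h0 with h | h
    · exact hlog h
    · exact ha h
  have hd : (1:ℝ) - r ≠ 0 := sub_ne_zero.mpr (Ne.symm hr1)
  refine ⟨fun i => (-(1 - r)⁻¹) •
      (u.comp ((HomogeneousAux.mulCoordCLM i).comp HomogeneousAux.GCLM)),
    fun i ψ hψ => ?_, ?_⟩
  · simp only [ContinuousLinearMap.smul_apply, ContinuousLinearMap.comp_apply, smul_eq_mul]
    rw [hu _ (HomogeneousAux.supp_lemma ψ i hψ), mul_zero]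
  · refine ContinuousLinearMap.ext fun φ => ?_
    have hkey := HomogeneousAux.sum_eq (n := n) ht φ
    have hhom2 := hhom (1/2) ht φ
    rw [ContinuousLinearMap.sum_apply]
    simp only [pDeriv, dirDeriv, ContinuousLinearMap.neg_apply, ContinuousLinearMap.comp_apply,
      ContinuousLinearMap.smul_apply, smul_eq_mul, neg_mul, neg_neg]
    rw [← Finset.mul_sum, ← map_sum u, hkey, map_sub, hhom2, ← hrdef]
    field_simp
end
end

section
/- Let n ≥ 1 and let u be any tempered distribution on ℝⁿ supported in {0}. Then there exist a constant c ∈ ℝ and tempered distributions v₁, …, vₙ on ℝⁿ, each supported in {0}, such that u = c·δ + Σ_{i=1}^{n} ∂ᵢvᵢ. -/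
open MeasureTheory SchwartzMap

noncomputable section

/-- The Dirac delta distribution at the origin of `ℝⁿ`. -/
def diracDelta (n : ℕ) : TDist (Euc n) := (BoundedContinuousFunction.evalCLM ℝ (0 : Euc n)).comp
  (SchwartzMap.toBoundedContinuousFunctionCLM ℝ (Euc n) ℝ)



section Taylor

variable {E F : Type} [NormedAddCommGroup E] [NormedSpace ℝ E]

/-- Taylor-type bound: if all derivatives up to order `M` vanish at `0` and the `(M+1)`-st
derivative is bounded by `C` on the ball of radius `‖x‖`, then `‖f x‖ ≤ C * ‖x‖ ^ (M+1)`. -/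
lemma taylor_bound0 : ∀ (M : ℕ) {F : Type} [NormedAddCommGroup F] [NormedSpace ℝ F]
    (f : E → F), ContDiff ℝ (⊤ : ℕ∞) f → (∀ j ≤ M, iteratedFDeriv ℝ j f 0 = 0) →
    ∀ (C : ℝ) (x : E), (∀ y : E, ‖y‖ ≤ ‖x‖ → ‖iteratedFDeriv ℝ (M + 1) f y‖ ≤ C) →
    ‖f x‖ ≤ C * ‖x‖ ^ (M + 1) := by
  intro M
  induction M with
  | zero =>
    intro F _ _ f hf h0 C x hC
    have hf0 : f 0 = 0 := by
      have := congrArg norm (h0 0 le_rfl)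
      rwa [norm_iteratedFDeriv_zero, norm_zero, norm_eq_zero] at this
    have hd : ∀ y ∈ Metric.closedBall (0 : E) ‖x‖, DifferentiableAt ℝ f y :=
      fun y _ => (hf.differentiable (by simp)).differentiableAt
    have hb : ∀ y ∈ Metric.closedBall (0 : E) ‖x‖, ‖fderiv ℝ f y‖ ≤ C := by
      intro y hy
      have h1 : ‖iteratedFDeriv ℝ 0 (fderiv ℝ f) y‖ = ‖iteratedFDeriv ℝ 1 f y‖ :=
        norm_iteratedFDeriv_fderiv
      rw [norm_iteratedFDeriv_zero] at h1
      rw [h1]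
      exact hC y (by simpa [Metric.mem_closedBall, dist_eq_norm] using hy)
    have hx0 : (0 : E) ∈ Metric.closedBall (0 : E) ‖x‖ :=
      Metric.mem_closedBall_self (norm_nonneg x)
    have hxx : x ∈ Metric.closedBall (0 : E) ‖x‖ := by
      simp [Metric.mem_closedBall, dist_eq_norm]
    have := (convex_closedBall (0:E) ‖x‖).norm_image_sub_le_of_norm_fderiv_le hd hb hx0 hxx
    simpa [hf0] using this
  | succ M ih =>
    intro F _ _ f hf h0 C x hC
    have hC0 : 0 ≤ C := le_trans (norm_nonneg _) (hC 0 (by simpa using norm_nonneg x))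
    -- bound the derivative of f
    have hfd : ContDiff ℝ (⊤ : ℕ∞) (fderiv ℝ f) := hf.fderiv_right (by exact_mod_cast le_top)
    have h0' : ∀ j ≤ M, iteratedFDeriv ℝ j (fderiv ℝ f) 0 = 0 := by
      intro j hj
      have : ‖iteratedFDeriv ℝ j (fderiv ℝ f) 0‖ = ‖iteratedFDeriv ℝ (j + 1) f 0‖ :=
        norm_iteratedFDeriv_fderiv
      rw [h0 (j+1) (by omega), norm_zero, norm_eq_zero] at this
      exact this
    have hder : ∀ y : E, ‖y‖ ≤ ‖x‖ → ‖fderiv ℝ f y‖ ≤ C * ‖x‖ ^ (M + 1) := by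
      intro y hy
      have hb : ∀ z : E, ‖z‖ ≤ ‖y‖ → ‖iteratedFDeriv ℝ (M + 1) (fderiv ℝ f) z‖ ≤ C := by
        intro z hz
        rw [norm_iteratedFDeriv_fderiv]
        exact hC z (le_trans hz hy)
      calc ‖fderiv ℝ f y‖ ≤ C * ‖y‖ ^ (M + 1) := ih (fderiv ℝ f) hfd h0' C y hb
        _ ≤ C * ‖x‖ ^ (M + 1) :=
          mul_le_mul_of_nonneg_left (pow_le_pow_left₀ (norm_nonneg _) hy _) hC0
    have hf0 : f 0 = 0 := by
      have := congrArg norm (h0 0 (by omega))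
      rwa [norm_iteratedFDeriv_zero, norm_zero, norm_eq_zero] at this
    have hd : ∀ y ∈ Metric.closedBall (0 : E) ‖x‖, DifferentiableAt ℝ f y :=
      fun y _ => (hf.differentiable (by simp)).differentiableAt
    have hb : ∀ y ∈ Metric.closedBall (0 : E) ‖x‖, ‖fderiv ℝ f y‖ ≤ C * ‖x‖ ^ (M + 1) := by
      intro y hy
      exact hder y (by simpa [Metric.mem_closedBall, dist_eq_norm] using hy)
    have hx0 : (0 : E) ∈ Metric.closedBall (0 : E) ‖x‖ :=
      Metric.mem_closedBall_self (norm_nonneg x)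
    have hxx : x ∈ Metric.closedBall (0 : E) ‖x‖ := by
      simp [Metric.mem_closedBall, dist_eq_norm]
    have := (convex_closedBall (0:E) ‖x‖).norm_image_sub_le_of_norm_fderiv_le hd hb hx0 hxx
    calc ‖f x‖ = ‖f x - f 0‖ := by rw [hf0, sub_zero]
      _ ≤ C * ‖x‖ ^ (M + 1) * ‖x - 0‖ := this
      _ = C * ‖x‖ ^ (M + 1 + 1) := by rw [sub_zero]; ring

/-- Version of `taylor_bound0` for iterated derivatives. -/
lemma taylor_bound : ∀ (i M : ℕ) {F : Type} [NormedAddCommGroup F] [NormedSpace ℝ F]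
    (f : E → F), ContDiff ℝ (⊤ : ℕ∞) f → (∀ j ≤ M, iteratedFDeriv ℝ j f 0 = 0) →
    ∀ (C : ℝ) (x : E), (∀ y : E, ‖y‖ ≤ ‖x‖ → ‖iteratedFDeriv ℝ (M + 1) f y‖ ≤ C) →
    i ≤ M + 1 → ‖iteratedFDeriv ℝ i f x‖ ≤ C * ‖x‖ ^ (M + 1 - i) := by
  intro i
  induction i with
  | zero =>
    intro M F _ _ f hf h0 C x hC _
    rw [norm_iteratedFDeriv_zero]
    simpa using taylor_bound0 M f hf h0 C x hC
  | succ i ih =>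
    intro M F _ _ f hf h0 C x hC hi
    have hC0 : 0 ≤ C := le_trans (norm_nonneg _) (hC 0 (by simpa using norm_nonneg x))
    rcases Nat.lt_or_ge (i + 1) (M + 1) with hlt | hge
    · -- i + 1 ≤ M, so M ≥ 1
      obtain ⟨M', rfl⟩ : ∃ M', M = M' + 1 := ⟨M - 1, by omega⟩
      have hfd : ContDiff ℝ (⊤ : ℕ∞) (fderiv ℝ f) := hf.fderiv_right (by exact_mod_cast le_top)
      have h0' : ∀ j ≤ M', iteratedFDeriv ℝ j (fderiv ℝ f) 0 = 0 := by
        intro j hj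
        have : ‖iteratedFDeriv ℝ j (fderiv ℝ f) 0‖ = ‖iteratedFDeriv ℝ (j + 1) f 0‖ :=
          norm_iteratedFDeriv_fderiv
        rw [h0 (j + 1) (by omega), norm_zero, norm_eq_zero] at this
        exact this
      have hC' : ∀ y : E, ‖y‖ ≤ ‖x‖ → ‖iteratedFDeriv ℝ (M' + 1) (fderiv ℝ f) y‖ ≤ C := by
        intro y hy
        rw [norm_iteratedFDeriv_fderiv]
        exact hC y hy
      have := ih M' (fderiv ℝ f) hfd h0' C x hC' (by omega)
      rw [norm_iteratedFDeriv_fderiv] at this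
      have harith : M' + 1 + 1 - (i + 1) = M' + 1 - i := by omega
      rwa [harith]
    · -- i + 1 = M + 1
      have : i + 1 = M + 1 := le_antisymm hi hge
      subst_vars
      have h2 : M + 1 - (M + 1) = 0 := by omega
      rw [this] at *
      rw [h2, pow_zero, mul_one]
      exact hC x le_rfl

end Taylor


/-- A fixed bump function on `ℝⁿ`: equal to `1` on the ball of radius 1, supported in the
ball of radius 2. -/
def bump (n : ℕ) : ContDiffBump (0 : Euc n) := ⟨1, 2, one_pos, one_lt_two⟩

/-- Global bounds for derivatives of the bump function. -/
lemma bump_bound (n j : ℕ) : ∃ K : ℝ, 0 ≤ K ∧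
    ∀ x : Euc n, ‖iteratedFDeriv ℝ j (bump n) x‖ ≤ K := by
  obtain ⟨C, hC⟩ := (((bump n).contDiff (n := (⊤ : ℕ∞))).continuous_iteratedFDeriv
    (mod_cast le_top)).bounded_above_of_compact_support
    ((bump n).hasCompactSupport.iteratedFDeriv j)
  exact ⟨max C 0, le_max_right _ _, fun x => le_trans (hC x) (le_max_left _ _)⟩

variable {n : ℕ}

/-- The rescaling map `x ↦ ε⁻¹ • x` as a continuous linear map. -/
def resc (n : ℕ) (ε : ℝ) : Euc n →L[ℝ] Euc n := ε⁻¹ • ContinuousLinearMap.id ℝ (Euc n)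

lemma resc_norm_le {ε : ℝ} (hε : 0 < ε) : ‖resc n ε‖ ≤ ε⁻¹ := by
  rw [resc]
  refine le_trans (ContinuousLinearMap.opNorm_smul_le _ _) ?_
  rw [Real.norm_eq_abs, abs_of_pos (inv_pos.mpr hε)]
  calc ε⁻¹ * ‖ContinuousLinearMap.id ℝ (Euc n)‖ ≤ ε⁻¹ * 1 :=
        mul_le_mul_of_nonneg_left (ContinuousLinearMap.norm_id_le) (le_of_lt (inv_pos.mpr hε))
    _ = ε⁻¹ := mul_one _

lemma resc_apply (ε : ℝ) (x : Euc n) : resc n ε x = ε⁻¹ • x := rfl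

lemma norm_resc {ε : ℝ} (hε : 0 < ε) (x : Euc n) : ‖resc n ε x‖ = ε⁻¹ * ‖x‖ := by
  rw [resc_apply, norm_smul, Real.norm_eq_abs, abs_of_pos (inv_pos.mpr hε)]

/-- The rescaled cutoff `x ↦ θ(x/ε)`. -/
def cutoff (n : ℕ) (ε : ℝ) : Euc n → ℝ := fun x => bump n (resc n ε x)

lemma cutoff_smooth (ε : ℝ) : ContDiff ℝ (⊤ : ℕ∞) (cutoff n ε) :=
  ((bump n).contDiff).comp (resc n ε).contDiff

lemma cutoff_eq_one {ε : ℝ} (hε : 0 < ε) {x : Euc n} (hx : ‖x‖ ≤ ε) : cutoff n ε x = 1 := by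
  apply (bump n).one_of_mem_closedBall
  have : ‖resc n ε x‖ ≤ 1 := by
    rw [norm_resc hε, inv_mul_le_iff₀ hε, mul_one]
    exact hx
  simpa [Metric.mem_closedBall, dist_eq_norm, bump] using this

lemma cutoff_eq_zero {ε : ℝ} (hε : 0 < ε) {x : Euc n} (hx : 2 * ε < ‖x‖) : cutoff n ε x = 0 := by
  apply (bump n).zero_of_le_dist
  have : ‖resc n ε x‖ = ε⁻¹ * ‖x‖ := norm_resc hε x
  have h2 : (2 : ℝ) ≤ ε⁻¹ * ‖x‖ := by
    rw [le_inv_mul_iff₀ hε]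
    linarith
  simpa [dist_eq_norm, bump, this] using h2

lemma cutoff_deriv_bound {ε : ℝ} (hε : 0 < ε) (j : ℕ) :
    ∀ x : Euc n, ‖iteratedFDeriv ℝ j (cutoff n ε) x‖ ≤ (bump_bound n j).choose * ε⁻¹ ^ j := by
  intro x
  obtain ⟨hK0, hK⟩ := (bump_bound n j).choose_spec
  have hcomp := (resc n ε).iteratedFDeriv_comp_right ((bump n).contDiff (n := (⊤:ℕ∞))) x
    (i := j) (mod_cast le_top)
  have : ‖iteratedFDeriv ℝ j (cutoff n ε) x‖ ≤
      ‖iteratedFDeriv ℝ j (bump n) (resc n ε x)‖ * ∏ _i : Fin j, ‖resc n ε‖ := by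
    rw [show (cutoff n ε) = (bump n) ∘ (resc n ε) from rfl, hcomp]
    exact ContinuousMultilinearMap.norm_compContinuousLinearMap_le _ _
  refine le_trans this ?_
  have h1 : (∏ _i : Fin j, ‖resc n ε‖) ≤ ε⁻¹ ^ j := by
    rw [Finset.prod_const, Finset.card_univ, Fintype.card_fin]
    exact pow_le_pow_left₀ (norm_nonneg _) (resc_norm_le hε) j
  have h2 : (0:ℝ) ≤ ∏ _i : Fin j, ‖resc n ε‖ := Finset.prod_nonneg fun _ _ => norm_nonneg _
  calc ‖iteratedFDeriv ℝ j (bump n) (resc n ε x)‖ * ∏ _i : Fin j, ‖resc n ε‖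
      ≤ (bump_bound n j).choose * ε⁻¹ ^ j :=
        mul_le_mul (hK _) h1 h2 hK0

lemma cutoff_temperate {ε : ℝ} (hε : 0 < ε) : Function.HasTemperateGrowth (cutoff n ε) := by
  refine ⟨cutoff_smooth ε, fun j => ⟨0, (bump_bound n j).choose * ε⁻¹ ^ j, fun x => ?_⟩⟩
  simpa using cutoff_deriv_bound hε j x

lemma iter_eq_zero_of_eventually {f : Euc n → ℝ} {x : Euc n} (h : f =ᶠ[nhds x] 0) (l : ℕ) :
    iteratedFDeriv ℝ l f x = 0 := by
  have h' : f =ᶠ[nhdsWithin x Set.univ] (0 : Euc n → ℝ) := by rwa [nhdsWithin_univ]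
  have := Filter.EventuallyEq.iteratedFDerivWithin_eq (𝕜 := ℝ) h' h.self_of_nhds l
  rw [iteratedFDerivWithin_univ, iteratedFDerivWithin_univ] at this
  rw [this]
  have : (0 : Euc n → ℝ) = fun _ => (0:ℝ) := rfl
  rw [this, iteratedFDeriv_zero_fun]
  simp

/-- The sum of the bump derivative bounds up to order `N`. -/
def Ksum (n N : ℕ) : ℝ := ∑ j ∈ Finset.range (N + 1), (bump_bound n j).choose

lemma Ksum_nonneg (n N : ℕ) : 0 ≤ Ksum n N :=
  Finset.sum_nonneg fun j _ => (bump_bound n j).choose_spec.1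

lemma bump_bound_le_Ksum (n N j : ℕ) (hj : j ≤ N) : (bump_bound n j).choose ≤ Ksum n N :=
  Finset.single_le_sum (f := fun j => (bump_bound n j).choose)
    (fun i _ => (bump_bound n i).choose_spec.1) (Finset.mem_range.mpr (by omega))

lemma mul_cutoff_seminorm_le (N k l : ℕ) (hk : k ≤ N) (hl : l ≤ N)
    (ψ : SchwartzMap (Euc n) ℝ) (hψ : ∀ j ≤ N, iteratedFDeriv ℝ j ψ 0 = 0)
    {ε : ℝ} (hε : 0 < ε) (hε1 : ε ≤ 1) :
    SchwartzMap.seminorm ℝ k l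
      (bilinLeftCLM (ContinuousLinearMap.mul ℝ ℝ) (cutoff_temperate (n := n) hε) ψ) ≤
    (2 ^ N * ((N + 1) * (2 ^ N * ((SchwartzMap.seminorm ℝ 0 (N+1) ψ) *
      (Ksum n N * 2 ^ (N + 1)))))) * ε := by
  set B' : ℝ := SchwartzMap.seminorm ℝ 0 (N+1) ψ with hB'
  have hB'0 : 0 ≤ B' := apply_nonneg _ _
  have hK0 : 0 ≤ Ksum n N := Ksum_nonneg n N
  set φε := bilinLeftCLM (ContinuousLinearMap.mul ℝ ℝ) (cutoff_temperate (n := n) hε) ψ with hφ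
  have happ : ∀ x, φε x = ψ x * cutoff n ε x := fun x => rfl
  have hA0 : 0 ≤ (2 ^ N * ((N + 1) * (2 ^ N * (B' * (Ksum n N * 2 ^ (N + 1)))))) * ε := by
    positivity
  apply SchwartzMap.seminorm_le_bound ℝ k l φε hA0
  intro x
  rcases le_or_gt ‖x‖ (2 * ε) with hx | hx
  · -- the main estimate
    -- the summand bound
    have hterm : ∀ i, i ≤ l → (l.choose i : ℝ) * ‖iteratedFDeriv ℝ i ψ x‖ *
        ‖iteratedFDeriv ℝ (l - i) (cutoff n ε) x‖ ≤
        2 ^ N * (B' * (Ksum n N * 2 ^ (N + 1))) * ε := by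
      intro i hi
      have hchoose : (l.choose i : ℝ) ≤ 2 ^ N := by
        have h2l : l.choose i ≤ 2 ^ l := by
          rw [← Nat.sum_range_choose l]
          exact Finset.single_le_sum (f := fun j => l.choose j) (fun _ _ => Nat.zero_le _)
            (Finset.mem_range.mpr (by omega))
        calc (l.choose i : ℝ) ≤ (2 : ℝ) ^ l := by exact_mod_cast h2l
          _ ≤ 2 ^ N := pow_le_pow_right₀ one_le_two hl
      have h1 : ‖iteratedFDeriv ℝ i ψ x‖ ≤ B' * (2 * ε) ^ (N + 1 - i) := by
        have htay := taylor_bound i N (⇑ψ) (ψ.smooth _) hψ B' x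
          (fun y _ => ψ.norm_iteratedFDeriv_le_seminorm ℝ _ y) (by omega)
        refine le_trans htay (mul_le_mul_of_nonneg_left ?_ hB'0)
        exact pow_le_pow_left₀ (norm_nonneg _) hx _
      have h2 : ‖iteratedFDeriv ℝ (l - i) (cutoff n ε) x‖ ≤ Ksum n N * ε⁻¹ ^ (l - i) := by
        refine le_trans (cutoff_deriv_bound hε (l - i) x) ?_
        exact mul_le_mul_of_nonneg_right (bump_bound_le_Ksum n N _ (by omega))
          (by positivity)
      have hkey : (2 * ε) ^ (N + 1 - i) * ε⁻¹ ^ (l - i) ≤ 2 ^ (N + 1) * ε := by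
        rw [mul_pow]
        have e1 : ε ^ (N + 1 - i) = ε ^ (l - i) * ε ^ (N + 1 - l) := by
          rw [← pow_add]; congr 1; omega
        have e2 : ε ^ (l - i) * ε⁻¹ ^ (l - i) = 1 := by
          rw [← mul_pow, mul_inv_cancel₀ (ne_of_gt hε), one_pow]
        have e3 : ε ^ (N + 1 - l) ≤ ε := by
          calc ε ^ (N + 1 - l) ≤ ε ^ 1 :=
                pow_le_pow_of_le_one (le_of_lt hε) hε1 (by omega)
            _ = ε := pow_one ε
        calc 2 ^ (N + 1 - i) * ε ^ (N + 1 - i) * ε⁻¹ ^ (l - i)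
            = 2 ^ (N + 1 - i) * (ε ^ (N + 1 - l) * (ε ^ (l - i) * ε⁻¹ ^ (l - i))) := by
              rw [e1]; ring
          _ = 2 ^ (N + 1 - i) * ε ^ (N + 1 - l) := by rw [e2, mul_one]
          _ ≤ 2 ^ (N + 1) * ε := by
              refine mul_le_mul ?_ e3 (by positivity) (by positivity)
              exact pow_le_pow_right₀ one_le_two (by omega)
      calc (l.choose i : ℝ) * ‖iteratedFDeriv ℝ i ψ x‖ *
            ‖iteratedFDeriv ℝ (l - i) (cutoff n ε) x‖
          ≤ 2 ^ N * (B' * (2 * ε) ^ (N + 1 - i)) * (Ksum n N * ε⁻¹ ^ (l - i)) := by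
            refine mul_le_mul (mul_le_mul hchoose h1 (norm_nonneg _) (by positivity)) h2
              (norm_nonneg _) (by positivity)
        _ = 2 ^ N * (B' * Ksum n N) * ((2 * ε) ^ (N + 1 - i) * ε⁻¹ ^ (l - i)) := by ring
        _ ≤ 2 ^ N * (B' * Ksum n N) * (2 ^ (N + 1) * ε) := by
            refine mul_le_mul_of_nonneg_left hkey (by positivity)
        _ = 2 ^ N * (B' * (Ksum n N * 2 ^ (N + 1))) * ε := by ring
    have hmul : ‖iteratedFDeriv ℝ l (⇑φε) x‖ ≤
        ∑ i ∈ Finset.range (l + 1), (l.choose i : ℝ) * ‖iteratedFDeriv ℝ i (⇑ψ) x‖ *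
          ‖iteratedFDeriv ℝ (l - i) (cutoff n ε) x‖ := by
      have := norm_iteratedFDeriv_mul_le (𝕜 := ℝ) (f := ⇑ψ) (g := cutoff n ε)
        (N := (⊤ : ℕ∞)) (ψ.smooth _) (cutoff_smooth ε) x (n := l) (mod_cast le_top)
      exact this
    have hsum : ∑ i ∈ Finset.range (l + 1), (l.choose i : ℝ) * ‖iteratedFDeriv ℝ i (⇑ψ) x‖ *
          ‖iteratedFDeriv ℝ (l - i) (cutoff n ε) x‖ ≤
        (N + 1) * (2 ^ N * (B' * (Ksum n N * 2 ^ (N + 1))) * ε) := by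
      calc ∑ i ∈ Finset.range (l + 1), (l.choose i : ℝ) * ‖iteratedFDeriv ℝ i (⇑ψ) x‖ *
            ‖iteratedFDeriv ℝ (l - i) (cutoff n ε) x‖
          ≤ ∑ i ∈ Finset.range (l + 1), 2 ^ N * (B' * (Ksum n N * 2 ^ (N + 1))) * ε :=
            Finset.sum_le_sum fun i hi => hterm i (by
              simpa using Nat.lt_succ_iff.mp (Finset.mem_range.mp hi))
        _ = (l + 1) * (2 ^ N * (B' * (Ksum n N * 2 ^ (N + 1))) * ε) := by
            rw [Finset.sum_const, Finset.card_range]; push_cast; ring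
        _ ≤ (N + 1) * (2 ^ N * (B' * (Ksum n N * 2 ^ (N + 1))) * ε) := by
            refine mul_le_mul_of_nonneg_right ?_ (by positivity)
            exact_mod_cast by exact_mod_cast Nat.add_le_add_right hl 1
    have hxk : ‖x‖ ^ k ≤ 2 ^ N := by
      calc ‖x‖ ^ k ≤ 2 ^ k := by
            refine pow_le_pow_left₀ (norm_nonneg _) ?_ k
            calc ‖x‖ ≤ 2 * ε := hx
              _ ≤ 2 * 1 := by linarith
              _ = 2 := mul_one 2
        _ ≤ 2 ^ N := pow_le_pow_right₀ one_le_two hk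
    calc ‖x‖ ^ k * ‖iteratedFDeriv ℝ l (⇑φε) x‖
        ≤ 2 ^ N * ((N + 1) * (2 ^ N * (B' * (Ksum n N * 2 ^ (N + 1))) * ε)) := by
          refine mul_le_mul hxk (le_trans hmul hsum) (norm_nonneg _) (by positivity)
      _ = (2 ^ N * ((N + 1) * (2 ^ N * (B' * (Ksum n N * 2 ^ (N + 1)))))) * ε := by ring
  · -- outside the support : the derivative vanishes
    have hzero : iteratedFDeriv ℝ l (⇑φε) x = 0 := by
      apply iter_eq_zero_of_eventually
      have hopen : IsOpen {y : Euc n | 2 * ε < ‖y‖} := by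
        have : Continuous fun y : Euc n => ‖y‖ := continuous_norm
        exact isOpen_lt continuous_const this
      refine Filter.eventuallyEq_of_mem (hopen.mem_nhds hx) ?_
      intro y hy
      simp only [Set.mem_setOf_eq] at hy
      show ψ y * cutoff n ε y = 0
      rw [cutoff_eq_zero hε hy, mul_zero]
    rw [hzero, norm_zero, mul_zero]
    exact hA0

/-- Step A: a tempered distribution supported in `{0}` kills every Schwartz function
whose derivatives vanish at `0` up to a sufficiently large order `N`. -/
lemma key_order (n : ℕ) (u : TDist (Euc n)) (hu : SuppIn u ({0} : Set (Euc n))) :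
    ∃ N : ℕ, ∀ ψ : SchwartzMap (Euc n) ℝ,
      (∀ j ≤ N, iteratedFDeriv ℝ j (⇑ψ) 0 = 0) → u ψ = 0 := by
  classical
  set q : Seminorm ℝ (SchwartzMap (Euc n) ℝ) :=
    (normSeminorm ℝ ℝ).comp (u : SchwartzMap (Euc n) ℝ →ₗ[ℝ] ℝ) with hqdef
  have hq : Continuous q := by
    have : ⇑q = fun φ => ‖u φ‖ := rfl
    rw [this]
    exact continuous_norm.comp u.continuous
  obtain ⟨s, C, hCne, hC⟩ :=
    Seminorm.bound_of_continuous (schwartz_withSeminorms ℝ (Euc n) ℝ) q hq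
  set N : ℕ := s.sup fun p => max p.1 p.2 with hN
  refine ⟨N, fun ψ hψ => ?_⟩
  -- the ε-independent constant
  set A : ℝ := 2 ^ N * ((N + 1) * (2 ^ N * ((SchwartzMap.seminorm ℝ 0 (N+1) ψ) *
      (Ksum n N * 2 ^ (N + 1))))) with hA
  have hB'0 : (0:ℝ) ≤ SchwartzMap.seminorm ℝ 0 (N+1) ψ := apply_nonneg _ _
  have hKs0 := Ksum_nonneg n N
  have hA0 : 0 ≤ A := by positivity
  have hmain : ∀ ε : ℝ, 0 < ε → ε ≤ 1 → ‖u ψ‖ ≤ (C : ℝ) * (A * ε) := by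
    intro ε hε hε1
    set φε := bilinLeftCLM (ContinuousLinearMap.mul ℝ ℝ) (cutoff_temperate (n := n) hε) ψ
      with hφε
    -- u ψ = u φε
    have hev : u ψ = u φε := by
      have hdisj : Disjoint (tsupport (⇑(ψ - φε))) ({0} : Set (Euc n)) := by
        have hsupp : tsupport (⇑(ψ - φε)) ⊆ {y : Euc n | ε ≤ ‖y‖} := by
          apply closure_minimal
          · intro y hy
            simp only [Function.mem_support] at hy
            by_contra hy'
            simp only [Set.mem_setOf_eq, not_le] at hy'
            apply hy
            have h1 : (ψ - φε) y = ψ y - ψ y * cutoff n ε y := by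
              rw [SchwartzMap.sub_apply]; rfl
            rw [h1, cutoff_eq_one hε (le_of_lt hy'), mul_one, sub_self]
          · exact isClosed_le continuous_const continuous_norm
        rw [Set.disjoint_singleton_right]
        intro h0
        have := hsupp h0
        simp only [Set.mem_setOf_eq, norm_zero] at this
        linarith
      have := hu (ψ - φε) hdisj
      rw [map_sub] at this
      linarith
    rw [hev]
    have h2 : ‖u φε‖ ≤ (C : ℝ) * ((s.sup (schwartzSeminormFamily ℝ (Euc n) ℝ)) φε) := by
      have := hC φε
      simpa [hqdef, NNReal.smul_def, Seminorm.comp_apply] using this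
    have h3 : (s.sup (schwartzSeminormFamily ℝ (Euc n) ℝ)) φε ≤ A * ε := by
      apply Seminorm.finset_sup_apply_le (by positivity)
      rintro ⟨k, l⟩ hkl
      have hk : k ≤ N := le_trans (le_max_left _ _) (Finset.le_sup (f := fun p => max p.1 p.2) hkl)
      have hl : l ≤ N := le_trans (le_max_right _ _) (Finset.le_sup (f := fun p => max p.1 p.2) hkl)
      have := mul_cutoff_seminorm_le (n := n) N k l hk hl ψ hψ hε hε1
      rw [schwartzSeminormFamily_apply]
      exact this
    calc ‖u φε‖ ≤ (C : ℝ) * ((s.sup (schwartzSeminormFamily ℝ (Euc n) ℝ)) φε) := h2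
      _ ≤ (C : ℝ) * (A * ε) := mul_le_mul_of_nonneg_left h3 (by positivity)
  -- conclude u ψ = 0
  by_contra hne
  have hpos : 0 < ‖u ψ‖ := norm_pos_iff.mpr hne
  set D : ℝ := (C : ℝ) * A with hD
  have hD0 : 0 ≤ D := by positivity
  set ε₀ : ℝ := min 1 (‖u ψ‖ / (2 * (D + 1))) with hε₀
  have hε₀pos : 0 < ε₀ := by
    apply lt_min one_pos
    positivity
  have hε₀le : ε₀ ≤ 1 := min_le_left _ _
  have h := hmain ε₀ hε₀pos hε₀le
  have hε₀le2 : ε₀ ≤ ‖u ψ‖ / (2 * (D + 1)) := min_le_right _ _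
  have : (C : ℝ) * (A * ε₀) = D * ε₀ := by rw [hD]; ring
  rw [this] at h
  have h2 : D * ε₀ ≤ (D + 1) * (‖u ψ‖ / (2 * (D + 1))) := by
    refine mul_le_mul (by linarith) hε₀le2 (le_of_lt hε₀pos) (by linarith)
  have h3 : (D + 1) * (‖u ψ‖ / (2 * (D + 1))) = ‖u ψ‖ / 2 := by
    field_simp
  rw [h3] at h2
  linarith

/-- Factor a linear functional through another linear map whose kernel it contains. -/
lemma factor_through {M W : Type} [AddCommGroup M] [Module ℝ M] [AddCommGroup W] [Module ℝ W]
    (J : M →ₗ[ℝ] W) (u : M →ₗ[ℝ] ℝ) (h : ∀ m, J m = 0 → u m = 0) :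
    ∃ lam : W →ₗ[ℝ] ℝ, ∀ m, lam (J m) = u m := by
  have hker : LinearMap.ker J ≤ LinearMap.ker u := fun m hm => h m hm
  set ubar := (LinearMap.ker J).liftQ u hker with hubar
  set e := J.quotKerEquivRange with he
  obtain ⟨g, hg⟩ := LinearMap.exists_extend (ubar.comp e.symm.toLinearMap)
  refine ⟨g, fun m => ?_⟩
  have h2 : e (Submodule.Quotient.mk m) = ⟨J m, LinearMap.mem_range_self J m⟩ :=
    Subtype.ext (J.quotKerEquivRange_apply_mk m)
  have h3 : g (J m) = (g.comp (LinearMap.range J).subtype) ⟨J m, LinearMap.mem_range_self J m⟩ :=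
    rfl
  rw [h3, hg]
  simp only [LinearMap.coe_comp, Function.comp_apply, LinearEquiv.coe_coe]
  rw [← h2, LinearEquiv.symm_apply_apply]
  rfl

/-- Any linear functional on continuous multilinear maps on `ℝⁿ` is a linear combination of
evaluations at tuples of basis vectors. -/
lemma multilinear_functional_decomp (n j : ℕ)
    (lam : ContinuousMultilinearMap ℝ (fun _ : Fin j => Euc n) ℝ →ₗ[ℝ] ℝ) :
    ∃ c : (Fin j → Fin n) → ℝ, ∀ m : ContinuousMultilinearMap ℝ (fun _ : Fin j => Euc n) ℝ,
      lam m = ∑ I : Fin j → Fin n, c I * m (fun t => EuclideanSpace.single (I t) (1 : ℝ)) := by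
  classical
  set bas := (EuclideanSpace.basisFun (Fin n) ℝ).toBasis with hbas
  have hbasapp : ∀ i, bas i = EuclideanSpace.single i (1 : ℝ) := by
    intro i
    rw [hbas, OrthonormalBasis.coe_toBasis, EuclideanSpace.basisFun_apply]
  set Φ : ContinuousMultilinearMap ℝ (fun _ : Fin j => Euc n) ℝ →ₗ[ℝ]
      ((Fin j → Fin n) → ℝ) :=
    { toFun := fun m I => m (fun t => EuclideanSpace.single (I t) (1 : ℝ))
      map_add' := fun a b => by ext I; simp
      map_smul' := fun r a => by ext I; simp } with hΦ
  have hΦinj : Function.Injective Φ := by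
    intro a b hab
    have hvals : ∀ v : Fin j → Fin n,
        a.toMultilinearMap (fun i => bas (v i)) = b.toMultilinearMap (fun i => bas (v i)) := by
      intro v
      have := congrFun hab v
      simp only [hΦ, LinearMap.coe_mk, AddHom.coe_mk] at this
      simpa [hbasapp] using this
    have := Module.Basis.ext_multilinear (fun _ => bas) hvals
    ext v
    exact DFunLike.congr_fun (congrArg ContinuousMultilinearMap.toMultilinearMap
      (ContinuousMultilinearMap.toMultilinearMap_injective this)) v
  set e := LinearEquiv.ofInjective Φ hΦinj with he
  obtain ⟨g, hg⟩ := LinearMap.exists_extend (lam.comp e.symm.toLinearMap)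
  refine ⟨fun I => g (Pi.single I (1:ℝ)), fun m => ?_⟩
  have h2 : e m = ⟨Φ m, LinearMap.mem_range_self Φ m⟩ :=
    Subtype.ext (LinearEquiv.ofInjective_apply Φ m)
  have h3 : g (Φ m) = lam m := by
    have : g (Φ m) = (g.comp (LinearMap.range Φ).subtype) ⟨Φ m, LinearMap.mem_range_self Φ m⟩ :=
      rfl
    rw [this, hg]
    simp only [LinearMap.coe_comp, Function.comp_apply, LinearEquiv.coe_coe]
    rw [← h2, LinearEquiv.symm_apply_apply]
  have h4 : Φ m = ∑ I : Fin j → Fin n, (Φ m I) • (Pi.single I (1 : ℝ) : (Fin j → Fin n) → ℝ) := by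
    conv_lhs => rw [← Finset.univ_sum_single (Φ m)]
    refine Finset.sum_congr rfl fun I _ => ?_
    rw [← Pi.single_smul, smul_eq_mul, mul_one]
  calc lam m = g (Φ m) := h3.symm
    _ = g (∑ I : Fin j → Fin n, (Φ m I) • (Pi.single I (1 : ℝ) : (Fin j → Fin n) → ℝ)) := by rw [← h4]
    _ = ∑ I : Fin j → Fin n, (Φ m I) * g (Pi.single I (1 : ℝ) : (Fin j → Fin n) → ℝ) := by
        rw [map_sum]
        congr 1; ext I
        rw [_root_.map_smul, smul_eq_mul]
    _ = ∑ I : Fin j → Fin n, g (Pi.single I (1:ℝ) : (Fin j → Fin n) → ℝ) * m (fun t => EuclideanSpace.single (I t) 1) := by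
        congr 1; ext I; rw [mul_comm]; rfl

variable {n : ℕ}

/-- Jet decomposition: a tempered distribution supported at the origin is a finite linear
combination of evaluations of iterated derivatives at basis directions. -/
lemma u_decomp (n : ℕ) (u : TDist (Euc n)) (hu : SuppIn u ({0} : Set (Euc n))) :
    ∃ (N : ℕ) (c : (j : Fin (N + 1)) → (Fin (j : ℕ) → Fin n) → ℝ),
      ∀ φ : SchwartzMap (Euc n) ℝ,
        u φ = ∑ j : Fin (N + 1), ∑ I : Fin (j : ℕ) → Fin n,
          c j I * iteratedFDeriv ℝ (j : ℕ) (⇑φ) 0 (fun t => EuclideanSpace.single (I t) (1:ℝ)) := by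
  classical
  obtain ⟨N, hN⟩ := key_order n u hu
  have hsm : ∀ (f : SchwartzMap (Euc n) ℝ) (i : ℕ), ContDiff ℝ (i : ℕ) (⇑f) := by
    intro f i
    exact f.smooth i
  set J : SchwartzMap (Euc n) ℝ →ₗ[ℝ]
      ((j : Fin (N + 1)) → ContinuousMultilinearMap ℝ (fun _ : Fin (j : ℕ) => Euc n) ℝ) :=
    { toFun := fun φ j => iteratedFDeriv ℝ (j : ℕ) (⇑φ) 0
      map_add' := fun φ ψ => by
        funext j
        show iteratedFDeriv ℝ (j : ℕ) (⇑(φ + ψ)) 0 =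
          iteratedFDeriv ℝ (j : ℕ) (⇑φ) 0 + iteratedFDeriv ℝ (j : ℕ) (⇑ψ) 0
        have hc : ⇑(φ + ψ) = ⇑φ + ⇑ψ := rfl
        rw [hc]
        exact iteratedFDeriv_add_apply (hsm φ _).contDiffAt (hsm ψ _).contDiffAt
      map_smul' := fun r φ => by
        funext j
        show iteratedFDeriv ℝ (j : ℕ) (⇑(r • φ)) 0 = r • iteratedFDeriv ℝ (j : ℕ) (⇑φ) 0
        have hc : ⇑(r • φ) = r • ⇑φ := rfl
        rw [hc]
        exact iteratedFDeriv_const_smul_apply (hsm φ _).contDiffAt } with hJ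
  have hker : ∀ φ, J φ = 0 → (u : SchwartzMap (Euc n) ℝ →ₗ[ℝ] ℝ) φ = 0 := by
    intro φ hφ
    apply hN
    intro j hj
    have := congrFun hφ ⟨j, by omega⟩
    exact this
  obtain ⟨lam, hlam⟩ := factor_through J (u : SchwartzMap (Euc n) ℝ →ₗ[ℝ] ℝ) hker
  have H := fun j : Fin (N + 1) =>
    multilinear_functional_decomp n (j : ℕ)
      (lam.comp (LinearMap.single ℝ
        (fun j : Fin (N+1) => ContinuousMultilinearMap ℝ (fun _ : Fin (j : ℕ) => Euc n) ℝ) j))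
  choose c hc using H
  refine ⟨N, c, fun φ => ?_⟩
  have h1 : u φ = lam (J φ) := (hlam φ).symm
  have h2 : J φ = ∑ j : Fin (N + 1), Pi.single j (iteratedFDeriv ℝ (j : ℕ) (⇑φ) 0) :=
    (Finset.univ_sum_single (J φ)).symm
  rw [h1, h2, map_sum]
  refine Finset.sum_congr rfl fun j _ => ?_
  exact hc j (iteratedFDeriv ℝ (j : ℕ) (⇑φ) 0)

lemma iter_zero_eq (m : ℕ) (hm : m = 0) (vec : Fin m → Euc n) (φ : SchwartzMap (Euc n) ℝ) :
    iteratedFDeriv ℝ m (⇑φ) 0 vec = φ 0 := by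
  subst hm
  rw [iteratedFDeriv_zero_apply]

/-- The evaluation-of-derivative distributions. -/
def wdist (n m : ℕ) (I : Fin m → Fin n) : TDist (Euc n) :=
  ((BoundedContinuousFunction.evalCLM ℝ (0 : Euc n)).comp
    (SchwartzMap.toBoundedContinuousFunctionCLM ℝ (Euc n) ℝ)).comp
    (LineDeriv.iteratedLineDerivOpCLM ℝ (SchwartzMap (Euc n) ℝ)
      (fun t => EuclideanSpace.single (I t) (1 : ℝ)))

lemma wdist_apply (m : ℕ) (I : Fin m → Fin n) (φ : SchwartzMap (Euc n) ℝ) :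
    wdist n m I φ = iteratedFDeriv ℝ m (⇑φ) 0 (fun t => EuclideanSpace.single (I t) (1:ℝ)) := by
  rw [wdist, ContinuousLinearMap.comp_apply]
  exact SchwartzMap.iteratedLineDerivOp_eq_iteratedFDeriv

lemma suppIn_wdist (m : ℕ) (I : Fin m → Fin n) : SuppIn (wdist n m I) ({0} : Set (Euc n)) := by
  intro φ hdisj
  rw [wdist_apply]
  have h0 : (0 : Euc n) ∉ tsupport (⇑φ) := by
    rw [Set.disjoint_singleton_right] at hdisj
    exact hdisj
  have hev : ⇑φ =ᶠ[nhds (0 : Euc n)] 0 := by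
    refine Filter.eventuallyEq_of_mem ((isClosed_tsupport _).isOpen_compl.mem_nhds h0) ?_
    intro y hy
    exact image_eq_zero_of_notMem_tsupport hy
  rw [iter_eq_zero_of_eventually hev m]
  rfl


lemma suppIn_zero : SuppIn (0 : TDist (Euc n)) ({0} : Set (Euc n)) := fun _ _ => rfl

lemma suppIn_neg {w : TDist (Euc n)} (h : SuppIn w ({0} : Set (Euc n))) :
    SuppIn (-w) ({0} : Set (Euc n)) := by
  intro φ hφ
  simp [ContinuousLinearMap.neg_apply, h φ hφ]

lemma suppIn_add {w₁ w₂ : TDist (Euc n)} (h₁ : SuppIn w₁ ({0} : Set (Euc n)))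
    (h₂ : SuppIn w₂ ({0} : Set (Euc n))) : SuppIn (w₁ + w₂) ({0} : Set (Euc n)) := by
  intro φ hφ
  simp [ContinuousLinearMap.add_apply, h₁ φ hφ, h₂ φ hφ]

lemma suppIn_smul (r : ℝ) {w : TDist (Euc n)} (h : SuppIn w ({0} : Set (Euc n))) :
    SuppIn (r • w) ({0} : Set (Euc n)) := by
  intro φ hφ
  simp [ContinuousLinearMap.smul_apply, h φ hφ]

lemma pDeriv_zero (i : Fin n) : pDeriv n i (0 : TDist (Euc n)) = 0 := by
  ext φ
  simp [pDeriv, dirDeriv]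

lemma pDeriv_add (i : Fin n) (a b : TDist (Euc n)) :
    pDeriv n i (a + b) = pDeriv n i a + pDeriv n i b := by
  ext φ
  simp [pDeriv, dirDeriv]
  ring

lemma pDeriv_smul (i : Fin n) (r : ℝ) (a : TDist (Euc n)) :
    pDeriv n i (r • a) = r • pDeriv n i a := by
  ext φ
  simp [pDeriv, dirDeriv]

/-- The distributions expressible as a divergence of distributions supported at the origin. -/
def IsDiv (n : ℕ) (w : TDist (Euc n)) : Prop :=
  ∃ v : Fin n → TDist (Euc n),
    (∀ i : Fin n, SuppIn (v i) ({0} : Set (Euc n))) ∧ w = ∑ i : Fin n, pDeriv n i (v i)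

lemma isDiv_zero : IsDiv n (0 : TDist (Euc n)) :=
  ⟨0, fun _ => suppIn_zero, by simp [pDeriv_zero]⟩

lemma isDiv_add {a b : TDist (Euc n)} (ha : IsDiv n a) (hb : IsDiv n b) : IsDiv n (a + b) := by
  obtain ⟨v₁, hs₁, rfl⟩ := ha
  obtain ⟨v₂, hs₂, rfl⟩ := hb
  refine ⟨v₁ + v₂, fun i => suppIn_add (hs₁ i) (hs₂ i), ?_⟩
  rw [← Finset.sum_add_distrib]
  refine Finset.sum_congr rfl fun i _ => ?_
  rw [Pi.add_apply, pDeriv_add]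

lemma isDiv_smul (r : ℝ) {a : TDist (Euc n)} (ha : IsDiv n a) : IsDiv n (r • a) := by
  obtain ⟨v, hs, rfl⟩ := ha
  refine ⟨r • v, fun i => suppIn_smul r (hs i), ?_⟩
  rw [Finset.smul_sum]
  refine Finset.sum_congr rfl fun i _ => ?_
  rw [Pi.smul_apply, pDeriv_smul]

lemma isDiv_sum {ι : Type} (s : Finset ι) (f : ι → TDist (Euc n))
    (h : ∀ i ∈ s, IsDiv n (f i)) : IsDiv n (∑ i ∈ s, f i) :=
  Finset.sum_induction f (IsDiv n) (fun _ _ ha hb => isDiv_add ha hb) isDiv_zero h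

lemma isDiv_wdist (m : ℕ) (hm : 1 ≤ m) (I : Fin m → Fin n) : IsDiv n (wdist n m I) := by
  classical
  obtain ⟨k, rfl⟩ : ∃ k, m = k + 1 := ⟨m - 1, by omega⟩
  set i₀ : Fin n := I (Fin.last k) with hi₀
  set w' : TDist (Euc n) := ((BoundedContinuousFunction.evalCLM ℝ (0 : Euc n)).comp
    (SchwartzMap.toBoundedContinuousFunctionCLM ℝ (Euc n) ℝ)).comp
    (LineDeriv.iteratedLineDerivOpCLM ℝ (SchwartzMap (Euc n) ℝ)
      (fun t : Fin k => EuclideanSpace.single (I t.castSucc) (1 : ℝ))) with hw'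
  have hw'supp : SuppIn w' ({0} : Set (Euc n)) := by
    have := suppIn_wdist (n := n) k (fun t => I t.castSucc)
    exact this
  refine ⟨Pi.single i₀ (-w'), fun i => ?_, ?_⟩
  · rcases eq_or_ne i i₀ with rfl | hne
    · rw [Pi.single_eq_same]
      exact suppIn_neg hw'supp
    · rw [Pi.single_eq_of_ne hne]
      exact suppIn_zero
  · rw [Finset.sum_eq_single i₀]
    · rw [Pi.single_eq_same]
      ext φ
      have h1 : pDeriv n i₀ (-w') φ = w' ((LineDeriv.lineDerivOpCLM ℝ (SchwartzMap (Euc n) ℝ)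
          (EuclideanSpace.single i₀ (1 : ℝ))) φ) := by
        simp [pDeriv, dirDeriv]
      rw [h1, hw', wdist, ContinuousLinearMap.comp_apply, ContinuousLinearMap.comp_apply,
        LineDeriv.iteratedLineDerivOpCLM_apply, LineDeriv.iteratedLineDerivOp_succ_right]
      rfl
    · intro i _ hne
      rw [Pi.single_eq_of_ne hne, pDeriv_zero]
    · intro h
      exact absurd (Finset.mem_univ i₀) h

/-- Any tempered distribution on `ℝⁿ` (`n ≥ 1`) supported in `{0}` is, modulo a multiple
of the Dirac delta, a sum of first derivatives of distributions supported in `{0}`: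
`u = c·δ + ∑ᵢ ∂ᵢvᵢ`. -/
theorem dist_at_origin_eq_delta_add_divergence (n : ℕ) (hn : 1 ≤ n) (u : TDist (Euc n))
    (hu : SuppIn u ({0} : Set (Euc n))) :
    ∃ (c : ℝ) (v : Fin n → TDist (Euc n)),
      (∀ i : Fin n, SuppIn (v i) ({0} : Set (Euc n))) ∧
      u = c • diracDelta n + ∑ i : Fin n, pDeriv n i (v i) := by
  classical
  obtain ⟨N, c, hdec⟩ := u_decomp n u hu
  have hu_eq : u = ∑ j : Fin (N + 1), ∑ I : Fin (j : ℕ) → Fin n, c j I • wdist n (j : ℕ) I := by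
    ext φ
    rw [hdec φ, ContinuousLinearMap.sum_apply]
    refine Finset.sum_congr rfl fun j _ => ?_
    rw [ContinuousLinearMap.sum_apply]
    refine Finset.sum_congr rfl fun I _ => ?_
    rw [ContinuousLinearMap.smul_apply, wdist_apply, smul_eq_mul]
  set c0 : ℝ := ∑ I : Fin ((0 : Fin (N + 1)) : ℕ) → Fin n, c 0 I with hc0
  have h0 : (∑ I : Fin ((0 : Fin (N + 1)) : ℕ) → Fin n,
      c 0 I • wdist n ((0 : Fin (N + 1)) : ℕ) I) = c0 • diracDelta n := by
    have hwd : ∀ I : Fin ((0 : Fin (N + 1)) : ℕ) → Fin n,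
        wdist n ((0 : Fin (N + 1)) : ℕ) I = diracDelta n := by
      intro I
      ext φ
      rw [wdist_apply]
      exact iter_zero_eq _ (Fin.val_zero _) _ φ
    calc (∑ I : Fin ((0 : Fin (N + 1)) : ℕ) → Fin n, c 0 I • wdist n ((0 : Fin (N + 1)) : ℕ) I)
        = ∑ I : Fin ((0 : Fin (N + 1)) : ℕ) → Fin n, c 0 I • diracDelta n :=
          Finset.sum_congr rfl fun I _ => by rw [hwd I]
      _ = c0 • diracDelta n := by rw [← Finset.sum_smul]
  have hrest : IsDiv n (∑ j : Fin N, ∑ I : Fin ((Fin.succ j : Fin (N + 1)) : ℕ) → Fin n,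
      c (Fin.succ j) I • wdist n ((Fin.succ j : Fin (N + 1)) : ℕ) I) := by
    refine isDiv_sum _ _ fun j _ => isDiv_sum _ _ fun I _ => isDiv_smul _ ?_
    exact isDiv_wdist _ (by simp [Fin.val_succ]) I
  obtain ⟨v, hv, hveq⟩ := hrest
  refine ⟨c0, v, hv, ?_⟩
  rw [hu_eq, Fin.sum_univ_succ, h0, ← hveq]
end
end

section
/- Let n ≥ 1. For every tempered distribution u on ℝⁿ there exist tempered distributions v₁, …, vₙ on ℝⁿ such that u = Σ_{i=1}^{n} ∂ᵢvᵢ; that is, every tempered distribution on ℝⁿ is a distributional divergence (top-degree exactness of the tempered de Rham complex on ℝⁿ). -/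
open MeasureTheory SchwartzMap

noncomputable section

section Aux

variable {E : Type} [NormedAddCommGroup E] [InnerProductSpace ℝ E]

def pderivCLM (_ : Type) (m : E) : 𝓢(E, ℝ) →L[ℝ] 𝓢(E, ℝ) :=
  LineDeriv.lineDerivOpCLM ℝ 𝓢(E, ℝ) m

theorem pderivCLM_apply (𝕜 : Type) (m : E) (f : 𝓢(E, ℝ)) (x : E) :
    pderivCLM 𝕜 m f x = fderiv ℝ f x m := rfl

def iteratedPDeriv (_ : Type) {n : ℕ} (m : Fin n → E) (f : 𝓢(E, ℝ)) : 𝓢(E, ℝ) :=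
  LineDeriv.iteratedLineDerivOp m f

theorem iteratedPDeriv_zero (𝕜 : Type) (m : Fin 0 → E) (f : 𝓢(E, ℝ)) :
    iteratedPDeriv 𝕜 m f = f := rfl

theorem iteratedPDeriv_succ_left (𝕜 : Type) {n : ℕ} (m : Fin (n + 1) → E) (f : 𝓢(E, ℝ)) :
    iteratedPDeriv 𝕜 m f = pderivCLM 𝕜 (m 0) (iteratedPDeriv 𝕜 (Fin.tail m) f) := rfl

theorem iteratedPDeriv_eq_iteratedFDeriv {𝕜 : Type} {n : ℕ} {m : Fin n → E} {f : 𝓢(E, ℝ)}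
    {x : E} : iteratedPDeriv 𝕜 m f x = iteratedFDeriv ℝ n f x m :=
  SchwartzMap.iteratedLineDerivOp_eq_iteratedFDeriv

-- Lemma A: pderiv commute
theorem pderiv_comm (a b : E) (f : 𝓢(E, ℝ)) :
    pderivCLM ℝ a (pderivCLM ℝ b f) = pderivCLM ℝ b (pderivCLM ℝ a f) := by
  ext x
  have hsymm : IsSymmSndFDerivAt ℝ f x :=
    (f.smooth 2).contDiffAt.isSymmSndFDerivAt (by simp [minSmoothness_of_isRCLikeNormedField])
  have key : ∀ c d : E, pderivCLM ℝ c (pderivCLM ℝ d f) x = fderiv ℝ (fderiv ℝ f) x c d := by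
    intro c d
    rw [pderivCLM_apply]
    have hcongr : (pderivCLM ℝ d f : E → ℝ) = fun y => (fderiv ℝ f y) d := by
      ext y; exact pderivCLM_apply ℝ d f y
    rw [hcongr]
    have hdiff : DifferentiableAt ℝ (fderiv ℝ f) x := by
      have : ContDiff ℝ 1 (fderiv ℝ f) := (f.smooth 2).fderiv_right le_rfl
      exact this.differentiable one_ne_zero x
    have := hdiff.hasFDerivAt.clm_apply (hasFDerivAt_const d x)
    rw [this.fderiv]; simp
  rw [key a b, key b a, hsymm.eq a b]

-- Lemma B
theorem pderiv_iteratedPDeriv_comm {m : ℕ} (e : E) (v : Fin m → E) (f : 𝓢(E, ℝ)) :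
    pderivCLM ℝ e (iteratedPDeriv ℝ v f) = iteratedPDeriv ℝ v (pderivCLM ℝ e f) := by
  induction m with
  | zero => simp [iteratedPDeriv_zero]
  | succ m ih =>
      rw [iteratedPDeriv_succ_left, iteratedPDeriv_succ_left,
        pderiv_comm e (v 0), ih (Fin.tail v)]

open Real in
-- Key FTC estimate
theorem line_bound (ψ : 𝓢(E, ℝ)) (d : E) (hd : ‖d‖ = 1) (x : E)
    (hxd : 0 ≤ (inner ℝ x d : ℝ)) (k : ℕ) (S : ℝ)
    (hS : ∀ y : E, (1 + ‖y‖) ^ (k + 2) * |pderivCLM ℝ d ψ y| ≤ S) :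
    (1 + ‖x‖) ^ k * |ψ x| ≤ π * S := by
  set g : 𝓢(E, ℝ) := pderivCLM ℝ d ψ with hg
  have hS0 : 0 ≤ S := le_trans (by positivity) (hS x)
  set h : ℝ → ℝ := fun t => ψ (x + t • d) with hh
  set h' : ℝ → ℝ := fun t => g (x + t • d) with hh'
  -- the curve derivative
  have hderiv : ∀ t : ℝ, HasDerivAt h (h' t) t := by
    intro t
    have hline : HasDerivAt (fun t : ℝ => x + t • d) d t := by
      have := ((hasDerivAt_id t).smul_const d).const_add x
      simpa using this
    have := (ψ.differentiableAt.hasFDerivAt).comp_hasDerivAt t hline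
    simpa [hh, hh', hg, pderivCLM_apply, Function.comp_def] using this
  -- norm lower bounds along the ray
  have fact1 : ∀ t : ℝ, 0 ≤ t → ‖x‖ ≤ ‖x + t • d‖ := by
    intro t ht
    have hsq : ‖x + t • d‖ ^ 2 = ‖x‖ ^ 2 + 2 * (t * (inner ℝ x d : ℝ)) + t ^ 2 := by
      rw [norm_add_sq_real, real_inner_smul_right, norm_smul]
      simp [hd, abs_mul_abs_self, mul_pow]
    nlinarith [norm_nonneg (x + t • d), norm_nonneg x, mul_nonneg ht hxd]
  have fact2 : ∀ t : ℝ, 0 ≤ t → t ≤ ‖x + t • d‖ := by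
    intro t ht
    have h1 : (inner ℝ (x + t • d) d : ℝ) ≤ ‖x + t • d‖ := by
      simpa [hd] using real_inner_le_norm (x + t • d) d
    have h2 : (inner ℝ (x + t • d) d : ℝ) = (inner ℝ x d : ℝ) + t := by
      rw [inner_add_left, real_inner_smul_left, real_inner_self_eq_norm_sq]
      simp [hd]
    linarith
  -- pointwise bound on the derivative
  have hpt : ∀ t : ℝ, 0 ≤ t → (1 + ‖x‖) ^ k * |h' t| ≤ S * (1 + t ^ 2)⁻¹ := by
    intro t ht
    set y := x + t • d
    have hy1 : (1 + ‖x‖) ^ k ≤ (1 + ‖y‖) ^ k :=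
      pow_le_pow_left₀ (by positivity) (by linarith [fact1 t ht]) k
    have hy2 : 1 + t ^ 2 ≤ (1 + ‖y‖) ^ 2 := by nlinarith [fact2 t ht, norm_nonneg y]
    have hkey : (1 + ‖x‖) ^ k * (1 + t ^ 2) * |h' t| ≤ S := by
      refine le_trans ?_ (hS y)
      have : (1 + ‖y‖) ^ (k + 2) = (1 + ‖y‖) ^ k * (1 + ‖y‖) ^ 2 := by ring
      rw [this]
      have habs : (0:ℝ) ≤ |h' t| := abs_nonneg _
      have := mul_le_mul hy1 hy2 (by positivity) (by positivity)
      exact mul_le_mul_of_nonneg_right this habs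
    have hpos : (0:ℝ) < 1 + t ^ 2 := by positivity
    rw [mul_comm S, ← div_eq_inv_mul, le_div_iff₀ hpos]
    calc (1 + ‖x‖) ^ k * |h' t| * (1 + t ^ 2)
        = (1 + ‖x‖) ^ k * (1 + t ^ 2) * |h' t| := by ring
      _ ≤ S := hkey
  have hone : (1:ℝ) ≤ (1 + ‖x‖) ^ k := one_le_pow₀ (by linarith [norm_nonneg x])
  -- integrability of the derivative along the ray
  have hmeas : Continuous h' := g.continuous.comp (by continuity)
  have hint : IntegrableOn h' (Set.Ioi (0:ℝ)) := by
    refine Integrable.mono' ((integrable_inv_one_add_sq.const_mul S).integrableOn)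
      hmeas.aestronglyMeasurable.restrict ?_
    filter_upwards [ae_restrict_mem measurableSet_Ioi] with t ht
    have := hpt t (le_of_lt ht)
    calc ‖h' t‖ = |h' t| := rfl
      _ ≤ (1 + ‖x‖) ^ k * |h' t| := le_mul_of_one_le_left (abs_nonneg _) hone
      _ ≤ S * (1 + t ^ 2)⁻¹ := this
  -- decay of h at infinity
  have htend : Filter.Tendsto h Filter.atTop (nhds 0) := by
    set C : ℝ := 2 ^ 1 * (Finset.Iic (1, 0)).sup (fun m => SchwartzMap.seminorm ℝ m.1 m.2) ψ with hC
    have hdecay : ∀ t : ℝ, 0 ≤ t → ‖h t‖ ≤ C * (1 + t)⁻¹ := by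
      intro t ht
      have h1 : (1 + ‖x + t • d‖) ^ 1 * ‖iteratedFDeriv ℝ 0 (ψ : E → ℝ) (x + t • d)‖ ≤ C :=
        one_add_le_sup_seminorm_apply (𝕜 := ℝ) (m := (1, 0)) le_rfl le_rfl ψ (x + t • d)
      rw [norm_iteratedFDeriv_zero, pow_one] at h1
      have h2 : (1 + t) ≤ 1 + ‖x + t • d‖ := by linarith [fact2 t ht]
      have hpos : (0:ℝ) < 1 + t := by linarith
      calc ‖h t‖ = ‖ψ (x + t • d)‖ := rfl
        _ ≤ C / (1 + ‖x + t • d‖) := by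
            rw [le_div_iff₀ (by positivity)]
            calc ‖ψ (x + t • d)‖ * (1 + ‖x + t • d‖)
                = (1 + ‖x + t • d‖) * ‖ψ (x + t • d)‖ := by ring
              _ ≤ C := h1
        _ ≤ C / (1 + t) := by
            apply div_le_div_of_nonneg_left ?_ hpos h2
            exact le_trans (by positivity) h1
        _ = C * (1 + t)⁻¹ := by rw [div_eq_mul_inv]
    have hzero : Filter.Tendsto (fun t : ℝ => C * (1 + t)⁻¹) Filter.atTop (nhds 0) := by
      have : Filter.Tendsto (fun t : ℝ => (1 + t)⁻¹) Filter.atTop (nhds 0) :=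
        Filter.Tendsto.inv_tendsto_atTop (by exact Filter.tendsto_atTop_add_const_left _ 1 Filter.tendsto_id)
      simpa using this.const_mul C
    exact squeeze_zero_norm' (Filter.eventually_atTop.2 ⟨0, hdecay⟩) hzero
  -- FTC on [0, ∞)
  have hFTC : ∫ t in Set.Ioi (0:ℝ), h' t = 0 - h 0 :=
    MeasureTheory.integral_Ioi_of_hasDerivAt_of_tendsto' (fun t _ => hderiv t) hint htend
  have hval : |ψ x| = ‖∫ t in Set.Ioi (0:ℝ), h' t‖ := by
    rw [hFTC]; simp [hh]
  calc (1 + ‖x‖) ^ k * |ψ x|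
      = (1 + ‖x‖) ^ k * ‖∫ t in Set.Ioi (0:ℝ), h' t‖ := by rw [hval]
    _ ≤ (1 + ‖x‖) ^ k * ∫ t in Set.Ioi (0:ℝ), ‖h' t‖ := by
        apply mul_le_mul_of_nonneg_left (MeasureTheory.norm_integral_le_integral_norm _) (by positivity)
    _ = ∫ t in Set.Ioi (0:ℝ), (1 + ‖x‖) ^ k * ‖h' t‖ := (MeasureTheory.integral_const_mul _ _).symm
    _ ≤ ∫ t in Set.Ioi (0:ℝ), S * (1 + t ^ 2)⁻¹ := by
        apply MeasureTheory.setIntegral_mono_on (hint.norm.const_mul _)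
          ((integrable_inv_one_add_sq.const_mul S).integrableOn) measurableSet_Ioi
        intro t ht
        exact hpt t (le_of_lt ht)
    _ = S * (π / 2 - arctan 0) := by
        rw [MeasureTheory.integral_const_mul, integral_Ioi_inv_one_add_sq]
    _ ≤ π * S := by
        rw [arctan_zero]
        nlinarith [pi_pos]

open Real in
theorem seminorm_bound (k m : ℕ) (e : E) (he : ‖e‖ = 1) (φ : 𝓢(E, ℝ)) :
    SchwartzMap.seminorm ℝ k m φ ≤
      π * (2 ^ (k + 2) *
        (Finset.Iic (k + 2, m)).sup (fun p => SchwartzMap.seminorm ℝ p.1 p.2)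
          (pderivCLM ℝ e φ)) := by
  set g : 𝓢(E, ℝ) := pderivCLM ℝ e φ with hgdef
  set S₀ : ℝ := 2 ^ (k + 2) *
      (Finset.Iic (k + 2, m)).sup (fun p => SchwartzMap.seminorm ℝ p.1 p.2) g with hS₀
  have hS₀0 : 0 ≤ S₀ := by
    apply mul_nonneg (by positivity)
    exact apply_nonneg _ _
  have hM : 0 ≤ π * S₀ := mul_nonneg pi_pos.le hS₀0
  apply SchwartzMap.seminorm_le_bound ℝ k m φ hM
  intro x
  have hsmul : ‖x‖ ^ k * ‖iteratedFDeriv ℝ m (φ : E → ℝ) x‖ =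
      ‖(‖x‖ ^ k) • iteratedFDeriv ℝ m (φ : E → ℝ) x‖ := by
    rw [norm_smul (‖x‖ ^ k) (iteratedFDeriv ℝ m (φ : E → ℝ) x)]
    congr 1
    simp [abs_of_nonneg (by positivity : (0:ℝ) ≤ ‖x‖ ^ k)]
  rw [hsmul]
  apply ContinuousMultilinearMap.opNorm_le_bound hM
  intro v
  set P : ℝ := ∏ i, ‖v i‖ with hP
  have hP0 : 0 ≤ P := Finset.prod_nonneg fun i _ => norm_nonneg _
  set ψ : 𝓢(E, ℝ) := iteratedPDeriv ℝ v φ with hψ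
  have hTv : iteratedFDeriv ℝ m (φ : E → ℝ) x v = ψ x :=
    (iteratedPDeriv_eq_iteratedFDeriv (𝕜 := ℝ)).symm
  -- choose direction
  obtain ⟨d, hd, hxd, hpd⟩ : ∃ d : E, ‖d‖ = 1 ∧ 0 ≤ (inner ℝ x d : ℝ) ∧
      ∀ y, |pderivCLM ℝ d ψ y| = |iteratedPDeriv ℝ v g y| := by
    rcases le_total 0 (inner ℝ x e : ℝ) with hc | hc
    · exact ⟨e, he, hc, fun y => by
        rw [pderiv_iteratedPDeriv_comm e v φ]⟩
    · refine ⟨-e, by simpa using he, by simpa using neg_nonneg.mpr hc, fun y => ?_⟩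
      have : pderivCLM ℝ (-e) ψ y = -(pderivCLM ℝ e ψ y) := by
        simp [pderivCLM_apply]
      rw [this, abs_neg, pderiv_iteratedPDeriv_comm e v φ]
  have hS : ∀ y : E, (1 + ‖y‖) ^ (k + 2) * |pderivCLM ℝ d ψ y| ≤ S₀ * P := by
    intro y
    rw [hpd y]
    have h1 : |iteratedPDeriv ℝ v g y| ≤ ‖iteratedFDeriv ℝ m (g : E → ℝ) y‖ * P := by
      rw [show |iteratedPDeriv ℝ v g y| = ‖iteratedFDeriv ℝ m (g : E → ℝ) y v‖ by
        rw [iteratedPDeriv_eq_iteratedFDeriv (𝕜 := ℝ)]; rfl]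
      exact (iteratedFDeriv ℝ m (g : E → ℝ) y).le_opNorm v
    calc (1 + ‖y‖) ^ (k + 2) * |iteratedPDeriv ℝ v g y|
        ≤ (1 + ‖y‖) ^ (k + 2) * (‖iteratedFDeriv ℝ m (g : E → ℝ) y‖ * P) :=
          mul_le_mul_of_nonneg_left h1 (by positivity)
      _ = ((1 + ‖y‖) ^ (k + 2) * ‖iteratedFDeriv ℝ m (g : E → ℝ) y‖) * P := by ring
      _ ≤ S₀ * P := by
          apply mul_le_mul_of_nonneg_right ?_ hP0
          exact one_add_le_sup_seminorm_apply (𝕜 := ℝ) (m := (k + 2, m)) le_rfl le_rfl g y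
  have hmain := line_bound ψ d hd x hxd k (S₀ * P) hS
  calc ‖(‖x‖ ^ k • iteratedFDeriv ℝ m (φ : E → ℝ) x) v‖
      = ‖x‖ ^ k * |ψ x| := by
        rw [ContinuousMultilinearMap.smul_apply,
          norm_smul (‖x‖ ^ k) (iteratedFDeriv ℝ m (φ : E → ℝ) x v), hTv]
        congr 1
        simp [abs_of_nonneg (by positivity : (0:ℝ) ≤ ‖x‖ ^ k)]
    _ ≤ (1 + ‖x‖) ^ k * |ψ x| := by
        apply mul_le_mul_of_nonneg_right ?_ (abs_nonneg _)
        exact pow_le_pow_left₀ (norm_nonneg x) (by linarith) k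
    _ ≤ π * (S₀ * P) := hmain
    _ = π * S₀ * P := by ring

open Real in
theorem pderiv_injective (e : E) (he : ‖e‖ = 1) (φ : 𝓢(E, ℝ))
    (h : pderivCLM ℝ e φ = 0) : φ = 0 := by
  ext x
  have hneg : pderivCLM ℝ (-e) φ = 0 := by
    ext y
    have : pderivCLM ℝ (-e) φ y = -(pderivCLM ℝ e φ y) := by simp [pderivCLM_apply]
    rw [this, h]; simp
  obtain ⟨d, hd, hxd, hzero⟩ : ∃ d : E, ‖d‖ = 1 ∧ 0 ≤ (inner ℝ x d : ℝ) ∧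
      pderivCLM ℝ d φ = 0 := by
    rcases le_total 0 (inner ℝ x e : ℝ) with hc | hc
    · exact ⟨e, he, hc, h⟩
    · exact ⟨-e, by simpa using he, by simpa using neg_nonneg.mpr hc, hneg⟩
  have := line_bound φ d hd x hxd 0 0 (fun y => by rw [hzero]; simp)
  simp only [pow_zero, one_mul, mul_zero] at this
  have := abs_nonneg (φ x)
  simp only [SchwartzMap.coe_zero, Pi.zero_apply]
  linarith [abs_nonneg (φ x), (abs_le.mp (by linarith : |φ x| ≤ 0)).1,
    (abs_le.mp (by linarith : |φ x| ≤ 0)).2]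

open Real Seminorm in
/-- Every tempered distribution is a single directional derivative. -/
theorem exists_antideriv (e : E) (he : ‖e‖ = 1) (u : 𝓢(E, ℝ) →L[ℝ] ℝ) :
    ∃ v : 𝓢(E, ℝ) →L[ℝ] ℝ, ∀ φ : 𝓢(E, ℝ), v (pderivCLM ℝ e φ) = -(u φ) := by
  classical
  set p : SeminormFamily ℝ 𝓢(E, ℝ) (ℕ × ℕ) := schwartzSeminormFamily ℝ E ℝ with hp
  -- continuity bound for u
  have hq : Continuous fun φ => ‖u φ‖ := u.continuous.norm
  obtain ⟨s, C, hC0, hCb⟩ := Seminorm.bound_of_continuous (schwartz_withSeminorms ℝ E ℝ)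
    ((normSeminorm ℝ ℝ).comp (u : 𝓢(E, ℝ) →ₗ[ℝ] ℝ)) hq
  set K : ℕ := s.sup (fun i => max i.1 i.2) with hK
  have hsub : s ⊆ Finset.Iic (K, K) := by
    intro i hi
    simp only [Finset.mem_Iic]
    constructor
    · exact le_trans (le_max_left _ _) (Finset.le_sup (f := fun i : ℕ × ℕ => max i.1 i.2) hi)
    · exact le_trans (le_max_right _ _) (Finset.le_sup (f := fun i : ℕ × ℕ => max i.1 i.2) hi)
  set A : ℝ := (C : ℝ) * (π * 2 ^ (K + 2)) with hA
  have hA0 : 0 ≤ A := by positivity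
  set Q : Seminorm ℝ 𝓢(E, ℝ) := (Finset.Iic (K + 2, K)).sup p with hQ
  set N : 𝓢(E, ℝ) → ℝ := fun ψ => A * Q ψ with hN
  -- the fundamental estimate: |u φ| ≤ N (∂ₑ φ)
  have hu : ∀ φ : 𝓢(E, ℝ), ‖u φ‖ ≤ N (pderivCLM ℝ e φ) := by
    intro φ
    have h1 : ‖u φ‖ ≤ (C : ℝ) * (Finset.Iic (K, K)).sup p φ := by
      have := hCb φ
      simp only [Seminorm.comp_apply, Seminorm.smul_apply, coe_normSeminorm,
        NNReal.smul_def, smul_eq_mul] at this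
      refine le_trans this ?_
      gcongr
      exact Seminorm.le_def.mp (Finset.sup_mono hsub) φ
    have h2 : (Finset.Iic (K, K)).sup p φ ≤ π * 2 ^ (K + 2) * Q (pderivCLM ℝ e φ) := by
      apply Seminorm.finset_sup_apply_le (by positivity)
      intro i hi
      have hiK := Prod.le_def.mp (Finset.mem_Iic.mp hi)
      have hb := seminorm_bound i.1 i.2 e he φ
      refine le_trans hb ?_
      have hsup : (Finset.Iic (i.1 + 2, i.2)).sup p (pderivCLM ℝ e φ) ≤
          Q (pderivCLM ℝ e φ) := by
        apply Seminorm.le_def.mp (Finset.sup_mono ?_)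
        intro j hj
        simp only [Finset.mem_Iic, Prod.le_def] at hj ⊢
        exact ⟨le_trans hj.1 (add_le_add_left hiK.1 2), le_trans hj.2 hiK.2⟩
      have hpow : (2:ℝ) ^ (i.1 + 2) ≤ 2 ^ (K + 2) :=
        pow_le_pow_right₀ one_le_two (add_le_add_left hiK.1 2)
      calc π * (2 ^ (i.1 + 2) * (Finset.Iic (i.1 + 2, i.2)).sup p (pderivCLM ℝ e φ))
          ≤ π * (2 ^ (K + 2) * Q (pderivCLM ℝ e φ)) := by
            apply mul_le_mul_of_nonneg_left ?_ pi_pos.le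
            apply mul_le_mul hpow hsup (apply_nonneg _ _) (by positivity)
        _ = π * 2 ^ (K + 2) * Q (pderivCLM ℝ e φ) := by ring
    calc ‖u φ‖ ≤ (C : ℝ) * (Finset.Iic (K, K)).sup p φ := h1
      _ ≤ (C : ℝ) * (π * 2 ^ (K + 2) * Q (pderivCLM ℝ e φ)) := by
          apply mul_le_mul_of_nonneg_left h2 (by positivity)
      _ = N (pderivCLM ℝ e φ) := by rw [hN, hA]; ring
  -- Hahn-Banach extension
  set Dl : 𝓢(E, ℝ) →ₗ[ℝ] 𝓢(E, ℝ) := (pderivCLM ℝ e : 𝓢(E, ℝ) →L[ℝ] 𝓢(E, ℝ)).toLinearMap with hDl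
  have hinj : Function.Injective Dl := by
    intro a b hab
    have hz : pderivCLM ℝ e (a - b) = 0 := by
      have : pderivCLM ℝ e a = pderivCLM ℝ e b := hab
      rw [map_sub, this, sub_self]
    exact sub_eq_zero.mp (pderiv_injective e he (a - b) hz)
  set eqv := LinearEquiv.ofInjective Dl hinj with heqv
  set f0 : LinearMap.range Dl →ₗ[ℝ] ℝ :=
    (-(u : 𝓢(E, ℝ) →ₗ[ℝ] ℝ)) ∘ₗ (eqv.symm : LinearMap.range Dl →ₗ[ℝ] 𝓢(E, ℝ)) with hf0
  set f : 𝓢(E, ℝ) →ₗ.[ℝ] ℝ := ⟨LinearMap.range Dl, f0⟩ with hf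
  have hfle : ∀ x : LinearMap.range Dl, f0 x ≤ N x := by
    rintro ⟨x, hx⟩
    set φ := eqv.symm (⟨x, hx⟩ : ↥(LinearMap.range Dl)) with hφ
    have hxφ : Dl φ = x := LinearEquiv.ofInjective_symm_apply (f := Dl) (h := hinj) ⟨x, hx⟩
    have hfx : f0 (⟨x, hx⟩ : ↥(LinearMap.range Dl)) = -(u φ) := rfl
    rw [hfx]
    calc -(u φ) ≤ ‖u φ‖ := neg_le_abs (u φ)
      _ ≤ N (pderivCLM ℝ e φ) := hu φ
      _ = N x := by rw [show pderivCLM ℝ e φ = x from hxφ]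
  have N_hom : ∀ c : ℝ, 0 < c → ∀ ψ, N (c • ψ) = c * N ψ := by
    intro c hc ψ
    simp only [hN, map_smul_eq_mul, Real.norm_eq_abs, abs_of_pos hc]
    ring
  have N_add : ∀ ψ χ, N (ψ + χ) ≤ N ψ + N χ := by
    intro ψ χ
    simp only [hN, ← mul_add]
    exact mul_le_mul_of_nonneg_left (map_add_le_add Q ψ χ) hA0
  obtain ⟨gl, hgl, hglN⟩ := exists_extension_of_le_sublinear f N N_hom N_add hfle
  have habs : ∀ ψ, |gl ψ| ≤ N ψ := by
    intro ψ
    rw [abs_le]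
    refine ⟨?_, hglN ψ⟩
    have := hglN (-ψ)
    rw [map_neg] at this
    have hNneg : N (-ψ) = N ψ := by simp [hN, map_neg_eq_map]
    linarith
  have hcont : Continuous gl := by
    apply Seminorm.cont_withSeminorms_normedSpace ℝ (schwartz_withSeminorms ℝ E ℝ) gl
    refine ⟨Finset.Iic (K + 2, K), ⟨A, hA0⟩, ?_⟩
    intro ψ
    simp only [Seminorm.comp_apply, Seminorm.smul_apply, coe_normSeminorm,
      NNReal.smul_def, smul_eq_mul]
    calc ‖gl ψ‖ = |gl ψ| := rfl
      _ ≤ N ψ := habs ψ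
      _ = A * Q ψ := rfl
  refine ⟨⟨gl, hcont⟩, fun φ => ?_⟩
  have hmem : pderivCLM ℝ e φ ∈ LinearMap.range Dl := ⟨φ, rfl⟩
  have hglf := hgl (⟨pderivCLM ℝ e φ, hmem⟩ : ↥(LinearMap.range Dl))
  have hsymm : eqv.symm ⟨pderivCLM ℝ e φ, hmem⟩ = φ := by
    apply hinj
    exact LinearEquiv.ofInjective_symm_apply (f := Dl) (h := hinj) ⟨pderivCLM ℝ e φ, hmem⟩
  calc (⟨gl, hcont⟩ : 𝓢(E, ℝ) →L[ℝ] ℝ) (pderivCLM ℝ e φ) = gl (pderivCLM ℝ e φ) := rfl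
    _ = f0 (⟨pderivCLM ℝ e φ, hmem⟩ : ↥(LinearMap.range Dl)) := hglf
    _ = -(u (eqv.symm (⟨pderivCLM ℝ e φ, hmem⟩ : ↥(LinearMap.range Dl)))) := rfl
    _ = -(u φ) := by rw [hsymm]
end Aux

/-- **Top-degree exactness.** Every tempered distribution on `ℝⁿ` (`n ≥ 1`) is a
distributional divergence: `u = ∑ᵢ ∂ᵢvᵢ` for some tempered distributions `v₁, …, vₙ`. -/
theorem every_tempered_dist_is_divergence (n : ℕ) (hn : 1 ≤ n) (u : TDist (Euc n)) :
    ∃ v : Fin n → TDist (Euc n), u = ∑ i : Fin n, pDeriv n i (v i) := by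
  classical
  set i0 : Fin n := ⟨0, hn⟩ with hi0
  set e : Euc n := EuclideanSpace.single i0 (1 : ℝ) with he
  have hnorm : ‖e‖ = 1 := by
    rw [he, EuclideanSpace.norm_single]
    norm_num
  obtain ⟨v0, hv0⟩ := exists_antideriv e hnorm u
  refine ⟨fun i => if i = i0 then v0 else 0, ?_⟩
  have hzero : ∀ i : Fin n, pDeriv n i (0 : TDist (Euc n)) = 0 := by
    intro i
    simp [pDeriv, dirDeriv]
  have hsum : ∑ i : Fin n, pDeriv n i (if i = i0 then v0 else 0) = pDeriv n i0 v0 := by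
    rw [Finset.sum_eq_single i0]
    · simp
    · intro b _ hb
      rw [if_neg hb, hzero]
    · intro h
      exact absurd (Finset.mem_univ i0) h
  rw [hsum]
  ext φ
  have : pDeriv n i0 v0 φ = -(v0 (pderivCLM ℝ e φ)) := rfl
  rw [this, hv0 φ, neg_neg]
end
end
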